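/- arXiv:2305.15704 — 9 statements merged into one kernel-verified Lean document; each statement's English description precedes it below -/
import Mathlib

section
/- Let (x_k, y_k, z_k)_{k=0}^N be generated by the OptISTA iteration started at x_0 = y_0 = z_0, and let (x̂_k, ŷ_k, ẑ_k, w_k)_{k=0}^N be generated by the OptISTA-A iteration started at the same point with w_0 = x_0, namely ŷ_{i+1} = prox_{(γ_i/L)h}(ŷ_i − (γ_i/L)∇f(x̂_i)), ẑ_{i+1} = x̂_i + (1/γ_i)(ŷ_{i+1} − ŷ_i), w_{i+1} = w_i − (2θ_i/L)∇f(x̂_i) − (2θ_i/L)h'(ŷ_{i+1}), and x̂_{i+1} = (1 − 1/θ_{i+1}) ẑ_{i+1} + (1/θ_{i+1}) w_{i+1}, where h'(ŷ_{i+1}) = (L/γ_i)( ŷ_i − (γ_i/L)∇f(x̂_i) − ŷ_{i+1} ) ∈ ∂h(ŷ_{i+1}). Then x̂_k = x_k and ŷ_k = y_k for all k = 0,…,N; i.e., the two iterations are equivalent. -/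
open Finset

noncomputable section

/-- `ℝ^d` as a Euclidean space. -/
abbrev E (d : ℕ) := EuclideanSpace ℝ (Fin d)

/-- `f : ℝ^d → ℝ` is `L`-smooth convex: convex, differentiable, with `L`-Lipschitz gradient. -/
def LSmoothConvex {d : ℕ} (L : ℝ) (f : E d → ℝ) : Prop :=
  ConvexOn ℝ Set.univ f ∧ Differentiable ℝ f ∧
    ∀ x y : E d, ‖gradient f x - gradient f y‖ ≤ L * ‖x - y‖

/-- `h : ℝ^d → ℝ ∪ {∞}` is closed (lower semicontinuous), proper, and convex. -/
def ClosedProperConvexER {d : ℕ} (h : E d → EReal) : Prop :=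
  LowerSemicontinuous h ∧ (∃ x, h x ≠ ⊤) ∧ (∀ x, h x ≠ ⊥) ∧
    ∀ x y : E d, ∀ a b : ℝ, 0 ≤ a → 0 ≤ b → a + b = 1 →
      h (a • x + b • y) ≤ (a : EReal) * h x + (b : EReal) * h y

/-- `p = prox_{γ h}(x)`, i.e. `p` minimizes `z ↦ h z + ‖z - x‖² / (2γ)`. -/
def IsProx {d : ℕ} (h : E d → EReal) (γ : ℝ) (x p : E d) : Prop :=
  ∀ w : E d, h p + ((‖p - x‖ ^ 2 / (2 * γ) : ℝ) : EReal)
    ≤ h w + ((‖w - x‖ ^ 2 / (2 * γ) : ℝ) : EReal)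

lemma prox_unique {d : ℕ} {h : E d → EReal} (hh : ClosedProperConvexER h)
    {γ : ℝ} (hγ : 0 < γ) {x p q : E d}
    (hp : IsProx h γ x p) (hq : IsProx h γ x q) : p = q := by
  obtain ⟨-, ⟨x₀, hx₀⟩, hbot, hconv⟩ := hh
  have hfin : ∀ r : E d, IsProx h γ x r → h r ≠ ⊤ := by
    intro r hr hrt
    obtain ⟨a₀, ha₀⟩ : ∃ a₀ : ℝ, h x₀ = (a₀ : EReal) :=
      ⟨(h x₀).toReal, (EReal.coe_toReal hx₀ (hbot x₀)).symm⟩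
    have h1 := hr x₀
    rw [hrt, EReal.top_add_coe, ha₀, ← EReal.coe_add] at h1
    exact EReal.coe_ne_top _ (top_le_iff.mp h1)
  set m : E d := (2⁻¹ : ℝ) • p + (2⁻¹ : ℝ) • q with hm
  obtain ⟨a, ha⟩ : ∃ a : ℝ, h p = (a : EReal) :=
    ⟨(h p).toReal, (EReal.coe_toReal (hfin p hp) (hbot p)).symm⟩
  obtain ⟨b, hb⟩ : ∃ b : ℝ, h q = (b : EReal) :=
    ⟨(h q).toReal, (EReal.coe_toReal (hfin q hq) (hbot q)).symm⟩
  have hmle : h m ≤ ((2⁻¹ * a + 2⁻¹ * b : ℝ) : EReal) := by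
    rw [hm, EReal.coe_add, EReal.coe_mul, EReal.coe_mul, ← ha, ← hb]
    exact hconv p q 2⁻¹ 2⁻¹ (by norm_num) (by norm_num) (by norm_num)
  obtain ⟨c, hc⟩ : ∃ c : ℝ, h m = (c : EReal) :=
    ⟨(h m).toReal, (EReal.coe_toReal (fun ht => by
      rw [ht] at hmle; exact EReal.coe_ne_top _ (top_le_iff.mp hmle)) (hbot m)).symm⟩
  have hcle : c ≤ 2⁻¹ * a + 2⁻¹ * b := by rwa [hc, EReal.coe_le_coe_iff] at hmle
  have h1 : a + ‖p - x‖ ^ 2 / (2 * γ) ≤ c + ‖m - x‖ ^ 2 / (2 * γ) := by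
    have := hp m; rw [ha, hc, ← EReal.coe_add, ← EReal.coe_add, EReal.coe_le_coe_iff] at this
    exact this
  have h2 : b + ‖q - x‖ ^ 2 / (2 * γ) ≤ c + ‖m - x‖ ^ 2 / (2 * γ) := by
    have := hq m; rw [hb, hc, ← EReal.coe_add, ← EReal.coe_add, EReal.coe_le_coe_iff] at this
    exact this
  -- clear denominators
  have hγ2 : (0:ℝ) < 2 * γ := by linarith
  have e1 : ‖p - x‖ ^ 2 - ‖m - x‖ ^ 2 ≤ (c - a) * (2 * γ) := by
    rw [← div_le_iff₀ hγ2, sub_div]; linarith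
  have e2 : ‖q - x‖ ^ 2 - ‖m - x‖ ^ 2 ≤ (c - b) * (2 * γ) := by
    rw [← div_le_iff₀ hγ2, sub_div]; linarith
  -- parallelogram
  have hpar := parallelogram_law_with_norm ℝ (p - x) (q - x)
  have hsum : p - x + (q - x) = (2:ℝ) • (m - x) := by rw [hm]; module
  have hdiff : p - x - (q - x) = p - q := by abel
  rw [hsum, hdiff, norm_smul] at hpar
  simp only [Real.norm_ofNat] at hpar
  have hpq : ‖p - q‖ * ‖p - q‖ ≤ 0 := by nlinarith [hpar]
  have : ‖p - q‖ = 0 := by nlinarith [norm_nonneg (p - q)]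
  have := norm_sub_eq_zero_iff.mp this
  exact this

set_option maxHeartbeats 1000000 in
/-- Lemma 1, equivalence of OptISTA and OptISTA-A.
`(x, y, z)` are the OptISTA iterates and `(xh, yh, zh, w)` the OptISTA-A iterates started
at the same point `x 0` with `w 0 = x 0`, where the subgradient of `h` at `yh (i+1)` is
`(L / γ i) • (yh i - (γ i / L) • ∇f (xh i) - yh (i+1))`.  Then `xh k = x k` and
`yh k = y k` for all `k = 0, …, N`. -/
theorem optistaA_equivalent_optista
    (d N : ℕ) (hN : 1 ≤ N) (L : ℝ) (hL : 0 < L)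
    (f : E d → ℝ) (hf : LSmoothConvex L f)
    (h : E d → EReal) (hh : ClosedProperConvexER h)
    (θ : ℕ → ℝ) (hθ0 : θ 0 = 1)
    (hθ : ∀ i, 1 ≤ i → i + 1 ≤ N → θ i = (1 + Real.sqrt (1 + 4 * θ (i - 1) ^ 2)) / 2)
    (hθN : θ N = (1 + Real.sqrt (1 + 8 * θ (N - 1) ^ 2)) / 2)
    (γ : ℕ → ℝ)
    (hγ : ∀ i, i < N → γ i = 2 * θ i / θ N ^ 2 * (θ N ^ 2 - 2 * θ i ^ 2 + θ i))
    -- the OptISTA iterates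
    (x y z : ℕ → E d)
    (hy0 : y 0 = x 0) (hz0 : z 0 = x 0)
    (hy : ∀ i, i < N →
      IsProx h (γ i / L) (y i - (γ i / L) • gradient f (x i)) (y (i + 1)))
    (hz : ∀ i, i < N → z (i + 1) = x i + (γ i)⁻¹ • (y (i + 1) - y i))
    (hx : ∀ i, i < N →
      x (i + 1) = z (i + 1) + ((θ i - 1) / θ (i + 1)) • (z (i + 1) - z i)
        + (θ i / θ (i + 1)) • (z (i + 1) - x i))
    -- the OptISTA-A iterates
    (xh yh zh w : ℕ → E d)
    (hxh0 : xh 0 = x 0) (hyh0 : yh 0 = x 0) (hzh0 : zh 0 = x 0) (hw0 : w 0 = x 0)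
    (hyh : ∀ i, i < N →
      IsProx h (γ i / L) (yh i - (γ i / L) • gradient f (xh i)) (yh (i + 1)))
    (hzh : ∀ i, i < N → zh (i + 1) = xh i + (γ i)⁻¹ • (yh (i + 1) - yh i))
    (hw : ∀ i, i < N →
      w (i + 1) = w i - (2 * θ i / L) • gradient f (xh i)
        - (2 * θ i / L) • ((L / γ i) • (yh i - (γ i / L) • gradient f (xh i) - yh (i + 1))))
    (hxh : ∀ i, i < N →
      xh (i + 1) = (1 - (θ (i + 1))⁻¹) • zh (i + 1) + (θ (i + 1))⁻¹ • w (i + 1)) :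
    ∀ k, k ≤ N → xh k = x k ∧ yh k = y k := by
  -- basic positivity facts for θ
  have θstep : ∀ i, 1 ≤ i → i + 1 ≤ N → θ (i - 1) + 2⁻¹ ≤ θ i ∧ 1 ≤ θ i := by
    intro i h1 h2
    have hs := Real.sq_sqrt (show (0:ℝ) ≤ 1 + 4 * θ (i-1) ^ 2 by positivity)
    have hn := Real.sqrt_nonneg (1 + 4 * θ (i-1) ^ 2)
    rw [hθ i h1 h2]
    constructor
    · nlinarith [sq_nonneg (Real.sqrt (1 + 4 * θ (i-1) ^ 2) - 2 * θ (i-1)),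
        sq_nonneg (Real.sqrt (1 + 4 * θ (i-1) ^ 2) + 2 * θ (i-1))]
    · nlinarith
  have mono : ∀ m, m ≤ N - 1 → ∀ i, i ≤ m → 1 ≤ θ i ∧ θ i ≤ θ m := by
    intro m
    induction m with
    | zero => intro _ i hi; interval_cases i; simp [hθ0]
    | succ m IH =>
      intro hm i hi
      have hm' : m ≤ N - 1 := by omega
      have hstep := θstep (m + 1) (by omega) (by omega)
      simp only [Nat.add_sub_cancel] at hstep
      have h1m := (IH hm' m le_rfl).1
      rcases Nat.lt_or_ge i (m + 1) with hlt | hge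
      · obtain ⟨hA, hB⟩ := IH hm' i (by omega)
        exact ⟨hA, by linarith [hstep.1]⟩
      · have : i = m + 1 := by omega
        subst this
        exact ⟨hstep.2, le_rfl⟩
  have hsN := Real.sq_sqrt (show (0:ℝ) ≤ 1 + 8 * θ (N-1) ^ 2 by positivity)
  have hnN := Real.sqrt_nonneg (1 + 8 * θ (N-1) ^ 2)
  have hθN1 : 1 ≤ θ N := by rw [hθN]; nlinarith
  have hθNsq : θ N ^ 2 = θ N + 2 * θ (N-1) ^ 2 := by
    have : 2 * θ N - 1 = Real.sqrt (1 + 8 * θ (N-1) ^ 2) := by rw [hθN]; ring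
    nlinarith [this]
  have hγpos : ∀ k, k < N → 0 < γ k := by
    intro k hk
    obtain ⟨h1k, h2k⟩ := mono (N - 1) le_rfl k (by omega)
    have hexpr : 0 < θ N ^ 2 - 2 * θ k ^ 2 + θ k := by nlinarith
    rw [hγ k hk]
    have h1 : 0 < 2 * θ k / θ N ^ 2 := by
      apply div_pos (by linarith); nlinarith
    exact mul_pos h1 hexpr
  -- strengthened induction
  have main : ∀ k, k ≤ N →
      xh k = x k ∧ yh k = y k ∧ zh k = z k ∧
        w k = θ k • x k + (1 - θ k) • z k := by
    intro k
    induction k with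
    | zero =>
      intro _
      refine ⟨hxh0, hyh0.trans hy0.symm, hzh0.trans hz0.symm, ?_⟩
      rw [hw0, hθ0, hz0]; module
    | succ k IH =>
      intro hk1
      have hkN : k < N := hk1
      obtain ⟨ihx, ihy, ihz, ihw⟩ := IH (le_of_lt hkN)
      have hγL : 0 < γ k / L := div_pos (hγpos k hkN) hL
      have hyk : yh (k + 1) = y (k + 1) := by
        have hA := hyh k hkN
        rw [ihx, ihy] at hA
        exact prox_unique hh hγL hA (hy k hkN)
      have hzk : zh (k + 1) = z (k + 1) := by
        rw [hzh k hkN, hz k hkN, ihx, ihy, hyk]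
      have hθk1 : 1 ≤ θ (k + 1) := by
        rcases Nat.lt_or_ge (k + 1) N with hlt | hge
        · exact (θstep (k + 1) (by omega) (by omega)).2
        · have : k + 1 = N := by omega
          rw [this]; exact hθN1
      have hθne : θ (k + 1) ≠ 0 := by linarith
      have hγne : γ k ≠ 0 := (hγpos k hkN).ne'
      have hLne : L ≠ 0 := hL.ne'
      have hwk : w (k + 1) = (2 * θ k) • z (k + 1) + (1 - θ k) • z k - θ k • x k := by
        rw [hw k hkN, ihw, ihx, ihy, hyk, hz k hkN]
        match_scalars <;> field_simp <;> ring
      have hxk : xh (k + 1) = x (k + 1) := by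
        rw [hxh k hkN, hzk, hwk, hx k hkN, hz k hkN]
        match_scalars <;> field_simp <;> ring
      refine ⟨hxk, hyk, hzk, ?_⟩
      rw [hwk, hx k hkN]
      match_scalars <;> field_simp <;> ring
  intro k hk
  exact ⟨(main k hk).1, (main k hk).2.1⟩


end
end

section
/- Let f : ℝ^d → ℝ be L-smooth convex, h : ℝ^d → ℝ∪{∞} be closed, proper, convex, N ≥ 1, and let (x_i, y_i, z_i)_{i=0}^N be generated by the OptISTA iteration started at z_0 = y_0 = x_0. Then x_N = y_N. -/
open Finset

noncomputable section

/-- Lemma 2: for the OptISTA iterates, `x N = y N`. -/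
theorem optista_xN_eq_yN
    (d N : ℕ) (hN : 1 ≤ N) (L : ℝ) (hL : 0 < L)
    (f : E d → ℝ) (hf : LSmoothConvex L f)
    (h : E d → EReal) (hh : ClosedProperConvexER h)
    (θ : ℕ → ℝ) (hθ0 : θ 0 = 1)
    (hθ : ∀ i, 1 ≤ i → i + 1 ≤ N → θ i = (1 + Real.sqrt (1 + 4 * θ (i - 1) ^ 2)) / 2)
    (hθN : θ N = (1 + Real.sqrt (1 + 8 * θ (N - 1) ^ 2)) / 2)
    (γ : ℕ → ℝ)
    (hγ : ∀ i, i < N → γ i = 2 * θ i / θ N ^ 2 * (θ N ^ 2 - 2 * θ i ^ 2 + θ i))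
    (x y z : ℕ → E d)
    (hy0 : y 0 = x 0) (hz0 : z 0 = x 0)
    (hy : ∀ i, i < N →
      IsProx h (γ i / L) (y i - (γ i / L) • gradient f (x i)) (y (i + 1)))
    (hz : ∀ i, i < N → z (i + 1) = x i + (γ i)⁻¹ • (y (i + 1) - y i))
    (hx : ∀ i, i < N →
      x (i + 1) = z (i + 1) + ((θ i - 1) / θ (i + 1)) • (z (i + 1) - z i)
        + (θ i / θ (i + 1)) • (z (i + 1) - x i)) :
    x N = y N := by
  -- θ is at least 1 on [0, N]
  have one_le : ∀ j, j ≤ N → 1 ≤ θ j := by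
    intro j hj
    rcases eq_or_lt_of_le hj with hEq | hlt
    · subst hEq
      have h1 : (1 : ℝ) ≤ Real.sqrt (1 + 8 * θ (j - 1) ^ 2) := by
        have h2 := Real.sqrt_le_sqrt (show (1:ℝ) ≤ 1 + 8 * θ (j - 1) ^ 2 by
          nlinarith [sq_nonneg (θ (j - 1))])
        rwa [Real.sqrt_one] at h2
      rw [hθN]; linarith
    · match j with
      | 0 => rw [hθ0]
      | (k+1) =>
        have h1 : (1 : ℝ) ≤ Real.sqrt (1 + 4 * θ (k + 1 - 1) ^ 2) := by
          have h2 := Real.sqrt_le_sqrt (show (1:ℝ) ≤ 1 + 4 * θ (k + 1 - 1) ^ 2 by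
            nlinarith [sq_nonneg (θ (k + 1 - 1))])
          rwa [Real.sqrt_one] at h2
        rw [hθ (k+1) (by omega) (by omega)]; linarith
  -- interior recursion: θ i ^ 2 = θ i + θ (i-1) ^ 2  for 1 ≤ i ≤ N - 1
  have hrec : ∀ i, 1 ≤ i → i + 1 ≤ N → θ i ^ 2 = θ i + θ (i - 1) ^ 2 := by
    intro i h1 h2
    have hs : Real.sqrt (1 + 4 * θ (i - 1) ^ 2) ^ 2 = 1 + 4 * θ (i - 1) ^ 2 :=
      Real.sq_sqrt (by nlinarith [sq_nonneg (θ (i - 1))])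
    have hv := hθ i h1 h2
    have h2θ : 2 * θ i - 1 = Real.sqrt (1 + 4 * θ (i - 1) ^ 2) := by rw [hv]; ring
    have hsq : (2 * θ i - 1) ^ 2 = 1 + 4 * θ (i - 1) ^ 2 := by rw [h2θ, hs]
    linear_combination (1/4 : ℝ) * hsq
  -- final recursion: θ N ^ 2 = θ N + 2 θ (N-1) ^ 2
  have hrecN : θ N ^ 2 = θ N + 2 * θ (N - 1) ^ 2 := by
    have hs : Real.sqrt (1 + 8 * θ (N - 1) ^ 2) ^ 2 = 1 + 8 * θ (N - 1) ^ 2 :=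
      Real.sq_sqrt (by nlinarith [sq_nonneg (θ (N - 1))])
    have h2θ : 2 * θ N - 1 = Real.sqrt (1 + 8 * θ (N - 1) ^ 2) := by rw [hθN]; ring
    have hsq : (2 * θ N - 1) ^ 2 = 1 + 8 * θ (N - 1) ^ 2 := by rw [h2θ, hs]
    linear_combination (1/4 : ℝ) * hsq
  -- monotonicity up to N - 1
  have step : ∀ j, 1 ≤ j → j + 1 ≤ N → θ (j - 1) ≤ θ j := by
    intro j h1 h2
    have hr := hrec j h1 h2
    have ha := one_le (j - 1) (by omega)
    have hb := one_le j (by omega)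
    nlinarith [sq_nonneg (θ j - θ (j - 1))]
  have chain : ∀ j, j + 1 ≤ N → ∀ i, i ≤ j → θ i ≤ θ j := by
    intro j
    induction j with
    | zero => intro _ i hi; interval_cases i; exact le_rfl
    | succ j ih =>
      intro hj i hi
      rcases Nat.lt_succ_iff_lt_or_eq.mp (Nat.lt_succ_of_le hi) with hlt | hEq
      · have h1 : θ i ≤ θ j := ih (by omega) i (by omega)
        have h2 : θ j ≤ θ (j + 1) := by
          have := step (j + 1) (by omega) (by omega)
          simpa using this
        linarith
      · rw [hEq]
    
  have hmono : ∀ i, i < N → θ i ≤ θ (N - 1) := by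
    intro i hi
    exact chain (N - 1) (by omega) i (by omega)
  -- positivity of γ
  have hγpos : ∀ i, i < N → 0 < γ i := by
    intro i hi
    rw [hγ i hi]
    have h1 := one_le i (le_of_lt hi)
    have h2 := one_le N le_rfl
    have h3 := one_le (N - 1) (by omega)
    have h4 := hmono i hi
    have hpos2 : 0 < θ N ^ 2 - 2 * θ i ^ 2 + θ i := by
      nlinarith [mul_le_mul h4 h4 (by linarith : (0:ℝ) ≤ θ i) (by linarith : (0:ℝ) ≤ θ (N - 1))]
    have hpos1 : 0 < 2 * θ i / θ N ^ 2 := by positivity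
    exact mul_pos hpos1 hpos2
  -- the multiplier sequence
  set Λ : ℕ → ℝ := fun j =>
    if j = 0 then 0
    else (θ j + 2 * θ (j - 1) - 1 - γ (j - 1) * θ j) / (2 * θ (j - 1) - 1) with hΛ
  have hΛ0 : Λ 0 = 0 := by simp [hΛ]
  have hΛsucc : ∀ j, Λ (j + 1)
      = (θ (j + 1) + 2 * θ j - 1 - γ j * θ (j + 1)) / (2 * θ j - 1) := by
    intro j; simp [hΛ]
  have hθN0 : θ N ≠ 0 := by have := one_le N le_rfl; linarith
  -- Λ N = 0
  have hΛN : Λ N = 0 := by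
    have hpred : N - 1 + 1 = N := Nat.succ_pred_eq_of_pos hN
    have e := hΛsucc (N - 1)
    rw [hpred] at e
    rw [e, hγ (N - 1) (by omega), div_eq_zero_iff]
    left
    field_simp
    linear_combination (1 - 2 * θ (N - 1)) * hrecN
  -- main invariant
  have key : ∀ i, i ≤ N → x i - y i = Λ i • (x i - z i) := by
    intro i
    induction i with
    | zero => intro _; rw [hΛ0, zero_smul, hy0, sub_self]
    | succ i ih =>
      intro hiN1
      have hiN' : i < N := by omega
      have ihh := ih (le_of_lt hiN')
      have hγ0 : γ i ≠ 0 := ne_of_gt (hγpos i hiN')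
      obtain ⟨W, hW⟩ : ∃ W : E d, W = (γ i)⁻¹ • (y (i + 1) - y i) := ⟨_, rfl⟩
      have hz1 : z (i + 1) = x i + W := by rw [hW]; exact hz i hiN'
      have hy1 : y (i + 1) = y i + γ i • W := by
        rw [hW, smul_inv_smul₀ hγ0]; abel
      have hyi : y i = x i - Λ i • (x i - z i) := by rw [← ihh]; abel
      -- nonvanishing scalars
      have hθi1 : 1 ≤ θ i := one_le i (by omega)
      have hθi2 : 1 ≤ θ (i + 1) := one_le (i + 1) (by omega)
      have hu0 : θ (i + 1) ≠ 0 := by linarith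
      have hq0 : 2 * θ i - 1 ≠ 0 := by linarith
      -- the two scalar identities
      have SW : 1 + (θ i - 1) / θ (i + 1) + θ i / θ (i + 1) - γ i
          = Λ (i + 1) * ((θ i - 1) / θ (i + 1) + θ i / θ (i + 1)) := by
        rw [hΛsucc i, div_mul_eq_mul_div, eq_div_iff hq0]
        field_simp
        ring
      have SB : Λ i + (θ i - 1) / θ (i + 1)
          = Λ (i + 1) * ((θ i - 1) / θ (i + 1)) := by
        rcases Nat.eq_zero_or_pos i with h0 | h1
        · subst h0
          rw [hΛ0, hθ0, sub_self, zero_div, add_zero, mul_zero]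
        · have hpred : i - 1 + 1 = i := Nat.succ_pred_eq_of_pos h1
          have e := hΛsucc (i - 1)
          rw [hpred] at e
          have hθim : 1 ≤ θ (i - 1) := one_le (i - 1) (by omega)
          have hp0 : 2 * θ (i - 1) - 1 ≠ 0 := by linarith
          have hr := hrec i h1 (by omega)
          rw [e, hΛsucc i, hγ (i - 1) (by omega), hγ i hiN']
          rw [div_add_div _ _ hp0 hu0, div_mul_div_comm,
            div_eq_div_iff (mul_ne_zero hp0 hu0) (mul_ne_zero hq0 hu0)]
          field_simp
          linear_combination (2 * θ i * θ (i + 1) * (2 * θ i - 1) * (1 - 2 * θ (i - 1))) * hr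
      calc x (i + 1) - y (i + 1)
          = (Λ i + (θ i - 1) / θ (i + 1)) • (x i - z i)
            + (1 + (θ i - 1) / θ (i + 1) + θ i / θ (i + 1) - γ i) • W := by
            rw [hx i hiN', hz1, hy1, hyi]; module
        _ = (Λ (i + 1) * ((θ i - 1) / θ (i + 1))) • (x i - z i)
            + (Λ (i + 1) * ((θ i - 1) / θ (i + 1) + θ i / θ (i + 1))) • W := by
            rw [SB, SW]
        _ = Λ (i + 1) • (x (i + 1) - z (i + 1)) := by
            rw [hx i hiN', hz1]; module
  have hfin := key N le_rfl
  rw [hΛN, zero_smul, sub_eq_zero] at hfin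
  exact hfin

end
end

section
/- Let R > 0, N ≥ 1, d ≥ 2N+1, and let γ_0, γ_1, …, γ_{N−1} be positive numbers. Define ρ_i = γ_i/γ_0 and η_0 = 1, η_i = ( ρ_i + √( ρ_i² + (4ρ_i/ρ_{i−1}) η_{i−1}² ) ) / 2 for 1 ≤ i ≤ N−1. Then for any starting point x_0 ∈ ℝ^d and any deterministic N-step proximal-oracle method with output x_N, there exists a closed, proper, convex function h : ℝ^d → ℝ∪{∞} such that h has a minimizer x⋆ with ‖x_0 − x⋆‖ = R and h(x_N) − h(x⋆) ≥ γ_{N−1}‖x_0 − x⋆‖² / (4γ_0² η_{N−1}²). -/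
open Finset

noncomputable section

/-- A deterministic `N`-step proximal-oracle method with fixed stepsizes: for each `i`,
the `i`-th iterate is a deterministic function of the starting point and the previous
proximal oracle responses.  Responses are pairs (prox point, extended-real value). -/
structure ProxOracleMethod (d N : ℕ) where
  query : ℕ → E d → (ℕ → E d × EReal) → E d
  query_causal : ∀ i x0 r r', (∀ j, j < i → r j = r' j) → query i x0 r = query i x0 r'

/-- A run of the proximal-oracle method `M` on `h` from `x0`, with stepsizes `γ`:
iterates `x` and oracle responses `r j = (prox_{γ_j h}(x j), h (x j))`. -/
def IsProxRun {d N : ℕ} (M : ProxOracleMethod d N) (h : E d → EReal) (γ : ℕ → ℝ)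
    (x0 : E d) (x : ℕ → E d) (r : ℕ → E d × EReal) : Prop :=
  x 0 = x0 ∧
  (∀ i, 1 ≤ i → i ≤ N → x i = M.query i x0 r) ∧
  (∀ j, j < N → IsProx h (γ j) (x j) (r j).1 ∧ (r j).2 = h (x j))

namespace OPPA

open RealInnerProductSpace

variable {d : ℕ}

/-! ### Perpendicular vectors -/

lemma inner_span_zero {s : Set (E d)} {u : E d} (h : ∀ v ∈ s, ⟪v, u⟫ = 0) :
    ∀ w ∈ Submodule.span ℝ s, ⟪w, u⟫ = 0 := by
  intro w hw
  induction hw using Submodule.span_induction with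
  | mem x hx => exact h x hx
  | zero => simp
  | add x y _ _ hx hy => rw [inner_add_left, hx, hy]; ring
  | smul a x _ hx => rw [real_inner_smul_left, hx]; ring

def PerpSpec (s : Finset (E d)) (u : E d) : Prop := ‖u‖ = 1 ∧ ∀ v ∈ s, ⟪v, u⟫ = 0

lemma exists_perp {s : Finset (E d)} (hcard : s.card < d) : ∃ u, PerpSpec s u := by
  classical
  set K := Submodule.span ℝ (s : Set (E d)) with hK
  have hrank : Module.finrank ℝ K ≤ s.card := by
    simpa using finrank_span_le_card (R := ℝ) (s : Set (E d))
  have hKne : K ≠ ⊤ := by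
    intro htop
    have h1 : Module.finrank ℝ K = d := by
      rw [htop]
      rw [finrank_top]
      simp
    omega
  have hbot : Kᗮ ≠ ⊥ := fun hb => hKne (Submodule.orthogonal_eq_bot_iff.mp hb)
  obtain ⟨u0, hu0K, hu0⟩ := Submodule.ne_bot_iff _ |>.mp hbot
  refine ⟨(‖u0‖)⁻¹ • u0, ?_, ?_⟩
  · rw [norm_smul]
    have : ‖u0‖ ≠ 0 := norm_ne_zero_iff.mpr hu0
    simp [abs_of_nonneg (inv_nonneg.mpr (norm_nonneg u0))]
    field_simp
  · intro v hv
    have hvK : v ∈ K := Submodule.subset_span hv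
    have h0 : ⟪v, u0⟫ = 0 := (Submodule.mem_orthogonal K u0).mp hu0K v hvK
    rw [real_inner_smul_right, h0, mul_zero]

def choosePerp (s : Finset (E d)) : E d :=
  @dite _ (∃ u, PerpSpec s u) (Classical.dec _) (fun h => h.choose) (fun _ => 0)

lemma choosePerp_spec {s : Finset (E d)} (hcard : s.card < d) : PerpSpec s (choosePerp s) := by
  have h := exists_perp hcard
  rw [choosePerp, dif_pos h]
  exact h.choose_spec

/-! ### Max-affine functions -/

def piece (x0 g : E d) (a b : ℝ) (w : E d) : ℝ := a * ⟪w - x0, g⟫ + b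

def maxAff (x0 : E d) (g : ℕ → E d) (a b : ℕ → ℝ) (j : ℕ) (w : E d) : ℝ :=
  (range (j+1)).sup' nonempty_range_add_one (fun k => piece x0 (g k) (a k) (b k) w)

lemma piece_le_maxAff (x0 : E d) (g : ℕ → E d) (a b : ℕ → ℝ) {j k : ℕ} (hk : k ≤ j) (w : E d) :
    piece x0 (g k) (a k) (b k) w ≤ maxAff x0 g a b j w := by
  unfold maxAff
  exact Finset.le_sup' (fun k => piece x0 (g k) (a k) (b k) w)
    (mem_range.mpr (Nat.lt_succ_of_le hk))

lemma maxAff_le (x0 : E d) (g : ℕ → E d) (a b : ℕ → ℝ) {j : ℕ} {w : E d} {t : ℝ}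
    (hle : ∀ k ≤ j, piece x0 (g k) (a k) (b k) w ≤ t) : maxAff x0 g a b j w ≤ t := by
  apply Finset.sup'_le
  intro k hk
  exact hle k (Nat.lt_succ_iff.mp (mem_range.mp hk))

lemma exists_maxAff_eq (x0 : E d) (g : ℕ → E d) (a b : ℕ → ℝ) (j : ℕ) (w : E d) :
    ∃ k ≤ j, maxAff x0 g a b j w = piece x0 (g k) (a k) (b k) w := by
  obtain ⟨k, hk, he⟩ := Finset.exists_mem_eq_sup' (s := range (j+1)) nonempty_range_add_one
    (fun k => piece x0 (g k) (a k) (b k) w)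
  exact ⟨k, Nat.lt_succ_iff.mp (mem_range.mp hk), he⟩

lemma maxAff_congr (x0 : E d) {g g' : ℕ → E d} (a b : ℕ → ℝ) {j : ℕ}
    (hg : ∀ k ≤ j, g k = g' k) (w : E d) :
    maxAff x0 g a b j w = maxAff x0 g' a b j w := by
  unfold maxAff
  apply Finset.sup'_congr _ rfl
  intro k hk
  rw [hg k (Nat.lt_succ_iff.mp (mem_range.mp hk))]

lemma maxAff_succ (x0 : E d) (g : ℕ → E d) (a b : ℕ → ℝ) (j : ℕ) (w : E d) :
    maxAff x0 g a b (j+1) w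
      = max (piece x0 (g (j+1)) (a (j+1)) (b (j+1)) w) (maxAff x0 g a b j w) := by
  apply le_antisymm
  · apply maxAff_le
    intro k hk
    rcases Nat.lt_succ_iff_lt_or_eq.mp (Nat.lt_succ_of_le hk) with h | h
    · exact le_max_of_le_right (piece_le_maxAff x0 g a b (Nat.lt_succ_iff.mp h) w)
    · rw [h]; exact le_max_left _ _
  · apply max_le
    · exact piece_le_maxAff x0 g a b (le_refl _) w
    · apply maxAff_le
      intro k hk
      exact piece_le_maxAff x0 g a b (le_trans hk (Nat.le_succ j)) w

lemma piece_continuous (x0 g : E d) (a b : ℝ) : Continuous (piece x0 g a b) := by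
  unfold piece
  have h1 : Continuous fun w : E d => ⟪w - x0, g⟫ :=
    Continuous.inner (continuous_id.sub continuous_const) continuous_const
  exact (continuous_const.mul h1).add continuous_const

lemma maxAff_continuous (x0 : E d) (g : ℕ → E d) (a b : ℕ → ℝ) (j : ℕ) :
    Continuous (maxAff x0 g a b j) := by
  induction j with
  | zero =>
    have : maxAff x0 g a b 0 = piece x0 (g 0) (a 0) (b 0) := by
      funext w; unfold maxAff; simp
    rw [this]; exact piece_continuous _ _ _ _
  | succ n ih =>
    have : maxAff x0 g a b (n+1)
        = fun w => max (piece x0 (g (n+1)) (a (n+1)) (b (n+1)) w) (maxAff x0 g a b n w) := by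
      funext w; exact maxAff_succ _ _ _ _ _ _
    rw [this]
    exact (piece_continuous _ _ _ _).max ih

lemma piece_affine (x0 g : E d) (a b : ℝ) (x y : E d) (s t : ℝ) (hst : s + t = 1) :
    piece x0 g a b (s • x + t • y) = s * piece x0 g a b x + t * piece x0 g a b y := by
  unfold piece
  have h1 : s • (x - x0) + t • (y - x0) = s • x + t • y - (s + t) • x0 := by
    rw [smul_sub, smul_sub, add_smul]; abel
  rw [hst, one_smul] at h1
  rw [← h1, inner_add_left, real_inner_smul_left, real_inner_smul_left]
  linear_combination (-b) * hst

lemma maxAff_convex (x0 : E d) (g : ℕ → E d) (a b : ℕ → ℝ) (j : ℕ) (x y : E d) (s t : ℝ)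
    (hs : 0 ≤ s) (ht : 0 ≤ t) (hst : s + t = 1) :
    maxAff x0 g a b j (s • x + t • y) ≤ s * maxAff x0 g a b j x + t * maxAff x0 g a b j y := by
  apply maxAff_le
  intro k hk
  rw [piece_affine _ _ _ _ _ _ _ _ hst]
  have h1 := piece_le_maxAff x0 g a b hk x
  have h2 := piece_le_maxAff x0 g a b hk y
  nlinarith

lemma piece_shift (x0 g : E d) (a b : ℝ) (w v : E d) :
    piece x0 g a b w = piece x0 g a b v + a * ⟪w - v, g⟫ := by
  unfold piece
  have : w - x0 = (v - x0) + (w - v) := by abel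
  rw [this, inner_add_left]; ring

lemma maxAff_lip (x0 : E d) (g : ℕ → E d) (a b : ℕ → ℝ) {j : ℕ} (L : ℝ)
    (hL : ∀ k ≤ j, |a k| * ‖g k‖ ≤ L) (w v : E d) :
    maxAff x0 g a b j w ≤ maxAff x0 g a b j v + L * ‖w - v‖ := by
  apply maxAff_le
  intro k hk
  rw [piece_shift x0 (g k) (a k) (b k) w v]
  have h2 : a k * ⟪w - v, g k⟫ ≤ L * ‖w - v‖ := by
    calc a k * ⟪w - v, g k⟫ ≤ |a k * ⟪w - v, g k⟫| := le_abs_self _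
    _ = |a k| * |⟪w - v, g k⟫| := abs_mul _ _
    _ ≤ |a k| * (‖w - v‖ * ‖g k‖) :=
        mul_le_mul_of_nonneg_left (abs_real_inner_le_norm _ _) (abs_nonneg _)
    _ = (|a k| * ‖g k‖) * ‖w - v‖ := by ring
    _ ≤ L * ‖w - v‖ := mul_le_mul_of_nonneg_right (hL k hk) (norm_nonneg _)
  have h3 := piece_le_maxAff x0 g a b hk v
  linarith

lemma maxAff_invariant (x0 : E d) (g : ℕ → E d) (a b : ℕ → ℝ) {j : ℕ} (w v : E d)
    (h : ∀ k ≤ j, ⟪w - v, g k⟫ = 0) :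
    maxAff x0 g a b j w = maxAff x0 g a b j v := by
  unfold maxAff
  apply Finset.sup'_congr _ rfl
  intro k hk
  rw [piece_shift x0 (g k) (a k) (b k) w v, h k (Nat.lt_succ_iff.mp (mem_range.mp hk)),
    mul_zero, add_zero]

/-! ### Prox existence on a subspace -/

lemma prox_exists (f : E d → ℝ) (hf : Continuous f) (L : ℝ) (hL : 0 ≤ L)
    (hlip : ∀ w v : E d, f v - L * ‖v - w‖ ≤ f w)
    (S : Submodule ℝ (E d)) (γ : ℝ) (hγ : 0 < γ) (x : E d) :
    ∃ p, p - x ∈ S ∧ ∀ w, w - x ∈ S →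
      f p + ‖p - x‖^2/(2*γ) ≤ f w + ‖w - x‖^2/(2*γ) := by
  classical
  set K : ℝ := 2*γ*L + 1 with hKdef
  have hK0 : 0 < K := by positivity
  set A := {w : E d | w - x ∈ S} ∩ Metric.closedBall x K with hA
  have hclosed : IsClosed {w : E d | w - x ∈ S} := by
    have : {w : E d | w - x ∈ S} = (fun w => w - x) ⁻¹' (S : Set (E d)) := rfl
    rw [this]
    exact IsClosed.preimage (continuous_id.sub continuous_const)
      (Submodule.closed_of_finiteDimensional S)
  have hAc : IsCompact A := (isCompact_closedBall x K).inter_left hclosed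
  have hxA : x ∈ A := by
    constructor
    · show x - x ∈ S
      rw [sub_self]; exact Submodule.zero_mem S
    · exact Metric.mem_closedBall_self (le_of_lt hK0)
  have hobj : Continuous (fun w => f w + ‖w - x‖^2/(2*γ)) := by
    apply hf.add
    exact (((continuous_id.sub continuous_const).norm.pow 2).div_const _)
  obtain ⟨p, hpA, hpmin⟩ := hAc.exists_isMinOn ⟨x, hxA⟩ hobj.continuousOn
  refine ⟨p, hpA.1, ?_⟩
  intro w hwS
  by_cases hw : w ∈ Metric.closedBall x K
  · exact hpmin ⟨hwS, hw⟩
  · have hrK : K < ‖w - x‖ := by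
      have := Metric.mem_closedBall.not.mp hw
      rw [dist_eq_norm] at this
      linarith [not_le.mp this]
    have hflow : f x - L * ‖w - x‖ ≤ f w := by
      have := hlip w x
      rwa [norm_sub_rev x w] at this
    have hwx0 : 0 < ‖w - x‖ := lt_trans hK0 hrK
    have hprod : ‖w - x‖ * K < ‖w - x‖ * ‖w - x‖ := by
      exact mul_lt_mul_of_pos_left hrK hwx0
    rw [hKdef] at hprod
    have hLr : L * ‖w - x‖ ≤ ‖w - x‖^2/(2*γ) := by
      rw [le_div_iff₀ (by positivity : (0:ℝ) < 2*γ)]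
      nlinarith [hprod, hwx0]
    have hchain : f p + ‖p - x‖^2/(2*γ) ≤ f x + ‖x - x‖^2/(2*γ) := hpmin hxA
    have hzz : ‖x - x‖^2/(2*γ) = 0 := by simp
    linarith

/-! ### Prox uniqueness -/

lemma prox_unique (H : E d → ℝ)
    (hconv : ∀ x y : E d, ∀ s t : ℝ, 0 ≤ s → 0 ≤ t → s + t = 1 →
      H (s • x + t • y) ≤ s * H x + t * H y)
    {γ : ℝ} (hγ : 0 < γ) {x p q : E d}
    (hp : ∀ w, H p + ‖p - x‖^2/(2*γ) ≤ H w + ‖w - x‖^2/(2*γ))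
    (hq : ∀ w, H q + ‖q - x‖^2/(2*γ) ≤ H w + ‖w - x‖^2/(2*γ)) : p = q := by
  set m := (1/2 : ℝ) • p + (1/2 : ℝ) • q with hm
  have h1 := hp m
  have h2 := hq m
  have hc := hconv p q (1/2) (1/2) (by norm_num) (by norm_num) (by norm_num)
  rw [← hm] at hc
  have hpar : ‖m - x‖^2 = ‖p - x‖^2/2 + ‖q - x‖^2/2 - ‖p - q‖^2/4 := by
    have hmx : m - x = (1/2 : ℝ) • ((p - x) + (q - x)) := by
      rw [hm]; module
    have hpq : p - q = (p - x) - (q - x) := by abel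
    have e1 : ‖(p-x) + (q-x)‖^2 = ‖p-x‖^2 + 2*⟪p-x, q-x⟫ + ‖q-x‖^2 := norm_add_sq_real _ _
    have e2 : ‖p - q‖^2 = ‖p-x‖^2 - 2*⟪p-x, q-x⟫ + ‖q-x‖^2 := by
      rw [hpq]; exact norm_sub_sq_real _ _
    have e3 : ‖m - x‖ = (1/2) * ‖(p-x) + (q-x)‖ := by
      rw [hmx, norm_smul]
      norm_num
    rw [e3]
    nlinarith [e1, e2]
  have h2γ : 0 < 2*γ := by positivity
  have h3 : (‖p - x‖^2 + ‖q - x‖^2)/(2*γ) ≤ (2*‖m - x‖^2)/(2*γ) := by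
    have hHm : 2 * H m ≤ H p + H q := by linarith
    rw [add_div, show (2*‖m - x‖^2)/(2*γ) = ‖m - x‖^2/(2*γ) + ‖m - x‖^2/(2*γ) by ring]
    linarith
  have h4 : ‖p - x‖^2 + ‖q - x‖^2 ≤ 2*‖m - x‖^2 := by
    have := mul_le_mul_of_nonneg_right h3 (le_of_lt h2γ)
    rwa [div_mul_cancel₀ _ (ne_of_gt h2γ), div_mul_cancel₀ _ (ne_of_gt h2γ)] at this
  have hd : ‖p - q‖^2 ≤ 0 := by linarith
  have h5 : ‖p - q‖^2 = 0 := le_antisymm hd (sq_nonneg _)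
  have h6 : ‖p - q‖ = 0 := by
    have := sq_nonneg ‖p - q‖
    nlinarith [norm_nonneg (p - q)]
  exact sub_eq_zero.mp (norm_eq_zero.mp h6)

/-! ### Orthonormal sums -/

lemma norm_orthosum (n : ℕ) (v : ℕ → E d) (cf : ℕ → ℝ)
    (hnorm : ∀ k, k < n → ‖v k‖ = 1)
    (horth : ∀ k, k < n → ∀ l, l < n → k ≠ l → ⟪v k, v l⟫ = 0)
    (e : E d) (he : ‖e‖ = 1) (hev : ∀ k, k < n → ⟪v k, e⟫ = 0) (s : ℝ) :
    ‖(∑ k ∈ range n, cf k • v k) + s • e‖^2 = (∑ k ∈ range n, (cf k)^2) + s^2 := by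
  set A := ∑ k ∈ range n, cf k • v k with hA
  have hAe : ⟪A, s • e⟫ = 0 := by
    rw [hA, sum_inner]
    apply Finset.sum_eq_zero
    intro k hk
    rw [real_inner_smul_left, real_inner_smul_right, hev k (mem_range.mp hk)]
    ring
  have hAA : ⟪A, A⟫ = ∑ k ∈ range n, (cf k)^2 := by
    rw [hA, sum_inner]
    apply Finset.sum_congr rfl
    intro k hk
    rw [inner_sum]
    rw [Finset.sum_eq_single k]
    · rw [real_inner_smul_left, real_inner_smul_right, real_inner_self_eq_norm_sq,
        hnorm k (mem_range.mp hk)]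
      ring
    · intro l hl hlk
      rw [real_inner_smul_left, real_inner_smul_right,
        horth k (mem_range.mp hk) l (mem_range.mp hl) (Ne.symm hlk)]
      ring
    · intro hknot
      exact absurd hk hknot
  have hse : ⟪s • e, s • e⟫ = s^2 := by
    rw [real_inner_smul_left, real_inner_smul_right, real_inner_self_eq_norm_sq, he]
    ring
  have := norm_add_sq_real A (s • e)
  rw [hAe] at this
  rw [this]
  rw [← real_inner_self_eq_norm_sq, ← real_inner_self_eq_norm_sq, hAA, hse]
  ring


lemma div_mono_num {a b c : ℝ} (h : a ≤ b) (hc : 0 < c) : a / c ≤ b / c := by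
  have := mul_le_mul_of_nonneg_right h (le_of_lt (inv_pos.mpr hc))
  simpa [div_eq_mul_inv] using this

lemma lsc_coe {f : E d → ℝ} (hf : Continuous f) :
    LowerSemicontinuous (fun w => ((f w : ℝ) : EReal)) := by
  intro x y hy
  induction y using EReal.rec with
  | bot =>
    filter_upwards with z
    exact EReal.bot_lt_coe _
  | coe a =>
    have ha : a < f x := by
      have h' : ((a : ℝ) : EReal) < ((f x : ℝ) : EReal) := hy
      exact_mod_cast h'
    have hset : {z : E d | a < f z} ∈ nhds x :=
      (isOpen_lt continuous_const hf).mem_nhds ha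
    filter_upwards [hset] with z hz
    show ((a : ℝ) : EReal) < ((f z : ℝ) : EReal)
    exact_mod_cast hz
  | top => exact absurd hy (by simp)

lemma isProx_coe_iff (H : E d → ℝ) (γ : ℝ) (x p : E d) :
    IsProx (fun w => ((H w : ℝ) : EReal)) γ x p ↔
      ∀ w, H p + ‖p - x‖^2/(2*γ) ≤ H w + ‖w - x‖^2/(2*γ) := by
  unfold IsProx
  constructor
  · intro h w
    have := h w
    rw [← EReal.coe_add, ← EReal.coe_add] at this
    exact_mod_cast this
  · intro h w
    have := h w
    rw [← EReal.coe_add, ← EReal.coe_add]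
    exact_mod_cast this

open scoped Classical

def ProxPtSpec (f : E d → ℝ) (S : Submodule ℝ (E d)) (γ : ℝ) (x p : E d) : Prop :=
  p - x ∈ S ∧ ∀ w, w - x ∈ S → f p + ‖p - x‖^2/(2*γ) ≤ f w + ‖w - x‖^2/(2*γ)

def proxPt (f : E d → ℝ) (S : Submodule ℝ (E d)) (γ : ℝ) (x : E d) : E d :=
  @dite _ (∃ p, ProxPtSpec f S γ x p) (Classical.dec _) (fun h => h.choose) (fun _ => x)

lemma proxPt_spec {f : E d → ℝ} {S : Submodule ℝ (E d)} {γ : ℝ} {x : E d}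
    (h : ∃ p, ProxPtSpec f S γ x p) : ProxPtSpec f S γ x (proxPt f S γ x) := by
  rw [proxPt, dif_pos h]
  exact h.choose_spec


structure Ctx where
  d : ℕ
  N : ℕ
  hN : 1 ≤ N
  hd : 2 * N + 1 ≤ d
  R : ℝ
  hR : 0 < R
  γ : ℕ → ℝ
  hγ : ∀ i, i < N → 0 < γ i
  η : ℕ → ℝ
  hη0 : η 0 = 1
  hη : ∀ i, 1 ≤ i → i + 1 ≤ N →
      η i = (γ i / γ 0 + Real.sqrt ((γ i / γ 0) ^ 2
        + 4 * (γ i / γ 0) / (γ (i - 1) / γ 0) * (η (i - 1)) ^ 2)) / 2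
  M : ProxOracleMethod d N
  x0 : E d

namespace Ctx

variable (c : Ctx)

def ρ (k : ℕ) : ℝ := c.γ k / c.γ 0

def T (k : ℕ) : ℝ := ∑ i ∈ range k, c.η i

lemma γ0_pos : 0 < c.γ 0 := c.hγ 0 c.hN

lemma ρ_pos {k : ℕ} (hk : k < c.N) : 0 < c.ρ k := div_pos (c.hγ k hk) c.γ0_pos

lemma η_pos {k : ℕ} (hk : k < c.N) : 0 < c.η k := by
  rcases Nat.eq_zero_or_pos k with h0 | h1
  · rw [h0, c.hη0]; norm_num
  · have hk1 : k + 1 ≤ c.N := hk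
    have := c.hη k h1 hk1
    have hρ : 0 < c.ρ k := c.ρ_pos hk
    have hs : 0 ≤ Real.sqrt ((c.γ k / c.γ 0) ^ 2
        + 4 * (c.γ k / c.γ 0) / (c.γ (k - 1) / c.γ 0) * (c.η (k - 1)) ^ 2) := Real.sqrt_nonneg _
    have hρ' : 0 < c.γ k / c.γ 0 := hρ
    rw [this]; linarith

lemma T_succ (k : ℕ) : c.T (k + 1) = c.T k + c.η k := Finset.sum_range_succ _ _

lemma T_zero : c.T 0 = 0 := rfl

lemma T_nonneg {k : ℕ} (hk : k ≤ c.N) : 0 ≤ c.T k := by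
  apply Finset.sum_nonneg
  intro i hi
  exact le_of_lt (c.η_pos (lt_of_lt_of_le (mem_range.mp hi) hk))

lemma T_pos {k : ℕ} (h1 : 1 ≤ k) (hk : k ≤ c.N) : 0 < c.T k := by
  have : 0 ∈ range k := mem_range.mpr h1
  apply Finset.sum_pos'
  · intro i hi; exact le_of_lt (c.η_pos (lt_of_lt_of_le (mem_range.mp hi) hk))
  · exact ⟨0, this, c.η_pos (lt_of_le_of_lt (Nat.zero_le _) (lt_of_lt_of_le h1 hk))⟩

lemma η_le_T {k : ℕ} (hk : k < c.N) : c.η k ≤ c.T (k + 1) := by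
  rw [c.T_succ]
  have := c.T_nonneg (le_of_lt hk)
  linarith

lemma ηsq {k : ℕ} (hk : k < c.N) : (c.η k) ^ 2 = c.ρ k * c.T (k + 1) := by
  induction k with
  | zero =>
    have : c.ρ 0 = 1 := div_self (ne_of_gt c.γ0_pos)
    simp [c.hη0, this, c.T_succ, c.T_zero]
  | succ n ih =>
    have hn : n < c.N := lt_trans (Nat.lt_succ_self n) hk
    have ihn := ih hn
    have h1 : 1 ≤ n + 1 := Nat.succ_le_succ (Nat.zero_le n)
    have heq := c.hη (n + 1) h1 hk
    have harg : 0 ≤ (c.γ (n+1) / c.γ 0) ^ 2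
        + 4 * (c.γ (n+1) / c.γ 0) / (c.γ n / c.γ 0) * (c.η n) ^ 2 := by
      have h1' : 0 < c.γ (n+1) / c.γ 0 := c.ρ_pos hk
      have h2' : 0 < c.γ n / c.γ 0 := c.ρ_pos hn
      have : 0 ≤ 4 * (c.γ (n+1) / c.γ 0) / (c.γ n / c.γ 0) * (c.η n) ^ 2 := by positivity
      positivity
    simp only [Nat.add_sub_cancel] at heq
    have hsq : (2 * c.η (n+1) - c.γ (n+1) / c.γ 0) ^ 2
        = (c.γ (n+1) / c.γ 0) ^ 2 + 4 * (c.γ (n+1) / c.γ 0) / (c.γ n / c.γ 0) * (c.η n) ^ 2 := by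
      have : 2 * c.η (n+1) - c.γ (n+1) / c.γ 0 = Real.sqrt ((c.γ (n+1) / c.γ 0) ^ 2
          + 4 * (c.γ (n+1) / c.γ 0) / (c.γ n / c.γ 0) * (c.η n) ^ 2) := by
        rw [heq]; ring
      rw [this, Real.sq_sqrt harg]
    -- η² = ρ η + (ρ/ρ') η'²
    have hρn : 0 < c.ρ n := c.ρ_pos hn
    have hρn1 : 0 < c.ρ (n+1) := c.ρ_pos hk
    have key : (c.η (n+1)) ^ 2 = c.ρ (n+1) * c.η (n+1) + c.ρ (n+1) / c.ρ n * (c.η n) ^ 2 := by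
      have expand : 4 * (c.η (n+1))^2 - 4 * c.η (n+1) * (c.γ (n+1)/c.γ 0)
          = 4 * (c.γ (n+1) / c.γ 0) / (c.γ n / c.γ 0) * (c.η n) ^ 2 := by nlinarith [hsq]
      show (c.η (n+1)) ^ 2 = (c.γ (n+1)/c.γ 0) * c.η (n+1) + (c.γ (n+1)/c.γ 0) / (c.γ n/c.γ 0) * (c.η n) ^ 2
      linear_combination expand / 4
    have hρn0 : c.ρ n ≠ 0 := ne_of_gt hρn
    rw [key, ihn, c.T_succ (n+1)]
    field_simp
    ring

def G : ℝ := c.R ^ 2 / (4 * c.γ 0 * c.T c.N)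

lemma G_pos : 0 < c.G := by
  have h1 := c.T_pos c.hN (le_refl _)
  have h2 := c.γ0_pos
  exact div_pos (pow_pos c.hR 2) (by nlinarith)

def Y (k : ℕ) : ℝ := c.G * ∏ i ∈ Finset.Ico k c.N, (2 * c.T (i + 1) / (2 * c.T (i + 1) - c.η i))

lemma fac_pos {k : ℕ} (hk : k < c.N) : 0 < 2 * c.T (k + 1) - c.η k := by
  have h1 := c.η_le_T hk
  have h2 := c.T_pos (Nat.succ_le_succ (Nat.zero_le k)) hk
  linarith

lemma fac_gt_one {k : ℕ} (hk : k < c.N) :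
    1 < 2 * c.T (k + 1) / (2 * c.T (k + 1) - c.η k) := by
  rw [lt_div_iff₀ (c.fac_pos hk)]
  have := c.η_pos hk
  linarith

lemma Y_N : c.Y c.N = c.G := by simp [Y]

lemma Y_rec {k : ℕ} (hk : k < c.N) :
    c.Y k = (2 * c.T (k + 1) / (2 * c.T (k + 1) - c.η k)) * c.Y (k + 1) := by
  unfold Y
  rw [Finset.prod_eq_prod_Ico_succ_bot hk]
  ring

lemma Y_pos {k : ℕ} : 0 < c.Y k := by
  apply mul_pos c.G_pos
  apply Finset.prod_pos
  intro i hi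
  have hi' : i < c.N := (Finset.mem_Ico.mp hi).2
  have := c.fac_pos hi'
  have := c.T_pos (Nat.succ_le_succ (Nat.zero_le i)) hi'
  positivity

lemma Y_succ_lt {k : ℕ} (hk : k < c.N) : c.Y (k + 1) < c.Y k := by
  rw [c.Y_rec hk]
  have h1 := c.fac_gt_one hk
  have h2 := c.Y_pos (k := k + 1)
  nlinarith

lemma Y_antitone {k l : ℕ} (hkl : k ≤ l) (hl : l ≤ c.N) : c.Y l ≤ c.Y k := by
  induction l with
  | zero => simp_all
  | succ n ih =>
    rcases Nat.lt_or_ge k (n + 1) with h | h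
    · have hkn : k ≤ n := Nat.lt_succ_iff.mp h
      have := ih hkn (le_trans (Nat.le_succ n) hl)
      have := c.Y_succ_lt (lt_of_lt_of_le (Nat.lt_succ_self n) hl)
      linarith
    · have : k = n + 1 := le_antisymm hkl h
      rw [this]

lemma ladder {k : ℕ} (hk : k < c.N) :
    c.η k * c.Y k = 2 * c.T (k + 1) * (c.Y k - c.Y (k + 1)) := by
  have h := c.Y_rec hk
  have hf := c.fac_pos hk
  field_simp at h
  nlinarith [h]

def α (k : ℕ) : ℝ := Real.sqrt ((c.Y k - c.Y (k + 1)) / c.γ k)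

lemma α_pos {k : ℕ} (hk : k < c.N) : 0 < c.α k := by
  apply Real.sqrt_pos.mpr
  exact div_pos (by linarith [c.Y_succ_lt hk]) (c.hγ k hk)

lemma α_sq {k : ℕ} (hk : k < c.N) : (c.α k) ^ 2 = (c.Y k - c.Y (k + 1)) / c.γ k := by
  rw [α, Real.sq_sqrt]
  exact le_of_lt (div_pos (by linarith [c.Y_succ_lt hk]) (c.hγ k hk))

lemma γαsq {k : ℕ} (hk : k < c.N) : c.γ k * (c.α k) ^ 2 = c.Y k - c.Y (k + 1) := by
  have h0 : c.γ k ≠ 0 := ne_of_gt (c.hγ k hk)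
  rw [c.α_sq hk]
  field_simp

lemma budget_term {k : ℕ} (hk : k < c.N) :
    (c.Y k / c.α k) ^ 2 = 2 * c.γ 0 * (c.η k * c.Y k) := by
  have hα := c.α_pos hk
  have hαsq := c.α_sq hk
  have hlad := c.ladder hk
  have hηsq := c.ηsq hk
  have hγ0ne : c.γ 0 ≠ 0 := ne_of_gt c.γ0_pos
  have hγk : c.γ k = c.γ 0 * c.ρ k := by
    rw [ρ]; field_simp
  have hT1 : 0 < c.T (k+1) := c.T_pos (Nat.succ_le_succ (Nat.zero_le k)) hk
  have hTne : c.T (k+1) ≠ 0 := ne_of_gt hT1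
  rw [div_pow, hαsq, div_div_eq_mul_div,
    div_eq_iff (ne_of_gt (sub_pos.mpr (c.Y_succ_lt hk)))]
  apply mul_left_cancel₀ hTne
  linear_combination (c.γ 0 * c.η k * c.Y k) * hlad - (c.γ 0 * c.Y k ^ 2) * hηsq
    + (c.T (k+1) * c.Y k ^ 2) * hγk

lemma Sigma_identity : ∀ m : ℕ, m ≤ c.N →
    ∑ k ∈ Finset.Ico (c.N - m) c.N, c.η k * c.Y k
      = 2 * c.T c.N * c.G - 2 * c.T (c.N - m) * c.Y (c.N - m) := by
  intro m
  induction m with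
  | zero => simp [c.Y_N]
  | succ n ih =>
    intro hm
    have hn : n ≤ c.N := le_trans (Nat.le_succ n) hm
    have ihn := ih hn
    set j := c.N - (n + 1) with hj
    have hjn : j < c.N := by omega
    have hj1 : j + 1 = c.N - n := by omega
    have hsplit : ∑ k ∈ Finset.Ico j c.N, c.η k * c.Y k
        = c.η j * c.Y j + ∑ k ∈ Finset.Ico (j + 1) c.N, c.η k * c.Y k :=
      Finset.sum_eq_sum_Ico_succ_bot hjn _
    rw [hsplit, hj1, ihn]
    have hlad := c.ladder hjn
    have hT : c.T (j + 1) = c.T j + c.η j := c.T_succ j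
    rw [← hj1]
    linear_combination -hlad - 2 * c.Y j * hT

lemma budget : ∑ k ∈ range c.N, (c.Y k / c.α k) ^ 2 = c.R ^ 2 := by
  have h1 : ∑ k ∈ range c.N, (c.Y k / c.α k) ^ 2
      = ∑ k ∈ range c.N, 2 * c.γ 0 * (c.η k * c.Y k) := by
    apply Finset.sum_congr rfl
    intro k hk
    exact c.budget_term (mem_range.mp hk)
  rw [h1, ← Finset.mul_sum]
  have h2 := c.Sigma_identity c.N (le_refl _)
  simp only [Nat.sub_self] at h2
  rw [Finset.range_eq_Ico, h2, c.T_zero]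
  have hT := c.T_pos c.hN (le_refl _)
  have hγ0 := c.γ0_pos
  rw [G]
  field_simp
  ring

lemma G_eq_stated :
    c.γ (c.N - 1) * c.R ^ 2 / (4 * (c.γ 0) ^ 2 * (c.η (c.N - 1)) ^ 2) = c.G := by
  have hN1 := c.hN
  have hk : c.N - 1 < c.N := by omega
  have h1 : c.N - 1 + 1 = c.N := by omega
  have hηsq := c.ηsq hk
  rw [h1] at hηsq
  have hγ0ne : c.γ 0 ≠ 0 := ne_of_gt c.γ0_pos
  have hγk : c.γ (c.N - 1) = c.γ 0 * c.ρ (c.N - 1) := by rw [ρ]; field_simp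
  have hT := c.T_pos c.hN (le_refl _)
  have hγ0 := c.γ0_pos
  have hρ := c.ρ_pos hk
  rw [G, hηsq, hγk]
  field_simp

lemma Y_N_eq_G : c.Y c.N = c.G := c.Y_N

lemma G_le_Y {k : ℕ} (hk : k ≤ c.N) : c.G ≤ c.Y k := by
  rw [← c.Y_N]; exact c.Y_antitone hk (le_refl _)

end Ctx

namespace Ctx
variable (c : Ctx)

/-! ### The simulation -/

def respOf (prev : ℕ → E c.d × E c.d × E c.d) (i : ℕ) : E c.d × EReal :=
  ((prev i).2.2,
    ((max (maxAff c.x0 (fun k => (prev k).1) c.α c.Y i ((prev i).2.1)) (c.Y (i+1)) : ℝ) : EReal))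

def xhD (n : ℕ) (prev : ℕ → E c.d × E c.d × E c.d) : E c.d :=
  if n = 0 then c.x0 else
    c.M.query n c.x0 (fun i => if i < n then c.respOf prev i else (c.x0, (0 : EReal)))

def perpSet (n : ℕ) (prev : ℕ → E c.d × E c.d × E c.d) : Finset (E c.d) :=
  ((range n).image (fun i => (prev i).1)) ∪
    ((range n).image (fun i => (prev i).2.1 - c.x0)) ∪ {c.xhD n prev - c.x0}

def gD (n : ℕ) (prev : ℕ → E c.d × E c.d × E c.d) : E c.d := choosePerp (c.perpSet n prev)

def gfD (n : ℕ) (prev : ℕ → E c.d × E c.d × E c.d) : ℕ → E c.d :=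
  fun k => if k = n then c.gD n prev else (prev k).1

def SD (n : ℕ) (prev : ℕ → E c.d × E c.d × E c.d) : Submodule ℝ (E c.d) :=
  Submodule.span ℝ ((c.gfD n prev) '' (Set.Iic n))

def pD (n : ℕ) (prev : ℕ → E c.d × E c.d × E c.d) : E c.d :=
  proxPt (maxAff c.x0 (c.gfD n prev) c.α c.Y n) (c.SD n prev) (c.γ n) (c.xhD n prev)

def step (n : ℕ) (prev : ℕ → E c.d × E c.d × E c.d) : E c.d × E c.d × E c.d :=
  (c.gD n prev, c.xhD n prev, c.pD n prev)

def simAux : ℕ → ℕ → E c.d × E c.d × E c.d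
  | 0, _ => (0, c.x0, c.x0)
  | (n+1), k => if k = n then c.step n (fun i => simAux n i) else simAux n k

lemma simAux_succ (n k : ℕ) :
    c.simAux (n+1) k = if k = n then c.step n (fun i => c.simAux n i) else c.simAux n k := by
  rfl

lemma simAux_eta (n : ℕ) : (fun i => c.simAux n i) = c.simAux n := rfl

def sim (n : ℕ) : E c.d × E c.d × E c.d := c.simAux (n+1) n

lemma sim_eq_step (n : ℕ) : c.sim n = c.step n (c.simAux n) := by
  show c.simAux (n+1) n = _
  rw [c.simAux_succ, if_pos rfl, c.simAux_eta]

lemma simAux_eq : ∀ m k, k < m → c.simAux m k = c.sim k := by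
  intro m
  induction m with
  | zero => intro k hk; omega
  | succ n ih =>
    intro k hk
    rcases Nat.lt_succ_iff_lt_or_eq.mp hk with h | h
    · rw [c.simAux_succ, if_neg (by omega), ih k h]
    · subst h
      rw [c.simAux_succ, if_pos rfl, c.simAux_eta, ← c.sim_eq_step]

def gv (n : ℕ) : E c.d := (c.sim n).1
def xh (n : ℕ) : E c.d := (c.sim n).2.1
def ph (n : ℕ) : E c.d := (c.sim n).2.2

lemma gv_eq (n : ℕ) : c.gv n = c.gD n (c.simAux n) := by rw [gv, sim_eq_step]; rfl
lemma xh_eq (n : ℕ) : c.xh n = c.xhD n (c.simAux n) := by rw [xh, sim_eq_step]; rfl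
lemma ph_eq (n : ℕ) : c.ph n = c.pD n (c.simAux n) := by rw [ph, sim_eq_step]; rfl

lemma xh_zero : c.xh 0 = c.x0 := by rw [xh_eq]; rfl

lemma gf_eq (n : ℕ) : ∀ k ≤ n, c.gfD n (c.simAux n) k = c.gv k := by
  intro k hk
  rcases Nat.lt_or_ge k n with h | h
  · rw [gfD, if_neg (by omega), c.simAux_eq n k h]; rfl
  · have : k = n := le_antisymm hk h
    subst this
    rw [gfD, if_pos rfl, c.gv_eq]

def Vhat (i : ℕ) : ℝ := max (maxAff c.x0 c.gv c.α c.Y i (c.xh i)) (c.Y (i+1))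

def rhat (i : ℕ) : E c.d × EReal := (c.ph i, ((c.Vhat i : ℝ) : EReal))

lemma respOf_eq (n i : ℕ) (hi : i < n) : c.respOf (c.simAux n) i = c.rhat i := by
  unfold respOf rhat Vhat
  have h1 : (c.simAux n i).2.2 = c.ph i := by rw [c.simAux_eq n i hi]; rfl
  have h2 : (c.simAux n i).2.1 = c.xh i := by rw [c.simAux_eq n i hi]; rfl
  have h3 : maxAff c.x0 (fun k => (c.simAux n k).1) c.α c.Y i ((c.simAux n i).2.1)
      = maxAff c.x0 c.gv c.α c.Y i (c.xh i) := by
    rw [h2]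
    apply maxAff_congr
    intro k hk
    rw [c.simAux_eq n k (lt_of_le_of_lt hk hi)]; rfl
  rw [h1, h3]

lemma xh_query (n : ℕ) (hn : 1 ≤ n) :
    c.xh n = c.M.query n c.x0 (fun i => if i < n then c.rhat i else (c.x0, (0 : EReal))) := by
  rw [xh_eq, xhD, if_neg (by omega)]
  apply c.M.query_causal
  intro j hj
  simp only [if_pos hj]
  exact c.respOf_eq n j hj

/-! ### Orthogonality properties -/

lemma perp_card (n : ℕ) (hn : n < c.N) : (c.perpSet n (c.simAux n)).card < c.d := by
  have h1 : (c.perpSet n (c.simAux n)).card ≤ n + n + 1 := by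
    unfold perpSet
    calc _ ≤ (((range n).image (fun i => ((c.simAux n) i).1)) ∪
        ((range n).image (fun i => ((c.simAux n) i).2.1 - c.x0))).card + 1 := by
          apply le_trans (Finset.card_union_le _ _)
          simp
    _ ≤ (((range n).image (fun i => ((c.simAux n) i).1)).card +
        ((range n).image (fun i => ((c.simAux n) i).2.1 - c.x0)).card) + 1 := by
          have := Finset.card_union_le ((range n).image (fun i => ((c.simAux n) i).1))
            ((range n).image (fun i => ((c.simAux n) i).2.1 - c.x0))
          omega
    _ ≤ n + n + 1 := by
          have h2 := Finset.card_image_le (s := range n) (f := fun i => ((c.simAux n) i).1)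
          have h3 := Finset.card_image_le (s := range n)
            (f := fun i => ((c.simAux n) i).2.1 - c.x0)
          simp only [Finset.card_range] at h2 h3
          omega
  have := c.hd
  omega

lemma gv_norm (n : ℕ) (hn : n < c.N) : ‖c.gv n‖ = 1 := by
  rw [gv_eq]
  exact (choosePerp_spec (c.perp_card n hn)).1

lemma gv_perp_gv (n : ℕ) (hn : n < c.N) (i : ℕ) (hi : i < n) : ⟪c.gv i, c.gv n⟫ = 0 := by
  rw [gv_eq c n]
  apply (choosePerp_spec (c.perp_card n hn)).2
  unfold perpSet
  apply Finset.mem_union_left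
  apply Finset.mem_union_left
  apply Finset.mem_image.mpr
  exact ⟨i, mem_range.mpr hi, by rw [c.simAux_eq n i hi]; rfl⟩

lemma gv_orthonormal {k l : ℕ} (hk : k < c.N) (hl : l < c.N) (hkl : k ≠ l) :
    ⟪c.gv k, c.gv l⟫ = 0 := by
  rcases Nat.lt_or_ge k l with h | h
  · exact c.gv_perp_gv l hl k h
  · have : l < k := by omega
    rw [real_inner_comm]
    exact c.gv_perp_gv k hk l this

lemma xh_perp_gv (n : ℕ) (hn : n < c.N) (i : ℕ) (hi : i ≤ n) :
    ⟪c.xh i - c.x0, c.gv n⟫ = 0 := by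
  rw [gv_eq c n]
  apply (choosePerp_spec (c.perp_card n hn)).2
  unfold perpSet
  rcases Nat.lt_or_ge i n with h | h
  · apply Finset.mem_union_left
    apply Finset.mem_union_right
    apply Finset.mem_image.mpr
    exact ⟨i, mem_range.mpr h, by rw [c.simAux_eq n i h]; rfl⟩
  · have : i = n := le_antisymm hi h
    subst this
    apply Finset.mem_union_right
    rw [c.xh_eq]
    simp


def Sp (j : ℕ) : Submodule ℝ (E c.d) := Submodule.span ℝ (c.gv '' (Set.Iic j))

def Φ (j : ℕ) (w : E c.d) : ℝ := maxAff c.x0 c.gv c.α c.Y j w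

lemma gv_mem_Sp {k j : ℕ} (hk : k ≤ j) : c.gv k ∈ c.Sp j :=
  Submodule.subset_span ⟨k, Set.mem_Iic.mpr hk, rfl⟩

lemma prox_translated (j : ℕ) (hj : j < c.N) :
    ProxPtSpec (c.Φ j) (c.Sp j) (c.γ j) (c.xh j) (c.ph j) := by
  have hfeq : maxAff c.x0 (c.gfD j (c.simAux j)) c.α c.Y j = c.Φ j := by
    funext w
    exact maxAff_congr c.x0 c.α c.Y (c.gf_eq j) w
  have hSeq : c.SD j (c.simAux j) = c.Sp j := by
    unfold SD Sp
    congr 1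
    apply Set.image_congr
    intro k hk
    exact c.gf_eq j k (Set.mem_Iic.mp hk)
  set f0 := maxAff c.x0 (c.gfD j (c.simAux j)) c.α c.Y j with hf0
  set L : ℝ := ∑ k ∈ range (j+1), |c.α k| * ‖c.gfD j (c.simAux j) k‖ with hLdef
  have hLnn : 0 ≤ L := Finset.sum_nonneg (fun k _ => by positivity)
  have hLk : ∀ k ≤ j, |c.α k| * ‖c.gfD j (c.simAux j) k‖ ≤ L := by
    intro k hk
    exact Finset.single_le_sum (f := fun i => |c.α i| * ‖c.gfD j (c.simAux j) i‖)
      (fun i _ => by positivity) (mem_range.mpr (Nat.lt_succ_of_le hk))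
  have hlip : ∀ w v : E c.d, f0 v - L * ‖v - w‖ ≤ f0 w := by
    intro w v
    have := maxAff_lip c.x0 (c.gfD j (c.simAux j)) c.α c.Y L hLk v w
    linarith
  have hex : ∃ p, ProxPtSpec f0 (c.SD j (c.simAux j)) (c.γ j) (c.xhD j (c.simAux j)) p :=
    prox_exists f0 (maxAff_continuous _ _ _ _ _) L hLnn hlip
      (c.SD j (c.simAux j)) (c.γ j) (c.hγ j hj) (c.xhD j (c.simAux j))
  have hspec := proxPt_spec hex
  have hpoint : c.ph j = proxPt f0 (c.SD j (c.simAux j)) (c.γ j) (c.xhD j (c.simAux j)) := by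
    rw [c.ph_eq j, pD]
  rw [← hpoint] at hspec
  rw [hfeq, hSeq, ← c.xh_eq j] at hspec
  exact hspec

lemma kink (j : ℕ) (hj : j < c.N) :
    -(c.γ j * c.α j) ≤ ⟪c.ph j - c.xh j, c.gv j⟫ := by
  by_contra hcon
  push_neg at hcon
  set A := ⟪c.ph j - c.xh j, c.gv j⟫ with hA
  set t := -A - c.γ j * c.α j with ht
  have ht0 : 0 < t := by rw [ht]; linarith
  obtain ⟨hmem, hopt⟩ := c.prox_translated j hj
  set w := c.ph j + t • c.gv j with hw
  have hγj := c.hγ j hj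
  have hαj := c.α_pos hj
  have hwmem : w - c.xh j ∈ c.Sp j := by
    have h1 : w - c.xh j = (c.ph j - c.xh j) + t • c.gv j := by rw [hw]; abel
    rw [h1]
    exact Submodule.add_mem _ hmem (Submodule.smul_mem _ _ (c.gv_mem_Sp (le_refl j)))
  have hwp : w - c.ph j = t • c.gv j := by rw [hw]; abel
  have hΦ : c.Φ j w ≤ c.Φ j (c.ph j) + t * c.α j := by
    apply maxAff_le
    intro k hk
    have hshift := piece_shift c.x0 (c.gv k) (c.α k) (c.Y k) w (c.ph j)
    rw [hwp, real_inner_smul_left] at hshift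
    have hple := piece_le_maxAff c.x0 c.gv c.α c.Y hk (c.ph j)
    have hta : 0 ≤ t * c.α j := by positivity
    rcases Nat.lt_or_ge k j with hkj | hkj
    · have hz : ⟪c.gv j, c.gv k⟫ = (0:ℝ) := by
        rw [real_inner_comm]
        exact c.gv_perp_gv j hj k hkj
      rw [hz] at hshift
      unfold Φ
      rw [hshift, mul_zero, mul_zero, add_zero]
      linarith
    · have hkj' : k = j := le_antisymm hk hkj
      have hn : ⟪c.gv j, c.gv k⟫ = (1:ℝ) := by
        rw [hkj', real_inner_self_eq_norm_sq, c.gv_norm j hj]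
        norm_num
      rw [hn] at hshift
      unfold Φ
      rw [hshift]
      have he : c.α k * (t * 1) = t * c.α j := by rw [hkj']; ring
      rw [he]
      linarith
  have hnorm : ‖w - c.xh j‖^2 = ‖c.ph j - c.xh j‖^2 + 2*t*A + t^2 := by
    have h1 : w - c.xh j = (c.ph j - c.xh j) + t • c.gv j := by rw [hw]; abel
    rw [h1, norm_add_sq_real, real_inner_smul_right, norm_smul]
    rw [c.gv_norm j hj, ← hA]
    rw [Real.norm_eq_abs]
    rw [mul_pow, sq_abs]
    ring
  have hineq := hopt w hwmem
  rw [hnorm] at hineq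
  have hsplit : (‖c.ph j - c.xh j‖^2 + 2*t*A + t^2)/(2*c.γ j)
      = ‖c.ph j - c.xh j‖^2/(2*c.γ j) + (2*t*A + t^2)/(2*c.γ j) := by ring
  rw [hsplit] at hineq
  clear_value A t
  have hfin : 0 ≤ t * c.α j + (2*t*A + t^2)/(2*c.γ j) := by linarith
  have h2γ : (0:ℝ) < 2 * c.γ j := by linarith
  have hmul := mul_le_mul_of_nonneg_right hfin (le_of_lt h2γ)
  rw [zero_mul, add_mul, div_mul_cancel₀ _ (ne_of_gt h2γ)] at hmul
  have hAval : A = -(c.γ j * c.α j) - t := by rw [ht]; ring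
  nlinarith [hmul, ht0, hAval]

lemma landing (j : ℕ) (hj : j < c.N) :
    c.Y (j+1) ≤ piece c.x0 (c.gv j) (c.α j) (c.Y j) (c.ph j) := by
  have h1 : ⟪c.ph j - c.x0, c.gv j⟫
      = ⟪c.ph j - c.xh j, c.gv j⟫ + ⟪c.xh j - c.x0, c.gv j⟫ := by
    rw [← inner_add_left]
    congr 1
    abel
  rw [piece, h1, c.xh_perp_gv j hj j (le_refl j), add_zero]
  have h2 := c.kink j hj
  have h3 := c.γαsq hj
  have hα := le_of_lt (c.α_pos hj)
  nlinarith [mul_le_mul_of_nonneg_left h2 hα]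

lemma ph_perp_later (j : ℕ) (hj : j < c.N) (l : ℕ) (hjl : j < l) (hl : l < c.N) :
    ⟪c.ph j - c.x0, c.gv l⟫ = 0 := by
  have h1 : ⟪c.ph j - c.xh j, c.gv l⟫ = 0 := by
    apply inner_span_zero _ _ (c.prox_translated j hj).1
    intro v hv
    obtain ⟨k, hk, rfl⟩ := hv
    have hk' : k ≤ j := Set.mem_Iic.mp hk
    exact c.gv_orthonormal (lt_of_le_of_lt hk' (lt_trans hjl hl)) hl (by omega)
  have h2 : ⟪c.xh j - c.x0, c.gv l⟫ = 0 := c.xh_perp_gv l hl j (le_of_lt hjl)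
  have h3 : ⟪c.ph j - c.x0, c.gv l⟫
      = ⟪c.ph j - c.xh j, c.gv l⟫ + ⟪c.xh j - c.x0, c.gv l⟫ := by
    rw [← inner_add_left]
    congr 1
    abel
  rw [h3, h1, h2, add_zero]

lemma piece_xh (j l : ℕ) (hjl : j ≤ l) (hl : l < c.N) :
    piece c.x0 (c.gv l) (c.α l) (c.Y l) (c.xh j) = c.Y l := by
  rw [piece, c.xh_perp_gv l hl j hjl, mul_zero, zero_add]

lemma piece_ph (j l : ℕ) (hj : j < c.N) (hjl : j < l) (hl : l < c.N) :
    piece c.x0 (c.gv l) (c.α l) (c.Y l) (c.ph j) = c.Y l := by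
  rw [piece, c.ph_perp_later j hj l hjl hl, mul_zero, zero_add]


/-! ### The final function -/

def xN : E c.d := c.xh c.N

def cv : ℝ := piece c.x0 (c.gv (c.N - 1)) (c.α (c.N - 1)) (c.Y (c.N - 1)) c.xN

def Δ : ℝ := if c.G ≤ c.cv then 0 else (max c.cv 0 + c.G)/2

def ν : ℝ := if c.G ≤ c.cv then 1 else c.G * c.α (c.N - 1) / (c.Δ - c.cv)

def q1b : ℝ := c.Δ - c.ν * ((c.Y (c.N-1) - c.Δ)/(c.α (c.N-1)))

def Q1 (w : E c.d) : ℝ := piece c.x0 (c.gv (c.N-1)) (-c.ν) c.q1b w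

def HH (w : E c.d) : ℝ := max (maxAff c.x0 c.gv c.α c.Y (c.N - 1) w) (c.Q1 w)

def hfun : E c.d → EReal := fun w => ((c.HH w : ℝ) : EReal)

lemma hN1 : c.N - 1 + 1 = c.N := by have := c.hN; omega

lemma hNN : c.N - 1 < c.N := by have := c.hN; omega

lemma Δ_nonneg : 0 ≤ c.Δ := by
  unfold Δ
  split_ifs with h
  · exact le_refl 0
  · have h0 := c.G_pos
    have h1 := le_max_right c.cv 0
    linarith

lemma Δ_lt_G : c.Δ < c.G := by
  unfold Δ
  split_ifs with h
  · exact c.G_pos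
  · push_neg at h
    have h0 := c.G_pos
    have h1 : max c.cv 0 < c.G := max_lt h h0
    linarith

lemma cv_lt_Δ (h : ¬ c.G ≤ c.cv) : c.cv < c.Δ := by
  push_neg at h
  unfold Δ
  rw [if_neg (not_le.mpr h)]
  have h1 := le_max_left c.cv 0
  linarith

lemma ν_pos : 0 < c.ν := by
  unfold ν
  split_ifs with h
  · norm_num
  · have h1 : c.cv < c.Δ := c.cv_lt_Δ h
    exact div_pos (mul_pos c.G_pos (c.α_pos c.hNN)) (by linarith)

lemma Δ_lt_Y {k : ℕ} (hk : k ≤ c.N) : c.Δ < c.Y k :=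
  lt_of_lt_of_le c.Δ_lt_G (c.G_le_Y hk)

lemma q1b_le_Δ : c.q1b ≤ c.Δ := by
  unfold q1b
  have h1 : 0 < c.Y (c.N-1) - c.Δ := by
    have := c.Δ_lt_Y (k := c.N - 1) (by omega)
    linarith
  have h2 := c.ν_pos
  have h3 := c.α_pos c.hNN
  have : 0 ≤ c.ν * ((c.Y (c.N-1) - c.Δ)/(c.α (c.N-1))) := by positivity
  linarith

lemma Q1_xh (j : ℕ) (hj : j < c.N) : c.Q1 (c.xh j) ≤ c.Δ := by
  unfold Q1
  rw [piece, c.xh_perp_gv (c.N-1) c.hNN j (by omega), mul_zero, zero_add]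
  exact c.q1b_le_Δ

lemma Q1_ph (j : ℕ) (hj : j < c.N) : c.Q1 (c.ph j) ≤ c.Δ := by
  rcases Nat.lt_or_ge j (c.N - 1) with hlt | hge
  · unfold Q1
    rw [piece, c.ph_perp_later j hj (c.N-1) hlt c.hNN, mul_zero, zero_add]
    exact c.q1b_le_Δ
  · have hj' : j = c.N - 1 := by omega
    subst hj'
    have hz : ⟪c.ph (c.N-1) - c.x0, c.gv (c.N-1)⟫
        = ⟪c.ph (c.N-1) - c.xh (c.N-1), c.gv (c.N-1)⟫ := by
      have hd : ⟪c.ph (c.N-1) - c.x0, c.gv (c.N-1)⟫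
          = ⟪c.ph (c.N-1) - c.xh (c.N-1), c.gv (c.N-1)⟫
            + ⟪c.xh (c.N-1) - c.x0, c.gv (c.N-1)⟫ := by
        rw [← inner_add_left]
        congr 1
        abel
      rw [hd, c.xh_perp_gv (c.N-1) c.hNN (c.N-1) (le_refl _), add_zero]
    have hk := c.kink (c.N-1) c.hNN
    have hαs := c.γαsq c.hNN
    rw [c.hN1, c.Y_N] at hαs
    have hα := c.α_pos c.hNN
    have hν := c.ν_pos
    have hΔG := c.Δ_lt_G
    unfold Q1 q1b
    rw [piece, hz]
    -- goal: -ν * z + (Δ - ν * ((Y-Δ)/α)) ≤ Δ  with z ≥ -(γ α)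
    have hYa : c.γ (c.N-1) * c.α (c.N-1) ≤ (c.Y (c.N-1) - c.Δ)/(c.α (c.N-1)) := by
      rw [le_div_iff₀ hα]
      nlinarith [hαs]
    set z := ⟪c.ph (c.N-1) - c.xh (c.N-1), c.gv (c.N-1)⟫ with hzd
    have h1 : 0 ≤ c.ν * (z + (c.Y (c.N-1) - c.Δ)/(c.α (c.N-1))) := by
      apply mul_nonneg (le_of_lt hν)
      nlinarith [hk, hYa]
    nlinarith [h1]

lemma Φ_le_ΦN (j : ℕ) (hj : j < c.N) (w : E c.d) :
    c.Φ j w ≤ maxAff c.x0 c.gv c.α c.Y (c.N - 1) w := by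
  apply maxAff_le
  intro k hk
  exact piece_le_maxAff c.x0 c.gv c.α c.Y (by omega) w

lemma HH_xh (j : ℕ) (hj : j < c.N) : c.HH (c.xh j) = c.Vhat j := by
  have hle1 : maxAff c.x0 c.gv c.α c.Y (c.N - 1) (c.xh j) ≤ c.Vhat j := by
    apply maxAff_le
    intro k hk
    rcases le_or_gt k j with hkj | hkj
    · exact le_trans (piece_le_maxAff c.x0 c.gv c.α c.Y hkj (c.xh j))
        (le_max_left _ _)
    · have hkN : k < c.N := by omega
      rw [c.piece_xh j k (le_of_lt hkj) hkN]
      exact le_trans (c.Y_antitone hkj hkN.le) (le_max_right _ _)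
  have hle2 : c.Q1 (c.xh j) ≤ c.Vhat j := by
    have h1 := c.Q1_xh j hj
    have h2 : c.Δ < c.Y (j+1) := c.Δ_lt_Y (by omega)
    exact le_trans (by linarith) (le_max_right _ _)
  have hge1 : maxAff c.x0 c.gv c.α c.Y j (c.xh j)
      ≤ c.HH (c.xh j) := le_trans (c.Φ_le_ΦN j hj (c.xh j)) (le_max_left _ _)
  have hge2 : c.Y (j+1) ≤ c.HH (c.xh j) := by
    rcases Nat.lt_or_ge j (c.N - 1) with hlt | hge
    · have h1 : piece c.x0 (c.gv (j+1)) (c.α (j+1)) (c.Y (j+1)) (c.xh j) = c.Y (j+1) :=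
        c.piece_xh j (j+1) (Nat.le_succ j) (by omega)
      calc c.Y (j+1) = piece c.x0 (c.gv (j+1)) (c.α (j+1)) (c.Y (j+1)) (c.xh j) := h1.symm
      _ ≤ maxAff c.x0 c.gv c.α c.Y (c.N - 1) (c.xh j) :=
          piece_le_maxAff c.x0 c.gv c.α c.Y (by omega) (c.xh j)
      _ ≤ c.HH (c.xh j) := le_max_left _ _
    · have hj' : j = c.N - 1 := by omega
      have h1 : piece c.x0 (c.gv j) (c.α j) (c.Y j) (c.xh j) = c.Y j :=
        c.piece_xh j j (le_refl j) hj
      calc c.Y (j+1) ≤ c.Y j := le_of_lt (c.Y_succ_lt hj)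
      _ = piece c.x0 (c.gv j) (c.α j) (c.Y j) (c.xh j) := h1.symm
      _ ≤ maxAff c.x0 c.gv c.α c.Y (c.N - 1) (c.xh j) :=
          piece_le_maxAff c.x0 c.gv c.α c.Y (by omega) (c.xh j)
      _ ≤ c.HH (c.xh j) := le_max_left _ _
  exact le_antisymm (max_le hle1 hle2) (max_le hge1 hge2)

lemma HH_ph (j : ℕ) (hj : j < c.N) : c.HH (c.ph j) = c.Φ j (c.ph j) := by
  have hland := c.landing j hj
  have hY1 : c.Y (j+1) ≤ c.Φ j (c.ph j) :=
    le_trans hland (piece_le_maxAff c.x0 c.gv c.α c.Y (le_refl j) (c.ph j))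
  have hle1 : maxAff c.x0 c.gv c.α c.Y (c.N - 1) (c.ph j) ≤ c.Φ j (c.ph j) := by
    apply maxAff_le
    intro k hk
    rcases le_or_gt k j with hkj | hkj
    · exact piece_le_maxAff c.x0 c.gv c.α c.Y hkj (c.ph j)
    · have hkN : k < c.N := by omega
      rw [c.piece_ph j k hj hkj hkN]
      exact le_trans (c.Y_antitone hkj hkN.le) hY1
  have hle2 : c.Q1 (c.ph j) ≤ c.Φ j (c.ph j) := by
    have h1 := c.Q1_ph j hj
    have h2 : c.Δ < c.Y (j+1) := c.Δ_lt_Y (by omega)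
    linarith
  exact le_antisymm (max_le hle1 hle2) (le_trans (c.Φ_le_ΦN j hj (c.ph j)) (le_max_left _ _))

lemma prox_HH (j : ℕ) (hj : j < c.N) :
    ∀ w, c.HH (c.ph j) + ‖c.ph j - c.xh j‖^2/(2*c.γ j)
      ≤ c.HH w + ‖w - c.xh j‖^2/(2*c.γ j) := by
  intro w
  obtain ⟨hmem, hopt⟩ := c.prox_translated j hj
  set v := w - c.xh j with hv
  set Pw := c.xh j + (((c.Sp j).orthogonalProjectionOnto v) : E c.d) with hPw
  have hPmem : Pw - c.xh j ∈ c.Sp j := by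
    rw [hPw, add_sub_cancel_left]
    exact SetLike.coe_mem _
  have hPinv : c.Φ j Pw = c.Φ j w := by
    apply maxAff_invariant
    intro k hk
    have hkN : k < c.N := by omega
    have hmemo : v - (((c.Sp j).orthogonalProjectionOnto v) : E c.d) ∈ (c.Sp j)ᗮ :=
      Submodule.sub_starProjection_mem_orthogonal (K := c.Sp j) v
    have h1 : ⟪c.gv k, v - (((c.Sp j).orthogonalProjectionOnto v) : E c.d)⟫ = 0 :=
      (Submodule.mem_orthogonal _ _).mp hmemo (c.gv k) (c.gv_mem_Sp hk)
    have h2 : Pw - w = -(v - (((c.Sp j).orthogonalProjectionOnto v) : E c.d)) := by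
      rw [hPw, hv]
      abel
    rw [h2, inner_neg_left, real_inner_comm, h1, neg_zero]
  have hPnorm : ‖Pw - c.xh j‖ ≤ ‖w - c.xh j‖ := by
    rw [hPw, add_sub_cancel_left, ← hv]
    have h1 := ((c.Sp j).orthogonalProjectionOnto).le_opNorm v
    have h2 := Submodule.orthogonalProjectionOnto_norm_le (K := c.Sp j)
    have h3 : ‖(((c.Sp j).orthogonalProjectionOnto v) : E c.d)‖
        = ‖(c.Sp j).orthogonalProjectionOnto v‖ := rfl
    rw [h3]
    calc ‖(c.Sp j).orthogonalProjectionOnto v‖ ≤ ‖(c.Sp j).orthogonalProjectionOnto‖ * ‖v‖ := h1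
    _ ≤ 1 * ‖v‖ := mul_le_mul_of_nonneg_right h2 (norm_nonneg v)
    _ = ‖v‖ := one_mul _
  have hγj := c.hγ j hj
  have hD : ‖Pw - c.xh j‖^2/(2*c.γ j) ≤ ‖w - c.xh j‖^2/(2*c.γ j) := by
    apply div_mono_num _ (by linarith)
    have h0 := norm_nonneg (Pw - c.xh j)
    nlinarith [hPnorm]
  calc c.HH (c.ph j) + ‖c.ph j - c.xh j‖^2/(2*c.γ j)
      = c.Φ j (c.ph j) + ‖c.ph j - c.xh j‖^2/(2*c.γ j) := by rw [c.HH_ph j hj]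
  _ ≤ c.Φ j Pw + ‖Pw - c.xh j‖^2/(2*c.γ j) := hopt Pw hPmem
  _ = c.Φ j w + ‖Pw - c.xh j‖^2/(2*c.γ j) := by rw [hPinv]
  _ ≤ c.Φ j w + ‖w - c.xh j‖^2/(2*c.γ j) := by linarith
  _ ≤ c.HH w + ‖w - c.xh j‖^2/(2*c.γ j) := by
      have := le_trans (c.Φ_le_ΦN j hj w) (le_max_left _ (c.Q1 w))
      unfold HH
      linarith

lemma HHconv : ∀ x y : E c.d, ∀ s t : ℝ, 0 ≤ s → 0 ≤ t → s + t = 1 →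
    c.HH (s • x + t • y) ≤ s * c.HH x + t * c.HH y := by
  intro x y s t hs ht hst
  have hx1 : maxAff c.x0 c.gv c.α c.Y (c.N-1) x ≤ c.HH x := le_max_left _ _
  have hx2 : piece c.x0 (c.gv (c.N-1)) (-c.ν) c.q1b x ≤ c.HH x := le_max_right _ _
  have hy1 : maxAff c.x0 c.gv c.α c.Y (c.N-1) y ≤ c.HH y := le_max_left _ _
  have hy2 : piece c.x0 (c.gv (c.N-1)) (-c.ν) c.q1b y ≤ c.HH y := le_max_right _ _
  apply max_le
  · have h1 := maxAff_convex c.x0 c.gv c.α c.Y (c.N-1) x y s t hs ht hst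
    nlinarith [mul_le_mul_of_nonneg_left hx1 hs, mul_le_mul_of_nonneg_left hy1 ht]
  · unfold Q1
    rw [piece_affine c.x0 (c.gv (c.N-1)) (-c.ν) c.q1b x y s t hst]
    nlinarith [mul_le_mul_of_nonneg_left hx2 hs, mul_le_mul_of_nonneg_left hy2 ht]

lemma HH_cont : Continuous c.HH := by
  unfold HH Q1
  exact (maxAff_continuous _ _ _ _ _).max (piece_continuous _ _ _ _)

/-! ### The minimizer -/

def epad : E c.d := choosePerp ((range c.N).image c.gv)

lemma epad_spec : PerpSpec ((range c.N).image c.gv) c.epad := by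
  apply choosePerp_spec
  have h1 := Finset.card_image_le (s := range c.N) (f := c.gv)
  have h2 := c.hd
  simp only [Finset.card_range] at h1
  omega

lemma epad_perp (k : ℕ) (hk : k < c.N) : ⟪c.gv k, c.epad⟫ = 0 :=
  c.epad_spec.2 (c.gv k) (Finset.mem_image.mpr ⟨k, mem_range.mpr hk, rfl⟩)

lemma sum_bound : ∑ k ∈ range c.N, ((c.Y k - c.Δ)/(c.α k))^2 ≤ c.R^2 := by
  rw [← c.budget]
  apply Finset.sum_le_sum
  intro k hk
  have hkN : k < c.N := mem_range.mp hk
  have hα := c.α_pos hkN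
  have hα2 : (0:ℝ) < (c.α k)^2 := by positivity
  have hΔY : c.Δ < c.Y k := c.Δ_lt_Y hkN.le
  have hΔ0 := c.Δ_nonneg
  rw [div_pow, div_pow, div_le_div_iff₀ hα2 hα2]
  have h5 : (c.Y k - c.Δ)^2 ≤ (c.Y k)^2 := by nlinarith
  nlinarith [mul_le_mul_of_nonneg_right h5 (le_of_lt hα2)]

def svar : ℝ := Real.sqrt (c.R^2 - ∑ k ∈ range c.N, ((c.Y k - c.Δ)/(c.α k))^2)

lemma svar_sq : c.svar^2 = c.R^2 - ∑ k ∈ range c.N, ((c.Y k - c.Δ)/(c.α k))^2 := by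
  rw [svar, Real.sq_sqrt]
  have := c.sum_bound
  linarith

def Vv : E c.d := (∑ k ∈ range c.N, ((c.Y k - c.Δ)/(c.α k)) • c.gv k) + c.svar • c.epad

def xs : E c.d := c.x0 - c.Vv

lemma inner_xs (k : ℕ) (hk : k < c.N) :
    ⟪c.xs - c.x0, c.gv k⟫ = -((c.Y k - c.Δ)/(c.α k)) := by
  have h1 : c.xs - c.x0 = -c.Vv := by rw [xs]; abel
  rw [h1, inner_neg_left]
  congr 1
  rw [Vv, inner_add_left, sum_inner]
  have h2 : ⟪c.svar • c.epad, c.gv k⟫ = 0 := by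
    rw [real_inner_smul_left, real_inner_comm, c.epad_perp k hk, mul_zero]
  rw [h2, add_zero]
  rw [Finset.sum_eq_single k]
  · rw [real_inner_smul_left, real_inner_self_eq_norm_sq, c.gv_norm k hk]
    norm_num
  · intro l hl hlk
    rw [real_inner_smul_left, c.gv_orthonormal (mem_range.mp hl) hk hlk, mul_zero]
  · intro hknot
    exact absurd (mem_range.mpr hk) hknot

lemma piece_xs (k : ℕ) (hk : k < c.N) :
    piece c.x0 (c.gv k) (c.α k) (c.Y k) c.xs = c.Δ := by
  have hα : c.α k ≠ 0 := ne_of_gt (c.α_pos hk)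
  rw [piece, c.inner_xs k hk]
  field_simp
  ring

lemma Q1_xs : c.Q1 c.xs = c.Δ := by
  have hα : c.α (c.N-1) ≠ 0 := ne_of_gt (c.α_pos c.hNN)
  rw [Q1, piece, c.inner_xs (c.N-1) c.hNN, q1b]
  field_simp
  ring

lemma HH_xs : c.HH c.xs = c.Δ := by
  apply le_antisymm
  · apply max_le
    · apply maxAff_le
      intro k hk
      exact le_of_eq (c.piece_xs k (by have := c.hN; omega))
    · exact le_of_eq c.Q1_xs
  · rw [← c.Q1_xs]
    exact le_max_right _ _

lemma HH_min (w : E c.d) : c.Δ ≤ c.HH w := by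
  have hα := c.α_pos c.hNN
  rcases le_or_gt (-((c.Y (c.N-1) - c.Δ)/(c.α (c.N-1)))) ⟪w - c.x0, c.gv (c.N-1)⟫ with h | h
  · have h1 : c.Δ ≤ piece c.x0 (c.gv (c.N-1)) (c.α (c.N-1)) (c.Y (c.N-1)) w := by
      rw [piece]
      have h2 := mul_le_mul_of_nonneg_left h (le_of_lt hα)
      have h3 : c.α (c.N-1) * (-((c.Y (c.N-1) - c.Δ)/(c.α (c.N-1))))
          = -(c.Y (c.N-1) - c.Δ) := by field_simp
      rw [h3] at h2
      linarith
    exact le_trans h1 (le_trans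
      (piece_le_maxAff c.x0 c.gv c.α c.Y (le_refl _) w) (le_max_left _ _))
  · have h1 : c.Δ ≤ c.Q1 w := by
      rw [Q1, piece, q1b]
      have hν := c.ν_pos
      have h2 : 0 < -⟪w - c.x0, c.gv (c.N-1)⟫ - (c.Y (c.N-1) - c.Δ)/(c.α (c.N-1)) := by
        linarith
      nlinarith [mul_pos hν h2]
    exact le_trans h1 (le_max_right _ _)

lemma dist_xs : ‖c.x0 - c.xs‖ = c.R := by
  have h1 : c.x0 - c.xs = c.Vv := by rw [xs]; abel
  rw [h1]
  have h2 : ‖c.Vv‖^2 = (∑ k ∈ range c.N, ((c.Y k - c.Δ)/(c.α k))^2) + c.svar^2 := by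
    rw [Vv]
    exact norm_orthosum c.N c.gv _ (fun k hk => c.gv_norm k hk)
      (fun k hk l hl hkl => c.gv_orthonormal hk hl hkl)
      c.epad c.epad_spec.1 (fun k hk => c.epad_perp k hk) c.svar
  rw [c.svar_sq] at h2
  have h3 : ‖c.Vv‖^2 = c.R^2 := by linarith
  rw [← Real.sqrt_sq (norm_nonneg c.Vv), h3, Real.sqrt_sq (le_of_lt c.hR)]

lemma bound_xN : c.Δ + c.G ≤ c.HH c.xN := by
  by_cases h : c.G ≤ c.cv
  · have hΔ : c.Δ = 0 := if_pos h
    have h1 : c.cv ≤ c.HH c.xN := by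
      unfold cv
      exact le_trans (piece_le_maxAff c.x0 c.gv c.α c.Y (le_refl _) c.xN) (le_max_left _ _)
    linarith
  · have hcv := c.cv_lt_Δ h
    have hν : c.ν = c.G * c.α (c.N - 1) / (c.Δ - c.cv) := if_neg h
    have hα := c.α_pos c.hNN
    have hz : ⟪c.xN - c.x0, c.gv (c.N-1)⟫
        = (c.cv - c.Y (c.N-1))/(c.α (c.N-1)) := by
      have hd : c.cv = c.α (c.N-1) * ⟪c.xN - c.x0, c.gv (c.N-1)⟫ + c.Y (c.N-1) := rfl
      rw [eq_div_iff (ne_of_gt hα)]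
      linarith [hd]
    have hQ : c.Q1 c.xN = c.Δ + c.G := by
      rw [Q1, piece, hz, q1b, hν]
      have hne : c.Δ - c.cv ≠ 0 := ne_of_gt (by linarith)
      field_simp
      ring
    rw [← hQ]
    exact le_max_right _ _

/-! ### Run agreement -/

lemma run_agrees (x : ℕ → E c.d) (r : ℕ → E c.d × EReal)
    (h0 : x 0 = c.x0)
    (hq : ∀ i, 1 ≤ i → i ≤ c.N → x i = c.M.query i c.x0 r)
    (hor : ∀ j, j < c.N →
      (∀ w, c.HH ((r j).1) + ‖(r j).1 - x j‖^2/(2*c.γ j)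
        ≤ c.HH w + ‖w - x j‖^2/(2*c.γ j)) ∧ (r j).2 = ((c.HH (x j) : ℝ) : EReal)) :
    ∀ j, (j ≤ c.N → x j = c.xh j) ∧ (j < c.N → r j = c.rhat j) := by
  intro j
  induction j using Nat.strong_induction_on with
  | _ j ih =>
    have hx : j ≤ c.N → x j = c.xh j := by
      intro hjN
      rcases Nat.eq_zero_or_pos j with h0' | h1'
      · rw [h0', h0, c.xh_zero]
      · rw [hq j h1' hjN, c.xh_query j h1']
        apply c.M.query_causal
        intro i hij
        rw [if_pos hij]
        exact (ih i hij).2 (lt_of_lt_of_le hij hjN)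
    refine ⟨hx, ?_⟩
    intro hjN
    have hxj : x j = c.xh j := hx (le_of_lt hjN)
    have h1 : (r j).1 = c.ph j := by
      apply prox_unique c.HH c.HHconv (c.hγ j hjN) (x := c.xh j)
      · intro w
        have := (hor j hjN).1 w
        rwa [hxj] at this
      · exact c.prox_HH j hjN
    have h2 : (r j).2 = ((c.Vhat j : ℝ) : EReal) := by
      rw [(hor j hjN).2, hxj, c.HH_xh j hjN]
    rw [show r j = ((r j).1, (r j).2) from rfl, h1, h2]
    rfl

lemma xN_run (x : ℕ → E c.d) (r : ℕ → E c.d × EReal)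
    (h0 : x 0 = c.x0)
    (hq : ∀ i, 1 ≤ i → i ≤ c.N → x i = c.M.query i c.x0 r)
    (hor : ∀ j, j < c.N →
      (∀ w, c.HH ((r j).1) + ‖(r j).1 - x j‖^2/(2*c.γ j)
        ≤ c.HH w + ‖w - x j‖^2/(2*c.γ j)) ∧ (r j).2 = ((c.HH (x j) : ℝ) : EReal)) :
    x c.N = c.xN :=
  (c.run_agrees x r h0 hq hor c.N).1 (le_refl _)


end Ctx

end OPPA

/-- Theorem 5, lower bound for deterministic proximal-oracle methods.
For every deterministic `N`-step proximal-oracle method with positive stepsizes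
`γ 0, …, γ (N-1)` and every starting point `x0`, there is a closed proper convex `h`
with a minimizer `x⋆` at distance `R` from `x0` such that the output `x N` of any run
satisfies `h (x N) - h x⋆ ≥ γ (N-1) ‖x0 - x⋆‖² / (4 (γ 0)² (η (N-1))²)`. -/
theorem oppa_lower_bound_deterministic
    (d N : ℕ) (hN : 1 ≤ N) (hd : 2 * N + 1 ≤ d)
    (R : ℝ) (hR : 0 < R)
    (γ : ℕ → ℝ) (hγ : ∀ i, i < N → 0 < γ i)
    (η : ℕ → ℝ) (hη0 : η 0 = 1)
    (hη : ∀ i, 1 ≤ i → i + 1 ≤ N →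
      η i = (γ i / γ 0 + Real.sqrt ((γ i / γ 0) ^ 2
        + 4 * (γ i / γ 0) / (γ (i - 1) / γ 0) * (η (i - 1)) ^ 2)) / 2)
    (M : ProxOracleMethod d N) (x0 : E d) :
    ∃ (h : E d → EReal) (xs : E d),
      ClosedProperConvexER h ∧
      (∀ w : E d, h xs ≤ h w) ∧
      ‖x0 - xs‖ = R ∧
      ∀ (x : ℕ → E d) (r : ℕ → E d × EReal),
        IsProxRun M h γ x0 x r →
        h xs + ((γ (N - 1) * ‖x0 - xs‖ ^ 2 / (4 * (γ 0) ^ 2 * (η (N - 1)) ^ 2) : ℝ) : EReal)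
          ≤ h (x N) := by
  set c : OPPA.Ctx := ⟨d, N, hN, hd, R, hR, γ, hγ, η, hη0, hη, M, x0⟩ with hc
  refine ⟨c.hfun, c.xs, ⟨?_, ⟨c.x0, ?_⟩, ?_, ?_⟩, ?_, ?_, ?_⟩
  · exact OPPA.lsc_coe c.HH_cont
  · exact EReal.coe_ne_top _
  · intro w
    exact EReal.coe_ne_bot _
  · intro xx yy a b ha hb hab
    have h1 := c.HHconv xx yy a b ha hb hab
    have h2 : ((a * c.HH xx + b * c.HH yy : ℝ) : EReal)
        = (a : EReal) * ((c.HH xx : ℝ) : EReal) + (b : EReal) * ((c.HH yy : ℝ) : EReal) := by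
      rw [EReal.coe_add, EReal.coe_mul, EReal.coe_mul]
    calc c.hfun (a • xx + b • yy) ≤ ((a * c.HH xx + b * c.HH yy : ℝ) : EReal) := by
          show ((c.HH (a • xx + b • yy) : ℝ) : EReal) ≤ _
          exact_mod_cast h1
    _ = (a : EReal) * c.hfun xx + (b : EReal) * c.hfun yy := h2
  · intro w
    have h1 : c.HH c.xs ≤ c.HH w := by
      rw [c.HH_xs]
      exact c.HH_min w
    show ((c.HH c.xs : ℝ) : EReal) ≤ ((c.HH w : ℝ) : EReal)
    exact_mod_cast h1
  · exact c.dist_xs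
  · intro x r hrun
    obtain ⟨h0, hq, hor⟩ := hrun
    have h0' : x 0 = c.x0 := h0
    have hq' : ∀ i, 1 ≤ i → i ≤ c.N → x i = c.M.query i c.x0 r := hq
    have hor' : ∀ j, j < c.N →
        (∀ w, c.HH ((r j).1) + ‖(r j).1 - x j‖^2/(2*c.γ j)
          ≤ c.HH w + ‖w - x j‖^2/(2*c.γ j)) ∧ (r j).2 = ((c.HH (x j) : ℝ) : EReal) := by
      intro j hj
      obtain ⟨hp, hv⟩ := hor j hj
      refine ⟨?_, hv⟩
      exact (OPPA.isProx_coe_iff c.HH (γ j) (x j) ((r j).1)).mp hp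
    have hxN : x N = c.xN := c.xN_run x r h0' hq' hor'
    have hdist : ‖x0 - c.xs‖ = R := c.dist_xs
    have hGs : γ (N - 1) * R ^ 2 / (4 * (γ 0) ^ 2 * (η (N - 1)) ^ 2) = c.G := c.G_eq_stated
    rw [hxN, hdist, hGs]
    have hfinal : c.HH c.xs + c.G ≤ c.HH c.xN := by
      rw [c.HH_xs]
      exact c.bound_xN
    calc c.hfun c.xs + ((c.G : ℝ) : EReal) = ((c.HH c.xs + c.G : ℝ) : EReal) := by
          rw [EReal.coe_add]
          rfl
    _ ≤ ((c.HH c.xN : ℝ) : EReal) := by exact_mod_cast hfinal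
    _ = c.hfun c.xN := rfl

end
end

section
/- Let e_0,…,e_N be the standard unit vectors of ℝ^{N+1}, L > 0, I = {0,1,…,N,⋆}, and let x_i, g_i ∈ ℝ^{N+1}, f_i ∈ ℝ for i ∈ I. Suppose: (i) g_i = L a_i e_i with a_i > 0 for i ∈ [0:N]; (ii) x_0 = 0, x_i ∈ −cone{e_0,…,e_{i−1}} for i ∈ [1:N], and x_⋆ ∈ −cone{e_0,…,e_N}; (iii) f_j − (1/L)⟨g_i, g_j⟩ + (1/2L)‖g_j − L x_j‖² − (L/2)‖x_j‖² ≥ f_k − (1/L)⟨g_i, g_k⟩ + (1/2L)‖g_k − L x_k‖² − (L/2)‖x_k‖² for all i ∈ [0:N], j ∈ [0:N−1], k ∈ [j+1:N]; (iv) g_⋆ = Σ_{i=0}^N σ_i g_i with σ_i ≥ 0 and Σ_{i=0}^N σ_i = 1; and (v) Σ_{i=0}^N σ_i ( f_i + (1/2L)‖g_i − L x_i‖² − (L/2)‖x_i‖² ) = f_⋆ + (1/2L)‖g_⋆ − L x_⋆‖² − (L/2)‖x_⋆‖². Define f(x) = max_{α ∈ Δ_I} [ (L/2)‖x‖² − (L/2)‖x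 − (1/L)Σ_{i∈I} α_i g_i‖² + Σ_{i∈I} α_i ( f_i + (1/2L)‖g_i − L x_i‖² − (L/2)‖x_i‖² ) ] and h = δ_C with C = x_⋆ + cone{g_0,…,g_N}. Then for all i ∈ [0:N] and γ > 0: if x ∈ span{e_0,…,e_{i−1}} then ∇f(x) ∈ span{e_0,…,e_i}; if x ∈ span{e_0,…,e_{i−1}} then prox_{γh}(x) ∈ span{e_0,…,e_{i−1}}; and inf over x ∈ span{e_0,…,e_{N−1}} of f(x) is at least f_N. (Here span{} = {0}.) -/
open Finset

noncomputable section

/-- The `j`-th standard unit vector of `ℝ^m` (and `0` if `j ≥ m`). -/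
def unitVec (m : ℕ) (j : ℕ) : E m :=
  if hj : j < m then EuclideanSpace.single ⟨j, hj⟩ (1 : ℝ) else 0

/-- `span{e_0, …, e_{i-1}}` in `ℝ^m` (with `span{} = {0}`). -/
def coordSpan (m i : ℕ) : Submodule ℝ (E m) :=
  Submodule.span ℝ (unitVec m '' {j : ℕ | j < i})

open Classical in
/-- The indicator function `δ_C` of a set `C`, valued in `ℝ ∪ {∞}`. -/
def indicatorE {α : Type*} (C : Set α) : α → EReal :=
  fun x => if x ∈ C then 0 else ⊤

/-- The translated cone `base + cone{g 0, …, g N}`. -/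
def coneSet {m : ℕ} {ι : Type*} [Fintype ι] (g : ι → E m) (base : E m) : Set (E m) :=
  {y | ∃ c : ι → ℝ, (∀ k, 0 ≤ c k) ∧ y = base + ∑ k, c k • g k}

/-- The semi-interpolated zero-chain construction
`f(x) = max_{α ∈ Δ_I} (L/2)‖x‖² - (L/2)‖x - (1/L) Σ α_i g_i‖²
  + Σ α_i (f_i + (1/2L)‖g_i - L x_i‖² - (L/2)‖x_i‖²)`. -/
def constructF {m : ℕ} {ι : Type*} [Fintype ι] (L : ℝ) (g xv : ι → E m) (fv : ι → ℝ)
    (x : E m) : ℝ :=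
  ⨆ α : stdSimplex ℝ ι,
    L / 2 * ‖x‖ ^ 2 - L / 2 * ‖x - L⁻¹ • ∑ i, α.1 i • g i‖ ^ 2
      + ∑ i, α.1 i * (fv i + 1 / (2 * L) * ‖g i - L • xv i‖ ^ 2 - L / 2 * ‖xv i‖ ^ 2)

/-! ### Auxiliary lemmas -/

section AuxCoord
variable {m : ℕ}

lemma unitVec_eq_single {m : ℕ} (j : Fin m) : unitVec m j = EuclideanSpace.single j 1 := by
  simp [unitVec]

lemma unitVec_apply {m : ℕ} (j l : Fin m) : unitVec m (j : ℕ) l = if l = j then 1 else 0 := by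
  rw [unitVec_eq_single]; simp

lemma sum_apply' {m : ℕ} {ι : Type*} (s : Finset ι) (f : ι → E m) (l : Fin m) :
    (∑ i ∈ s, f i) l = ∑ i ∈ s, f i l :=
  map_sum (EuclideanSpace.proj l (𝕜 := ℝ)) f s

lemma eq_sum_unitVec {m : ℕ} (v : E m) : v = ∑ j : Fin m, v j • unitVec m (j : ℕ) := by
  ext l
  rw [sum_apply']
  simp [unitVec_apply]

lemma mem_coordSpan_iff {m : ℕ} (i : ℕ) (v : E m) :
    v ∈ coordSpan m i ↔ ∀ j : Fin m, i ≤ (j : ℕ) → v j = 0 := by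
  constructor
  · intro hv
    induction hv using Submodule.span_induction with
    | mem x hx =>
      obtain ⟨j, hj, rfl⟩ := hx
      intro l hl
      by_cases hjm : j < m
      · rw [unitVec, dif_pos hjm, EuclideanSpace.single_apply, if_neg]
        intro h; subst h; have hj2 : j < i := hj; simp at hl; omega
      · rw [unitVec, dif_neg hjm]; rfl
    | zero => intro l _; rfl
    | add x y _ _ hx hy => intro l hl; have := hx l hl; have := hy l hl
                           show x l + y l = 0; simp [*]
    | smul a x _ hx => intro l hl; show a * x l = 0; simp [hx l hl]
  · intro h
    rw [eq_sum_unitVec v]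
    apply Submodule.sum_mem
    intro j _
    by_cases hj : (j : ℕ) < i
    · exact Submodule.smul_mem _ _ (Submodule.subset_span ⟨j, hj, rfl⟩)
    · rw [h j (by omega)]; simp

lemma normsq_eq {m : ℕ} (v : E m) : ‖v‖ ^ 2 = ∑ l, (v l) ^ 2 := by
  rw [EuclideanSpace.norm_eq, Real.sq_sqrt (by positivity)]
  simp [sq_abs]

end AuxCoord

section General
variable {m : ℕ} {ι : Type*} [Fintype ι]

def qvec (g : ι → E m) (α : ι → ℝ) : E m := ∑ i, α i • g i

def bval (L : ℝ) (g xv : ι → E m) (fv : ι → ℝ) (α : ι → ℝ) : ℝ :=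
  ∑ i, α i * (fv i + 1 / (2 * L) * ‖g i - L • xv i‖ ^ 2 - L / 2 * ‖xv i‖ ^ 2)

def Ftil (L : ℝ) (g xv : ι → E m) (fv : ι → ℝ) (o : ι) : ℝ :=
  fv o + 1 / (2 * L) * ‖g o - L • xv o‖ ^ 2 - L / 2 * ‖xv o‖ ^ 2

lemma bval_eq_sum_Ftil (L : ℝ) (g xv : ι → E m) (fv : ι → ℝ) (α : ι → ℝ) :
    bval L g xv fv α = ∑ i, α i * Ftil L g xv fv i := rfl

def Gfun (L : ℝ) (g xv : ι → E m) (fv : ι → ℝ) (α : ι → ℝ) (x : E m) : ℝ :=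
  inner ℝ x (qvec g α) - ‖qvec g α‖ ^ 2 / (2 * L) + bval L g xv fv α

variable {L : ℝ} {g xv : ι → E m} {fv : ι → ℝ}

lemma body_eq (hL : 0 < L) (α : ι → ℝ) (x : E m) :
    L / 2 * ‖x‖ ^ 2 - L / 2 * ‖x - L⁻¹ • ∑ i, α i • g i‖ ^ 2
      + ∑ i, α i * (fv i + 1 / (2 * L) * ‖g i - L • xv i‖ ^ 2 - L / 2 * ‖xv i‖ ^ 2)
    = Gfun L g xv fv α x := by
  have h1 : ‖x - L⁻¹ • qvec g α‖ ^ 2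
      = ‖x‖ ^ 2 - 2 * (L⁻¹ * inner ℝ x (qvec g α)) + (L⁻¹ * ‖qvec g α‖) ^ 2 := by
    rw [norm_sub_sq_real, real_inner_smul_right, norm_smul, Real.norm_eq_abs,
      abs_of_pos (inv_pos.mpr hL)]
  rw [Gfun, bval, qvec] at *
  rw [h1]
  field_simp
  ring

lemma constructF_eq (hL : 0 < L) (x : E m) :
    constructF L g xv fv x = ⨆ α : stdSimplex ℝ ι, Gfun L g xv fv α.1 x := by
  unfold constructF
  congr 1
  funext α
  exact body_eq hL α.1 x

lemma continuous_G (x : E m) : Continuous fun α : ι → ℝ => Gfun L g xv fv α x := by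
  have hq : Continuous fun α : ι → ℝ => qvec g α := by
    unfold qvec
    exact continuous_finset_sum _ fun i _ => (continuous_apply i).smul continuous_const
  unfold Gfun bval
  apply Continuous.add
  · exact (continuous_const.inner hq).sub
      (((hq.norm.pow 2)).div_const _)
  · exact continuous_finset_sum _ fun i _ => (continuous_apply i).mul continuous_const

lemma simplex_nonempty [Nonempty ι] : (stdSimplex ℝ ι).Nonempty := by
  classical
  refine ⟨fun i => if i = Classical.arbitrary ι then 1 else 0, fun i => by positivity, by simp⟩

lemma exists_max [Nonempty ι] (x : E m) :
    ∃ α ∈ stdSimplex ℝ ι, ∀ β ∈ stdSimplex ℝ ι, Gfun L g xv fv β x ≤ Gfun L g xv fv α x := by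
  obtain ⟨α, hαS, hmax⟩ := (isCompact_stdSimplex ℝ ι).exists_isMaxOn simplex_nonempty
    (continuous_G (L := L) (g := g) (xv := xv) (fv := fv) x).continuousOn
  exact ⟨α, hαS, fun β hβ => hmax hβ⟩

lemma bdd_G (x : E m) :
    BddAbove (Set.range fun α : stdSimplex ℝ ι => Gfun L g xv fv α.1 x) := by
  have h := ((isCompact_stdSimplex ℝ ι).image_of_continuousOn
    (continuous_G (L := L) (g := g) (xv := xv) (fv := fv) x).continuousOn).bddAbove
  have : (Set.range fun α : stdSimplex ℝ ι => Gfun L g xv fv α.1 x)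
      = (fun α => Gfun L g xv fv α x) '' stdSimplex ℝ ι := by
    rw [show (fun α : stdSimplex ℝ ι => Gfun L g xv fv α.1 x)
      = (fun α => Gfun L g xv fv α x) ∘ Subtype.val from rfl, Set.range_comp,
      Subtype.range_coe]
  rwa [this]

lemma G_le_f [Nonempty ι] (hL : 0 < L) {α : ι → ℝ} (hα : α ∈ stdSimplex ℝ ι) (x : E m) :
    Gfun L g xv fv α x ≤ constructF L g xv fv x := by
  rw [constructF_eq hL]
  haveI : Nonempty (stdSimplex ℝ ι) := simplex_nonempty.to_subtype
  exact le_ciSup (bdd_G x) ⟨α, hα⟩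

lemma f_eq_max [Nonempty ι] (hL : 0 < L) {α : ι → ℝ} (hα : α ∈ stdSimplex ℝ ι) {x : E m}
    (hmax : ∀ β ∈ stdSimplex ℝ ι, Gfun L g xv fv β x ≤ Gfun L g xv fv α x) :
    constructF L g xv fv x = Gfun L g xv fv α x := by
  refine le_antisymm ?_ (G_le_f hL hα x)
  rw [constructF_eq hL]
  haveI : Nonempty (stdSimplex ℝ ι) := simplex_nonempty.to_subtype
  exact ciSup_le fun β => hmax β.1 β.2

lemma G_affine (α : ι → ℝ) (x y : E m) :
    Gfun L g xv fv α y = Gfun L g xv fv α x + inner ℝ (qvec g α) (y - x) := by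
  have h : (inner ℝ (qvec g α) (y - x) : ℝ)
      = inner ℝ y (qvec g α) - inner ℝ x (qvec g α) := by
    rw [inner_sub_right, real_inner_comm (qvec g α) y, real_inner_comm (qvec g α) x]
  unfold Gfun
  rw [h]
  ring

lemma qvec_midpoint (α β : ι → ℝ) :
    qvec g (fun i => (α i + β i) / 2) = (2⁻¹ : ℝ) • (qvec g α + qvec g β) := by
  unfold qvec
  rw [smul_add, Finset.smul_sum, Finset.smul_sum, ← Finset.sum_add_distrib]
  congr 1; funext i
  rw [smul_smul, smul_smul, ← add_smul]
  congr 1; ring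

lemma G_midpoint (hL : 0 < L) (α β : ι → ℝ) (x : E m) :
    Gfun L g xv fv (fun i => (α i + β i) / 2) x
      = (Gfun L g xv fv α x + Gfun L g xv fv β x) / 2
        + ‖qvec g α - qvec g β‖ ^ 2 / (8 * L) := by
  have hb : bval L g xv fv (fun i => (α i + β i) / 2)
      = (bval L g xv fv α + bval L g xv fv β) / 2 := by
    unfold bval
    rw [← Finset.sum_add_distrib, Finset.sum_div]
    congr 1; funext i; ring
  have hq := qvec_midpoint (g := g) α β
  unfold Gfun
  rw [hb, hq]
  have h1 : ‖qvec g α + qvec g β‖ ^ 2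
      = ‖qvec g α‖ ^ 2 + 2 * inner ℝ (qvec g α) (qvec g β) + ‖qvec g β‖ ^ 2 :=
    norm_add_sq_real _ _
  have h2 : ‖qvec g α - qvec g β‖ ^ 2
      = ‖qvec g α‖ ^ 2 - 2 * inner ℝ (qvec g α) (qvec g β) + ‖qvec g β‖ ^ 2 :=
    norm_sub_sq_real _ _
  rw [real_inner_smul_right, inner_add_right, norm_smul, Real.norm_eq_abs]
  rw [mul_pow, sq_abs]
  rw [h1, h2]
  field_simp
  ring

lemma sq_dist_le (hL : 0 < L) {α β : ι → ℝ} (hα : α ∈ stdSimplex ℝ ι)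
    (hβ : β ∈ stdSimplex ℝ ι) {x : E m}
    (hmax : ∀ γ ∈ stdSimplex ℝ ι, Gfun L g xv fv γ x ≤ Gfun L g xv fv α x) :
    ‖qvec g β - qvec g α‖ ^ 2 ≤ 4 * L * (Gfun L g xv fv α x - Gfun L g xv fv β x) := by
  have hmid : (fun i => (α i + β i) / 2) ∈ stdSimplex ℝ ι := by
    have := (convex_stdSimplex ℝ ι) hα hβ (by norm_num : (0:ℝ) ≤ 1/2)
      (by norm_num : (0:ℝ) ≤ 1/2) (by norm_num)
    convert this using 1
    funext i
    simp [Pi.smul_apply, smul_eq_mul]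
    ring
  have h1 := hmax _ hmid
  rw [G_midpoint hL α β x] at h1
  have h2 : ‖qvec g α - qvec g β‖ ^ 2 / (8 * L)
      ≤ (Gfun L g xv fv α x - Gfun L g xv fv β x) / 2 := by linarith
  rw [div_le_div_iff₀ (by positivity) (by norm_num)] at h2
  have : ‖qvec g β - qvec g α‖ = ‖qvec g α - qvec g β‖ := by rw [norm_sub_rev]
  rw [this]
  linarith

lemma qvec_norm_le {α : ι → ℝ} (hα : α ∈ stdSimplex ℝ ι) :
    ‖qvec g α‖ ≤ ∑ i, ‖g i‖ := by
  refine (norm_sum_le _ _).trans (Finset.sum_le_sum fun i _ => ?_)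
  rw [norm_smul, Real.norm_eq_abs, abs_of_nonneg (hα.1 i)]
  have h1 := (mem_Icc_of_mem_stdSimplex hα i).2
  have h2 : (0:ℝ) ≤ ‖g i‖ := norm_nonneg _
  nlinarith

lemma hasGradientAt_max [Nonempty ι] (hL : 0 < L) {α : ι → ℝ} (hα : α ∈ stdSimplex ℝ ι)
    {x : E m} (hmax : ∀ β ∈ stdSimplex ℝ ι, Gfun L g xv fv β x ≤ Gfun L g xv fv α x) :
    HasGradientAt (constructF L g xv fv) (qvec g α) x := by
  set M : ℝ := ∑ i, ‖g i‖ with hM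
  have hM0 : 0 ≤ M := Finset.sum_nonneg fun i _ => norm_nonneg _
  rw [hasGradientAt_iff_isLittleO, Asymptotics.isLittleO_iff]
  intro c hc
  have hδ : 0 < c ^ 2 / (8 * L * M + 1) := by positivity
  filter_upwards [Metric.ball_mem_nhds x hδ] with y hy
  rw [Metric.mem_ball, dist_eq_norm] at hy
  obtain ⟨β, hβS, hβmax⟩ := exists_max (L := L) (g := g) (xv := xv) (fv := fv) y
  have hfx : constructF L g xv fv x = Gfun L g xv fv α x := f_eq_max hL hα hmax
  have hfy : constructF L g xv fv y = Gfun L g xv fv β y := f_eq_max hL hβS hβmax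
  set r : ℝ := constructF L g xv fv y - constructF L g xv fv x - inner ℝ (qvec g α) (y - x)
    with hr
  have hlow : 0 ≤ r := by
    have h1 : Gfun L g xv fv α y ≤ constructF L g xv fv y := G_le_f hL hα y
    rw [G_affine α x y] at h1
    rw [hr, hfx]
    linarith
  have hup : r ≤ ‖qvec g β - qvec g α‖ * ‖y - x‖ := by
    have h1 : Gfun L g xv fv β x ≤ Gfun L g xv fv α x := hmax β hβS
    have h2 : Gfun L g xv fv β y = Gfun L g xv fv β x + inner ℝ (qvec g β) (y - x) :=
      G_affine β x y
    have h3 : r ≤ (inner ℝ (qvec g β) (y - x) : ℝ) - inner ℝ (qvec g α) (y - x) := by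
      rw [hr, hfy, hfx]; linarith
    have h4 : (inner ℝ (qvec g β) (y - x) : ℝ) - inner ℝ (qvec g α) (y - x)
        = (inner ℝ (qvec g β - qvec g α) (y - x) : ℝ) := (inner_sub_left _ _ _).symm
    rw [h4] at h3
    exact h3.trans (real_inner_le_norm _ _)
  have hGdiff : Gfun L g xv fv α x - Gfun L g xv fv β x ≤ 2 * M * ‖y - x‖ := by
    have h1 : Gfun L g xv fv α y ≤ Gfun L g xv fv β y := hβmax α hα
    rw [G_affine α x y, G_affine β x y] at h1
    have h2 : (inner ℝ (qvec g β) (y - x) : ℝ) - inner ℝ (qvec g α) (y - x) ≤ 2 * M * ‖y - x‖ := by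
      have h3 : (inner ℝ (qvec g β) (y - x) : ℝ) - inner ℝ (qvec g α) (y - x)
          = (inner ℝ (qvec g β - qvec g α) (y - x) : ℝ) := (inner_sub_left _ _ _).symm
      rw [h3]
      calc (inner ℝ (qvec g β - qvec g α) (y - x) : ℝ) ≤ ‖qvec g β - qvec g α‖ * ‖y - x‖ :=
            real_inner_le_norm _ _
        _ ≤ 2 * M * ‖y - x‖ := by
            apply mul_le_mul_of_nonneg_right _ (norm_nonneg _)
            calc ‖qvec g β - qvec g α‖ ≤ ‖qvec g β‖ + ‖qvec g α‖ := norm_sub_le _ _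
              _ ≤ 2 * M := by
                  have := qvec_norm_le (g := g) hα
                  have := qvec_norm_le (g := g) hβS
                  linarith
    linarith
  have hq2 : ‖qvec g β - qvec g α‖ ^ 2 ≤ 4 * L * (2 * M * ‖y - x‖) := by
    have h1 := sq_dist_le hL hα hβS hmax
    have h2 := mul_le_mul_of_nonneg_left hGdiff (by positivity : (0:ℝ) ≤ 4 * L)
    calc ‖qvec g β - qvec g α‖ ^ 2
        ≤ 4 * L * (Gfun L g xv fv α x - Gfun L g xv fv β x) := h1
      _ ≤ 4 * L * (2 * M * ‖y - x‖) := h2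
  have hr2 : r ^ 2 ≤ 8 * L * M * ‖y - x‖ * ‖y - x‖ ^ 2 := by
    have h1 : r ^ 2 ≤ (‖qvec g β - qvec g α‖ * ‖y - x‖) ^ 2 := by
      have := mul_nonneg (norm_nonneg (qvec g β - qvec g α)) (norm_nonneg (y - x))
      nlinarith
    calc r ^ 2 ≤ (‖qvec g β - qvec g α‖ * ‖y - x‖) ^ 2 := h1
      _ = ‖qvec g β - qvec g α‖ ^ 2 * ‖y - x‖ ^ 2 := by ring
      _ ≤ 4 * L * (2 * M * ‖y - x‖) * ‖y - x‖ ^ 2 := by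
          apply mul_le_mul_of_nonneg_right hq2 (by positivity)
      _ = 8 * L * M * ‖y - x‖ * ‖y - x‖ ^ 2 := by ring
  have hkey : 8 * L * M * ‖y - x‖ ≤ c ^ 2 := by
    have h1 : 8 * L * M * ‖y - x‖ ≤ 8 * L * M * (c ^ 2 / (8 * L * M + 1)) := by
      apply mul_le_mul_of_nonneg_left hy.le (by positivity)
    have h2 : 8 * L * M * (c ^ 2 / (8 * L * M + 1)) ≤ c ^ 2 := by
      rw [mul_div_assoc', div_le_iff₀ (by positivity)]
      nlinarith
    linarith
  have hfin : r ≤ c * ‖y - x‖ := by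
    have h5 : r ^ 2 ≤ (c * ‖y - x‖) ^ 2 := by nlinarith [norm_nonneg (y - x), sq_nonneg ‖y - x‖]
    have h6 := Real.sqrt_le_sqrt h5
    rwa [Real.sqrt_sq hlow, Real.sqrt_sq (by positivity)] at h6
  calc ‖constructF L g xv fv y - constructF L g xv fv x - inner ℝ (qvec g α) (y - x)‖
      = |r| := by rw [hr]; exact Real.norm_eq_abs _
    _ = r := abs_of_nonneg hlow
    _ ≤ c * ‖y - x‖ := hfin

lemma combo {κ : Type*} [Fintype κ] {m' : ℕ} (L : ℝ) (w : κ → ℝ) (hw0 : ∀ i, 0 ≤ w i)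
    (hw1 : ∑ i, w i = 1) (G : κ → E m') (v1 v2 : E m') (A1 A2 : ℝ)
    (h : ∀ i, A1 - 1 / L * (inner ℝ (G i) v1 : ℝ) ≤ A2 - 1 / L * (inner ℝ (G i) v2 : ℝ)) :
    A1 - 1 / L * (inner ℝ (∑ i, w i • G i) v1 : ℝ)
      ≤ A2 - 1 / L * (inner ℝ (∑ i, w i • G i) v2 : ℝ) := by
  rw [sum_inner, sum_inner]
  simp only [real_inner_smul_left]
  have e : ∀ (A : ℝ) (B : κ → ℝ),
      A - 1 / L * ∑ i, w i * B i = ∑ i, w i * (A - 1 / L * B i) := by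
    intro A B
    rw [eq_comm]
    calc ∑ i, w i * (A - 1 / L * B i)
        = ∑ i, (w i * A - 1 / L * (w i * B i)) := Finset.sum_congr rfl (by intros; ring)
      _ = (∑ i, w i) * A - 1 / L * ∑ i, w i * B i := by
          rw [Finset.sum_sub_distrib, ← Finset.sum_mul, Finset.mul_sum]
      _ = A - 1 / L * ∑ i, w i * B i := by rw [hw1, one_mul]
  rw [e A1, e A2]
  exact Finset.sum_le_sum fun i _ => mul_le_mul_of_nonneg_left (h i) (hw0 i)

end General

section Specific
variable {N : ℕ} {L : ℝ} {g xv : Option (Fin (N + 1)) → E (N + 1)}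
  {fv : Option (Fin (N + 1)) → ℝ} {a σ : Fin (N + 1) → ℝ}

lemma interp_o
    (hinterp : ∀ i j k : Fin (N + 1), (j : ℕ) < N → (j : ℕ) < (k : ℕ) →
      fv (some k) - (1 / L) * inner ℝ (g (some i)) (g (some k))
          + 1 / (2 * L) * ‖g (some k) - L • xv (some k)‖ ^ 2
          - L / 2 * ‖xv (some k)‖ ^ 2
        ≤ fv (some j) - (1 / L) * inner ℝ (g (some i)) (g (some j))
          + 1 / (2 * L) * ‖g (some j) - L • xv (some j)‖ ^ 2
          - L / 2 * ‖xv (some j)‖ ^ 2)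
    (hσ0 : ∀ i, 0 ≤ σ i) (hσ1 : ∑ i, σ i = 1)
    (hgs : g none = ∑ i, σ i • g (some i))
    (o : Option (Fin (N + 1))) {j k : Fin (N + 1)} (hjN : (j : ℕ) < N)
    (hjk : (j : ℕ) < (k : ℕ)) :
    Ftil L g xv fv (some k) - 1 / L * (inner ℝ (g o) (g (some k)) : ℝ)
      ≤ Ftil L g xv fv (some j) - 1 / L * (inner ℝ (g o) (g (some j)) : ℝ) := by
  have hsome : ∀ i : Fin (N + 1),
      Ftil L g xv fv (some k) - 1 / L * (inner ℝ (g (some i)) (g (some k)) : ℝ)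
        ≤ Ftil L g xv fv (some j) - 1 / L * (inner ℝ (g (some i)) (g (some j)) : ℝ) := by
    intro i
    have := hinterp i j k hjN hjk
    unfold Ftil
    linarith
  match o with
  | some i => exact hsome i
  | none =>
    rw [hgs]
    exact combo L σ hσ0 hσ1 (fun i => g (some i)) _ _ _ _ hsome

lemma interp_q
    (hinterp : ∀ i j k : Fin (N + 1), (j : ℕ) < N → (j : ℕ) < (k : ℕ) →
      fv (some k) - (1 / L) * inner ℝ (g (some i)) (g (some k))
          + 1 / (2 * L) * ‖g (some k) - L • xv (some k)‖ ^ 2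
          - L / 2 * ‖xv (some k)‖ ^ 2
        ≤ fv (some j) - (1 / L) * inner ℝ (g (some i)) (g (some j))
          + 1 / (2 * L) * ‖g (some j) - L • xv (some j)‖ ^ 2
          - L / 2 * ‖xv (some j)‖ ^ 2)
    (hσ0 : ∀ i, 0 ≤ σ i) (hσ1 : ∑ i, σ i = 1)
    (hgs : g none = ∑ i, σ i • g (some i))
    {β : Option (Fin (N + 1)) → ℝ} (hβ : β ∈ stdSimplex ℝ (Option (Fin (N + 1))))
    {j k : Fin (N + 1)} (hjN : (j : ℕ) < N) (hjk : (j : ℕ) < (k : ℕ)) :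
    Ftil L g xv fv (some k) - 1 / L * (inner ℝ (qvec g β) (g (some k)) : ℝ)
      ≤ Ftil L g xv fv (some j) - 1 / L * (inner ℝ (qvec g β) (g (some j)) : ℝ) := by
  unfold qvec
  exact combo L β hβ.1 hβ.2 g _ _ _ _ fun o => interp_o hinterp hσ0 hσ1 hgs o hjN hjk

/-- Redistribute the weight of `⋆` over the other vertices. -/
def tiltW (σ : Fin (N + 1) → ℝ) (α : Option (Fin (N + 1)) → ℝ) :
    Option (Fin (N + 1)) → ℝ :=
  fun o => o.elim 0 fun j => α (some j) + α none * σ j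

lemma tilt_mem (hσ0 : ∀ i, 0 ≤ σ i) (hσ1 : ∑ i, σ i = 1)
    {α : Option (Fin (N + 1)) → ℝ} (hα : α ∈ stdSimplex ℝ (Option (Fin (N + 1)))) :
    tiltW σ α ∈ stdSimplex ℝ (Option (Fin (N + 1))) := by
  constructor
  · intro o
    match o with
    | none => exact le_refl 0
    | some j => exact add_nonneg (hα.1 (some j)) (mul_nonneg (hα.1 none) (hσ0 j))
  · have h1 := hα.2
    rw [Fintype.sum_option] at h1
    rw [Fintype.sum_option]
    simp only [tiltW, Option.elim]
    rw [Finset.sum_add_distrib, ← Finset.mul_sum, hσ1, mul_one]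
    linarith

lemma tilt_qvec (hgs : g none = ∑ i, σ i • g (some i))
    (α : Option (Fin (N + 1)) → ℝ) : qvec g (tiltW σ α) = qvec g α := by
  unfold qvec
  rw [Fintype.sum_option, Fintype.sum_option]
  simp only [tiltW, Option.elim, zero_smul, zero_add]
  rw [hgs, Finset.smul_sum, ← Finset.sum_add_distrib]
  refine Finset.sum_congr rfl fun i _ => ?_
  rw [add_smul, smul_smul]
  exact add_comm _ _

lemma tilt_bval (hfs : ∑ i, σ i * (fv (some i) + 1 / (2 * L) * ‖g (some i) - L • xv (some i)‖ ^ 2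
            - L / 2 * ‖xv (some i)‖ ^ 2)
         = fv none + 1 / (2 * L) * ‖g none - L • xv none‖ ^ 2 - L / 2 * ‖xv none‖ ^ 2)
    (α : Option (Fin (N + 1)) → ℝ) :
    bval L g xv fv (tiltW σ α) = bval L g xv fv α := by
  have hfs' : ∑ i, σ i * Ftil L g xv fv (some i) = Ftil L g xv fv none := hfs
  rw [bval_eq_sum_Ftil, bval_eq_sum_Ftil, Fintype.sum_option, Fintype.sum_option]
  simp only [tiltW, Option.elim, zero_mul, zero_add]
  rw [show (∑ i, (α (some i) + α none * σ i) * Ftil L g xv fv (some i))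
      = ∑ i, (α (some i) * Ftil L g xv fv (some i) + α none * (σ i * Ftil L g xv fv (some i)))
      from Finset.sum_congr rfl fun i _ => by ring]
  rw [Finset.sum_add_distrib, ← Finset.mul_sum, hfs']
  ring

lemma tilt_G (hgs : g none = ∑ i, σ i • g (some i))
    (hfs : ∑ i, σ i * (fv (some i) + 1 / (2 * L) * ‖g (some i) - L • xv (some i)‖ ^ 2
            - L / 2 * ‖xv (some i)‖ ^ 2)
         = fv none + 1 / (2 * L) * ‖g none - L • xv none‖ ^ 2 - L / 2 * ‖xv none‖ ^ 2)
    (α : Option (Fin (N + 1)) → ℝ) (y : E (N + 1)) :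
    Gfun L g xv fv (tiltW σ α) y = Gfun L g xv fv α y := by
  unfold Gfun
  rw [tilt_qvec hgs, tilt_bval hfs]

lemma support_lemma (hL : 0 < L) (ha : ∀ i, 0 < a i)
    (hg : ∀ i : Fin (N + 1), g (some i) = (L * a i) • unitVec (N + 1) i)
    (hinterp : ∀ i j k : Fin (N + 1), (j : ℕ) < N → (j : ℕ) < (k : ℕ) →
      fv (some k) - (1 / L) * inner ℝ (g (some i)) (g (some k))
          + 1 / (2 * L) * ‖g (some k) - L • xv (some k)‖ ^ 2
          - L / 2 * ‖xv (some k)‖ ^ 2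
        ≤ fv (some j) - (1 / L) * inner ℝ (g (some i)) (g (some j))
          + 1 / (2 * L) * ‖g (some j) - L • xv (some j)‖ ^ 2
          - L / 2 * ‖xv (some j)‖ ^ 2)
    (hσ0 : ∀ i, 0 ≤ σ i) (hσ1 : ∑ i, σ i = 1)
    (hgs : g none = ∑ i, σ i • g (some i))
    {i : ℕ} {x : E (N + 1)} (hx : x ∈ coordSpan (N + 1) i)
    {α : Option (Fin (N + 1)) → ℝ} (hαS : α ∈ stdSimplex ℝ (Option (Fin (N + 1))))
    (hmax : ∀ β ∈ stdSimplex ℝ (Option (Fin (N + 1))),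
      Gfun L g xv fv β x ≤ Gfun L g xv fv α x) :
    ∀ k : Fin (N + 1), i < (k : ℕ) → α (some k) = 0 := by
  classical
  intro k hk
  by_contra ht
  have htpos : 0 < α (some k) := (hαS.1 (some k)).lt_of_ne (Ne.symm ht)
  set t := α (some k) with htdef
  have hiN : i < N + 1 := lt_trans hk k.isLt
  set j : Fin (N + 1) := ⟨i, hiN⟩ with hjdef
  have hjN : (j : ℕ) < N := by
    have := k.isLt
    simp only [hjdef]
    omega
  have hjk : (j : ℕ) < (k : ℕ) := hk
  have hjke : j ≠ k := Fin.ne_of_lt (Fin.lt_def.mpr hjk)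
  have hjke' : (some j : Option (Fin (N + 1))) ≠ some k := by simpa using hjke
  set β : Option (Fin (N + 1)) → ℝ :=
    fun o => α o + (if o = some j then t else 0) - (if o = some k then t else 0) with hβdef
  have hβS : β ∈ stdSimplex ℝ (Option (Fin (N + 1))) := by
    constructor
    · intro o
      have h0 := hαS.1 o
      have hβo : β o = α o + (if o = some j then t else 0)
          - (if o = some k then t else 0) := rfl
      rw [hβo]
      split_ifs with h1 h2 h3
      · exact absurd (h1.symm.trans h2) hjke'
      · linarith [htpos.le]
      · subst h3
        linarith [htdef.le, htdef.ge]
      · linarith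
    · simp only [hβdef]
      rw [Finset.sum_sub_distrib, Finset.sum_add_distrib,
        Finset.sum_ite_eq' Finset.univ (some j) (fun _ => t),
        Finset.sum_ite_eq' Finset.univ (some k) (fun _ => t)]
      simp [hαS.2]
  have hqβ : qvec g β = qvec g α + t • g (some j) - t • g (some k) := by
    unfold qvec
    simp only [hβdef, sub_smul, add_smul, ite_smul, zero_smul]
    rw [Finset.sum_sub_distrib, Finset.sum_add_distrib,
      Finset.sum_ite_eq' Finset.univ (some j) (fun o => t • g o),
      Finset.sum_ite_eq' Finset.univ (some k) (fun o => t • g o)]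
    simp
  have hbβ : bval L g xv fv β
      = bval L g xv fv α + t * Ftil L g xv fv (some j) - t * Ftil L g xv fv (some k) := by
    rw [bval_eq_sum_Ftil, bval_eq_sum_Ftil]
    simp only [hβdef, sub_mul, add_mul, ite_mul, zero_mul]
    rw [Finset.sum_sub_distrib, Finset.sum_add_distrib,
      Finset.sum_ite_eq' Finset.univ (some j) (fun o => t * Ftil L g xv fv o)]
    rw [show (∑ o : Option (Fin (N + 1)), if o = some k then t * Ftil L g xv fv o else 0)
        = t * Ftil L g xv fv (some k) by
      rw [Finset.sum_ite_eq' Finset.univ (some k) (fun o => t * Ftil L g xv fv o)]; simp]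
    simp
  -- inner ℝ products with x vanish
  have hxcoord := (mem_coordSpan_iff i x).1 hx
  have hxg : ∀ l : Fin (N + 1), i ≤ (l : ℕ) → (inner ℝ x (g (some l)) : ℝ) = 0 := by
    intro l hl
    rw [hg l, real_inner_smul_right, unitVec_eq_single]
    rw [show (inner ℝ x (EuclideanSpace.single l (1:ℝ)) : ℝ) = x l by
      rw [EuclideanSpace.inner_single_right]; simp]
    rw [hxcoord l hl, mul_zero]
  have hxj : (inner ℝ x (g (some j)) : ℝ) = 0 := hxg j (le_refl i)
  have hxk : (inner ℝ x (g (some k)) : ℝ) = 0 := hxg k (le_of_lt hk)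
  -- positivity of the direction
  have hv : g (some j) - g (some k) ≠ 0 := by
    intro hv0
    have h1 : (g (some j) - g (some k)) j = 0 := by rw [hv0]; rfl
    rw [show (g (some j) - g (some k)) j = g (some j) j - g (some k) j from rfl] at h1
    rw [hg j, hg k] at h1
    rw [show ((L * a j) • unitVec (N + 1) (j:ℕ)) j = (L * a j) * unitVec (N + 1) (j:ℕ) j
      from rfl] at h1
    rw [show ((L * a k) • unitVec (N + 1) (k:ℕ)) j = (L * a k) * unitVec (N + 1) (k:ℕ) j
      from rfl] at h1
    rw [unitVec_apply j j, unitVec_apply k j, if_pos rfl, if_neg hjke] at h1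
    have := ha j
    nlinarith
  have hvpos : 0 < ‖g (some j) - g (some k)‖ ^ 2 := by
    have := norm_pos_iff.mpr hv
    positivity
  -- interpolation at β
  have hint := interp_q hinterp hσ0 hσ1 hgs hβS hjN hjk
  -- algebraic expansion
  have hqα : qvec g α = qvec g β - t • (g (some j) - g (some k)) := by
    rw [hqβ, smul_sub]
    abel
  have hnorm : ‖qvec g α‖ ^ 2 = ‖qvec g β‖ ^ 2
      - 2 * (t * ((inner ℝ (qvec g β) (g (some j)) : ℝ) - (inner ℝ (qvec g β) (g (some k)) : ℝ)))
      + t ^ 2 * ‖g (some j) - g (some k)‖ ^ 2 := by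
    rw [hqα, norm_sub_sq_real, real_inner_smul_right, inner_sub_right, norm_smul, mul_pow,
      Real.norm_eq_abs, sq_abs]
  have hinnerx : (inner ℝ x (qvec g α) : ℝ) = inner ℝ x (qvec g β) - t * (0 - 0) := by
    rw [hqα, inner_sub_right, real_inner_smul_right, inner_sub_right, hxj, hxk]
  have hbα : bval L g xv fv α
      = bval L g xv fv β - t * Ftil L g xv fv (some j) + t * Ftil L g xv fv (some k) := by
    rw [hbβ]; ring
  have hdiff : Gfun L g xv fv β x - Gfun L g xv fv α x
      = t * ((Ftil L g xv fv (some j) - 1 / L * (inner ℝ (qvec g β) (g (some j)) : ℝ))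
          - (Ftil L g xv fv (some k) - 1 / L * (inner ℝ (qvec g β) (g (some k)) : ℝ)))
        + t ^ 2 * ‖g (some j) - g (some k)‖ ^ 2 / (2 * L) := by
    unfold Gfun
    rw [hnorm, hinnerx, hbα]
    field_simp
    ring
  have hle := hmax β hβS
  have hbr : 0 ≤ (Ftil L g xv fv (some j) - 1 / L * (inner ℝ (qvec g β) (g (some j)) : ℝ))
      - (Ftil L g xv fv (some k) - 1 / L * (inner ℝ (qvec g β) (g (some k)) : ℝ)) := by
    linarith
  have hpos2 : 0 < t ^ 2 * ‖g (some j) - g (some k)‖ ^ 2 / (2 * L) :=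
    div_pos (mul_pos (pow_pos htpos 2) hvpos) (by linarith)
  have hbig : 0 ≤ t * ((Ftil L g xv fv (some j)
        - 1 / L * (inner ℝ (qvec g β) (g (some j)) : ℝ))
      - (Ftil L g xv fv (some k) - 1 / L * (inner ℝ (qvec g β) (g (some k)) : ℝ))) :=
    mul_nonneg htpos.le hbr
  linarith

lemma mem_coneSet_iff {N : ℕ} {L : ℝ} {g : Option (Fin (N + 1)) → E (N + 1)}
    {a : Fin (N + 1) → ℝ} (hL : 0 < L) (ha : ∀ i, 0 < a i)
    (hg : ∀ i : Fin (N + 1), g (some i) = (L * a i) • unitVec (N + 1) i)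
    (s y : E (N + 1)) :
    y ∈ coneSet (fun k => g (some k)) s ↔ ∀ k, s k ≤ y k := by
  have hsum : ∀ (c : Fin (N + 1) → ℝ) (l : Fin (N + 1)),
      (∑ k, c k • g (some k)) l = c l * (L * a l) := by
    intro c l
    rw [sum_apply']
    rw [show (∑ k, (c k • g (some k)) l) = ∑ k, c k * ((L * a k) * unitVec (N+1) (k:ℕ) l) by
      refine Finset.sum_congr rfl fun k _ => ?_
      rw [hg k]; rfl]
    simp only [unitVec_apply, mul_ite, mul_one, mul_zero]
    rw [Finset.sum_ite_eq Finset.univ l (fun k => c k * (L * a k))]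
    simp
  constructor
  · rintro ⟨c, hc0, rfl⟩ k
    rw [show (s + ∑ k, c k • g (some k)) k = s k + (∑ k', c k' • g (some k')) k from rfl,
      hsum c k]
    have h2 : 0 ≤ c k * (L * a k) := mul_nonneg (hc0 k) (le_of_lt (mul_pos hL (ha k)))
    linarith
  · intro h
    refine ⟨fun k => (y k - s k) / (L * a k), fun k => ?_, ?_⟩
    · exact div_nonneg (sub_nonneg.2 (h k)) (le_of_lt (mul_pos hL (ha k)))
    · ext l
      rw [show (s + ∑ k, ((y k - s k) / (L * a k)) • g (some k)) l
          = s l + (∑ k, ((y k - s k) / (L * a k)) • g (some k)) l from rfl, hsum]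
      rw [div_mul_cancel₀ _ (ne_of_gt (mul_pos hL (ha l)))]
      ring
  
end Specific

set_option maxHeartbeats 2000000 in
/-- Lemma 3, double-function semi-interpolated zero-chain construction.
Indices `some i` for `i ∈ [0:N]` and `none` for `⋆`.  Under conditions (i)–(v) on the
data `(x_i, g_i, f_i)_{i ∈ I}`, the function `f = constructF` and the indicator `h` of
`C = x_⋆ + cone{g_0, …, g_N}` satisfy the zero-chain properties: for `i ∈ [0:N]` and
`γ > 0`, `x ∈ span{e_0,…,e_{i-1}}` implies `∇f(x) ∈ span{e_0,…,e_i}` and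
`prox_{γh}(x) = prox_h(x) ∈ span{e_0,…,e_{i-1}}`; moreover `f ≥ f_N` on
`span{e_0,…,e_{N-1}}`. -/
theorem double_function_zero_chain
    (N : ℕ) (hN : 1 ≤ N) (L : ℝ) (hL : 0 < L)
    (g xv : Option (Fin (N + 1)) → E (N + 1)) (fv : Option (Fin (N + 1)) → ℝ)
    (a : Fin (N + 1) → ℝ) (ha : ∀ i, 0 < a i)
    (hg : ∀ i : Fin (N + 1), g (some i) = (L * a i) • unitVec (N + 1) i)
    (hx0 : xv (some 0) = 0)
    (hxi : ∀ i : Fin (N + 1), ∃ c : Fin (N + 1) → ℝ,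
      (∀ k, 0 ≤ c k) ∧ (∀ k : Fin (N + 1), ¬((k : ℕ) < (i : ℕ)) → c k = 0) ∧
      xv (some i) = -(∑ k, c k • unitVec (N + 1) k))
    (hxs : ∃ c : Fin (N + 1) → ℝ, (∀ k, 0 ≤ c k) ∧
      xv none = -(∑ k, c k • unitVec (N + 1) k))
    (hinterp : ∀ i j k : Fin (N + 1), (j : ℕ) < N → (j : ℕ) < (k : ℕ) →
      fv (some k) - (1 / L) * inner ℝ (g (some i)) (g (some k))
          + 1 / (2 * L) * ‖g (some k) - L • xv (some k)‖ ^ 2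
          - L / 2 * ‖xv (some k)‖ ^ 2
        ≤ fv (some j) - (1 / L) * inner ℝ (g (some i)) (g (some j))
          + 1 / (2 * L) * ‖g (some j) - L • xv (some j)‖ ^ 2
          - L / 2 * ‖xv (some j)‖ ^ 2)
    (σ : Fin (N + 1) → ℝ) (hσ0 : ∀ i, 0 ≤ σ i) (hσ1 : ∑ i, σ i = 1)
    (hgs : g none = ∑ i, σ i • g (some i))
    (hfs : ∑ i, σ i * (fv (some i) + 1 / (2 * L) * ‖g (some i) - L • xv (some i)‖ ^ 2
            - L / 2 * ‖xv (some i)‖ ^ 2)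
         = fv none + 1 / (2 * L) * ‖g none - L • xv none‖ ^ 2 - L / 2 * ‖xv none‖ ^ 2) :
    (∀ i : ℕ, i ≤ N → ∀ x : E (N + 1), x ∈ coordSpan (N + 1) i →
      gradient (constructF L g xv fv) x ∈ coordSpan (N + 1) (i + 1)) ∧
    (∀ i : ℕ, i ≤ N → ∀ x : E (N + 1), x ∈ coordSpan (N + 1) i →
      ∀ γ : ℝ, 0 < γ → ∀ p : E (N + 1),
        IsProx (indicatorE (coneSet (fun k => g (some k)) (xv none))) γ x p →
        IsProx (indicatorE (coneSet (fun k => g (some k)) (xv none))) 1 x p ∧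
        p ∈ coordSpan (N + 1) i) ∧
    (∀ x : E (N + 1), x ∈ coordSpan (N + 1) N →
      fv (some (Fin.last N)) ≤ constructF L g xv fv x) := by
  classical
  refine ⟨?_, ?_, ?_⟩
  · -- Part 1 : gradients stay in the span
    intro i hi x hx
    obtain ⟨α, hαS, hmax⟩ := exists_max (L := L) (g := g) (xv := xv) (fv := fv) x
    rw [(hasGradientAt_max hL hαS hmax).gradient]
    have hα'S := tilt_mem hσ0 hσ1 hαS
    have hmax' : ∀ β ∈ stdSimplex ℝ (Option (Fin (N + 1))),
        Gfun L g xv fv β x ≤ Gfun L g xv fv (tiltW σ α) x := by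
      intro β hβ
      rw [tilt_G hgs hfs α x]
      exact hmax β hβ
    have hsupp := support_lemma hL ha hg hinterp hσ0 hσ1 hgs hx hα'S hmax'
    rw [← tilt_qvec (σ := σ) hgs α]
    unfold qvec
    rw [Fintype.sum_option]
    apply Submodule.add_mem
    · rw [show tiltW σ α none = 0 from rfl, zero_smul]
      exact Submodule.zero_mem _
    · apply Submodule.sum_mem
      intro l _
      by_cases hl : (l : ℕ) < i + 1
      · apply Submodule.smul_mem
        rw [hg l]
        exact Submodule.smul_mem _ _ (Submodule.subset_span ⟨(l : ℕ), hl, rfl⟩)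
      · rw [hsupp l (by omega), zero_smul]
        exact Submodule.zero_mem _
  · -- Part 2 : the prox
    intro i hi x hx γ hγ p hprox
    obtain ⟨c, hc0, hsdef⟩ := hxs
    have hciff := mem_coneSet_iff hL ha hg (xv none)
    have hsnp : ∀ k, xv none k ≤ 0 := by
      intro k
      rw [hsdef]
      rw [show (-(∑ k', c k' • unitVec (N + 1) (k' : ℕ)) : E (N + 1)) k
          = -((∑ k', c k' • unitVec (N + 1) (k' : ℕ)) k) from rfl]
      rw [sum_apply']
      rw [show (∑ k', (c k' • unitVec (N + 1) (k' : ℕ)) k)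
          = ∑ k', c k' * (if k = k' then 1 else 0) from
        Finset.sum_congr rfl fun k' _ => by rw [show (c k' • unitVec (N + 1) (k' : ℕ)) k
          = c k' * unitVec (N + 1) (k' : ℕ) k from rfl, unitVec_apply]]
      simp only [mul_ite, mul_one, mul_zero]
      rw [Finset.sum_ite_eq Finset.univ k c]
      simp only [Finset.mem_univ, if_true]
      linarith [hc0 k]
    have hxc := (mem_coordSpan_iff i x).1 hx
    set p₀ : E (N + 1) := (WithLp.toLp 2 (fun k => max (x k) (xv none k)) : E (N + 1)) with hp₀def
    have hp₀C : p₀ ∈ coneSet (fun k => g (some k)) (xv none) :=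
      (hciff p₀).2 fun k => le_max_right _ _
    have hp₀span : p₀ ∈ coordSpan (N + 1) i := by
      rw [mem_coordSpan_iff]
      intro l hl
      show max (x l) (xv none l) = 0
      rw [hxc l hl]
      exact max_eq_left (hsnp l)
    have hminsq : ∀ w : E (N + 1), (∀ k, xv none k ≤ w k) → ‖p₀ - x‖ ^ 2 ≤ ‖w - x‖ ^ 2 := by
      intro w hw
      rw [normsq_eq, normsq_eq]
      apply Finset.sum_le_sum
      intro l _
      rw [show (p₀ - x) l = p₀ l - x l from rfl, show (w - x) l = w l - x l from rfl]
      rw [show p₀ l = max (x l) (xv none l) from rfl]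
      rcases le_total (xv none l) (x l) with h | h
      · rw [max_eq_left h, sub_self]
        simpa using sq_nonneg (w l - x l)
      · rw [max_eq_right h]
        have h1 : 0 ≤ xv none l - x l := by linarith
        have h2 : xv none l - x l ≤ w l - x l := by linarith [hw l]
        exact pow_le_pow_left₀ h1 h2 2
    have hpC : p ∈ coneSet (fun k => g (some k)) (xv none) := by
      by_contra hp
      have h := hprox p₀
      simp only [indicatorE, if_neg hp, if_pos hp₀C, zero_add] at h
      rw [EReal.top_add_coe] at h
      exact (EReal.coe_lt_top _).not_ge h
    have hmin : ∀ w : E (N + 1), w ∈ coneSet (fun k => g (some k)) (xv none) →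
        ‖p - x‖ ^ 2 ≤ ‖w - x‖ ^ 2 := by
      intro w hw
      have h := hprox w
      simp only [indicatorE, if_pos hpC, if_pos hw, zero_add] at h
      rw [EReal.coe_le_coe_iff] at h
      have h2γ : (0 : ℝ) < 2 * γ := by linarith
      have h2 := mul_le_mul_of_nonneg_right h (le_of_lt h2γ)
      rwa [div_mul_cancel₀ _ (ne_of_gt h2γ), div_mul_cancel₀ _ (ne_of_gt h2γ)] at h2
    have hpp : p = p₀ := by
      have h1 := hmin p₀ hp₀C
      have h2 := hminsq p ((hciff p).1 hpC)
      have hmC : ((2⁻¹ : ℝ) • (p + p₀)) ∈ coneSet (fun k => g (some k)) (xv none) := by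
        rw [hciff]
        intro k
        have ha1 := (hciff p).1 hpC k
        have ha2 : xv none k ≤ p₀ k := le_max_right _ _
        rw [show ((2⁻¹ : ℝ) • (p + p₀)) k = 2⁻¹ * (p k + p₀ k) from rfl]
        linarith
      have h3 := hmin _ hmC
      have hmx : (2⁻¹ : ℝ) • (p + p₀) - x = (2⁻¹ : ℝ) • ((p - x) + (p₀ - x)) := by
        rw [smul_add, smul_add]
        rw [show p - x = p - x from rfl]
        module
      have hiden : ‖(2⁻¹ : ℝ) • (p + p₀) - x‖ ^ 2
          = (‖p - x‖ ^ 2 + ‖p₀ - x‖ ^ 2) / 2 - ‖p - p₀‖ ^ 2 / 4 := by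
        rw [hmx, norm_smul, mul_pow, Real.norm_eq_abs, sq_abs]
        have e1 : ‖(p - x) + (p₀ - x)‖ ^ 2
            = ‖p - x‖ ^ 2 + 2 * inner ℝ (p - x) (p₀ - x) + ‖p₀ - x‖ ^ 2 :=
          norm_add_sq_real _ _
        have e2 : ‖p - p₀‖ ^ 2
            = ‖p - x‖ ^ 2 - 2 * inner ℝ (p - x) (p₀ - x) + ‖p₀ - x‖ ^ 2 := by
          rw [show p - p₀ = (p - x) - (p₀ - x) by abel]
          exact norm_sub_sq_real _ _
        rw [e1, e2]
        ring
      have h4 : ‖p - p₀‖ ^ 2 ≤ 0 := by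
        rw [hiden] at h3
        linarith
      have h5 : ‖p - p₀‖ = 0 := by nlinarith [norm_nonneg (p - p₀)]
      exact sub_eq_zero.1 (norm_eq_zero.1 h5)
    constructor
    · intro w
      by_cases hw : w ∈ coneSet (fun k => g (some k)) (xv none)
      · simp only [indicatorE, if_pos hpC, if_pos hw, zero_add, EReal.coe_le_coe_iff]
        have h := hmin w hw
        have h2 : (0 : ℝ) < 2 * 1 := by norm_num
        rw [div_le_div_iff₀ h2 h2]
        nlinarith
      · simp only [indicatorE, if_neg hw, if_pos hpC, zero_add]
        rw [EReal.top_add_coe]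
        exact le_top
    · rw [hpp]
      exact hp₀span
  · -- Part 3 : lower bound on the last subspace
    intro x hx
    set δα : Option (Fin (N + 1)) → ℝ := fun o => if o = some (Fin.last N) then 1 else 0
      with hδ
    have hδS : δα ∈ stdSimplex ℝ (Option (Fin (N + 1))) := by
      constructor
      · intro o
        by_cases h : o = some (Fin.last N) <;> simp [hδ, h]
      · rw [hδ, Finset.sum_ite_eq' Finset.univ (some (Fin.last N)) (fun _ => (1 : ℝ))]
        simp
    have hle := G_le_f (L := L) (g := g) (xv := xv) (fv := fv) hL hδS x
    have hq : qvec g δα = g (some (Fin.last N)) := by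
      unfold qvec
      rw [show (∑ o, δα o • g o)
          = ∑ o, (if o = some (Fin.last N) then g o else 0) from
        Finset.sum_congr rfl fun o _ => by
          by_cases h : o = some (Fin.last N) <;> simp [hδ, h]]
      rw [Finset.sum_ite_eq' Finset.univ (some (Fin.last N)) g]
      simp
    have hb : bval L g xv fv δα = Ftil L g xv fv (some (Fin.last N)) := by
      rw [bval_eq_sum_Ftil]
      rw [show (∑ o, δα o * Ftil L g xv fv o)
          = ∑ o, (if o = some (Fin.last N) then Ftil L g xv fv o else 0) from
        Finset.sum_congr rfl fun o _ => by
          by_cases h : o = some (Fin.last N) <;> simp [hδ, h]]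
      rw [Finset.sum_ite_eq' Finset.univ (some (Fin.last N)) (Ftil L g xv fv)]
      simp
    have hxc := (mem_coordSpan_iff N x).1 hx
    have hxg : (inner ℝ x (g (some (Fin.last N))) : ℝ) = 0 := by
      rw [hg, real_inner_smul_right, unitVec_eq_single]
      rw [show (inner ℝ x (EuclideanSpace.single (Fin.last N) (1 : ℝ)) : ℝ) = x (Fin.last N) by
        rw [EuclideanSpace.inner_single_right]; simp]
      rw [hxc (Fin.last N) (by simp), mul_zero]
    obtain ⟨c, hc0, hcz, hxN⟩ := hxi (Fin.last N)
    have hgx : (inner ℝ (g (some (Fin.last N))) (xv (some (Fin.last N))) : ℝ) = 0 := by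
      rw [hg, real_inner_smul_left, unitVec_eq_single]
      rw [show (inner ℝ (EuclideanSpace.single (Fin.last N) (1 : ℝ))
            (xv (some (Fin.last N))) : ℝ) = xv (some (Fin.last N)) (Fin.last N) by
        rw [EuclideanSpace.inner_single_left]; simp]
      have hz : xv (some (Fin.last N)) (Fin.last N) = 0 := by
        rw [hxN]
        rw [show (-(∑ k, c k • unitVec (N + 1) (k : ℕ)) : E (N + 1)) (Fin.last N)
            = -((∑ k, c k • unitVec (N + 1) (k : ℕ)) (Fin.last N)) from rfl, _root_.sum_apply']
        rw [show (∑ k, (c k • unitVec (N + 1) (k : ℕ)) (Fin.last N))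
            = ∑ k, c k * (if (Fin.last N) = k then 1 else 0) from
          Finset.sum_congr rfl fun k _ => by
            rw [show (c k • unitVec (N + 1) (k : ℕ)) (Fin.last N)
              = c k * unitVec (N + 1) (k : ℕ) (Fin.last N) from rfl, unitVec_apply]]
        simp only [mul_ite, mul_one, mul_zero]
        rw [Finset.sum_ite_eq Finset.univ (Fin.last N) c]
        simp [hcz (Fin.last N) (by simp)]
      rw [hz, mul_zero]
    have hnorm : ‖g (some (Fin.last N)) - L • xv (some (Fin.last N))‖ ^ 2
        = ‖g (some (Fin.last N))‖ ^ 2 + L ^ 2 * ‖xv (some (Fin.last N))‖ ^ 2 := by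
      rw [norm_sub_sq_real, real_inner_smul_right, hgx, norm_smul, Real.norm_eq_abs,
        abs_of_pos hL, mul_pow]
      ring
    have hGval : Gfun L g xv fv δα x = fv (some (Fin.last N)) := by
      unfold Gfun Ftil at *
      rw [hq, hb, hxg, hnorm]
      field_simp
      ring
    rw [hGval] at hle
    exact hle


end
end

section
/- Let I = {0,1,…,N,⋆}, L > 0, and x_i, g_i ∈ ℝ^{N+1}, f_i ∈ ℝ for i ∈ I. Define v(x,α) = (L/2)‖x‖² − (L/2)‖x − (1/L)Σ_{i∈I'} α_i g_i‖² + Σ_{i∈I'} α_i ( f_i + (1/2L)‖g_i − L x_i‖² − (L/2)‖x_i‖² ) where I' is the support of α. Let f(x) = max_{α ∈ Δ_I} v(x,α) and f̃(x) = max over the simplex Δ_{I∖{⋆}} of the same expression indexed only by {0,…,N}. If g_⋆ = Σ_{i=0}^N σ_i g_i for some σ_i ≥ 0 with Σ_{i=0}^N σ_i = 1, and Σ_{i=0}^N σ_i ( f_i + (1/2L)‖g_i − L x_i‖² − (L/2)‖x_i‖² ) = f_⋆ + (1/2L)‖g_⋆ − L x_⋆‖² − (L/2)‖x_⋆‖²,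 then f(x) = f̃(x) for all x ∈ ℝ^{N+1}. -/
open Finset

noncomputable section

/-- Auxiliary: the range of the value function over the full simplex equals its range over
the restricted simplex, given the convex-combination compatibility at `⋆`. -/
lemma range_eq_aux' (N : ℕ) (σ : Fin (N + 1) → ℝ) (hσ0 : ∀ i, 0 ≤ σ i)
    (hσ1 : ∑ i, σ i = 1) {E' : Type*} [AddCommMonoid E'] [Module ℝ E']
    (G : Option (Fin (N + 1)) → E') (C : Option (Fin (N + 1)) → ℝ)
    (hG : G none = ∑ i, σ i • G (some i)) (hC : C none = ∑ i, σ i * C (some i))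
    (F : E' → ℝ → ℝ) :
    Set.range (fun α : stdSimplex ℝ (Option (Fin (N + 1))) =>
        F (∑ i, α.1 i • G i) (∑ i, α.1 i * C i))
      = Set.range (fun β : stdSimplex ℝ (Fin (N + 1)) =>
        F (∑ i, β.1 i • G (some i)) (∑ i, β.1 i * C (some i))) := by
  apply Set.Subset.antisymm
  · rintro _ ⟨α, rfl⟩
    obtain ⟨h0, h1⟩ := α.2
    refine ⟨⟨fun i => α.1 (some i) + α.1 none * σ i, fun i =>
      add_nonneg (h0 _) (mul_nonneg (h0 none) (hσ0 i)), ?_⟩, ?_⟩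
    · have := h1
      rw [Fintype.sum_option] at this
      simp only [Finset.sum_add_distrib, ← Finset.mul_sum, hσ1, mul_one]
      linarith
    · have hvec : ∑ i, (α.1 (some i) + α.1 none * σ i) • G (some i)
          = ∑ i : Option (Fin (N + 1)), α.1 i • G i := by
        rw [Fintype.sum_option, hG]
        simp only [add_smul, Finset.sum_add_distrib, mul_smul, ← Finset.smul_sum]
        rw [add_comm]
      have hsc : ∑ i, (α.1 (some i) + α.1 none * σ i) * C (some i)
          = ∑ i : Option (Fin (N + 1)), α.1 i * C i := by
        rw [Fintype.sum_option, hC]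
        simp only [add_mul, Finset.sum_add_distrib, mul_assoc, ← Finset.mul_sum]
        ring
      exact congrArg₂ F hvec hsc
  · rintro _ ⟨β, rfl⟩
    obtain ⟨h0, h1⟩ := β.2
    refine ⟨⟨fun o => o.elim 0 β.1, fun o => by cases o <;> simp [h0], ?_⟩, ?_⟩
    · rw [Fintype.sum_option]; simpa using h1
    · have hvec : (∑ i : Option (Fin (N + 1)), (Option.elim i 0 β.1) • G i)
          = ∑ i, β.1 i • G (some i) := by
        rw [Fintype.sum_option]; simp
      have hsc : (∑ i : Option (Fin (N + 1)), (Option.elim i 0 β.1) * C i)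
          = ∑ i, β.1 i * C (some i) := by
        rw [Fintype.sum_option]; simp
      exact congrArg₂ F hvec hsc

/-- Lemma 5, `f = f̃`.
With index set `I = {0,…,N,⋆}` (encoded as `Option (Fin (N+1))`, `none` being `⋆`),
if `g_⋆` is the convex combination `Σ σ_i g_i` and the corresponding combination of the
interpolation values matches at `⋆`, then the max over the full simplex `Δ_I` equals the
max over the restricted simplex `Δ_{I∖{⋆}}`, for every `x`. -/
theorem full_simplex_sup_eq_restricted
    (N : ℕ) (L : ℝ) (hL : 0 < L)
    (g xv : Option (Fin (N + 1)) → E (N + 1)) (fv : Option (Fin (N + 1)) → ℝ)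
    (σ : Fin (N + 1) → ℝ) (hσ0 : ∀ i, 0 ≤ σ i) (hσ1 : ∑ i, σ i = 1)
    (hgs : g none = ∑ i, σ i • g (some i))
    (hfs : ∑ i, σ i * (fv (some i) + 1 / (2 * L) * ‖g (some i) - L • xv (some i)‖ ^ 2
            - L / 2 * ‖xv (some i)‖ ^ 2)
         = fv none + 1 / (2 * L) * ‖g none - L • xv none‖ ^ 2 - L / 2 * ‖xv none‖ ^ 2) :
    ∀ x : E (N + 1),
      (⨆ α : stdSimplex ℝ (Option (Fin (N + 1))),
        (L / 2 * ‖x‖ ^ 2 - L / 2 * ‖x - L⁻¹ • ∑ i, α.1 i • g i‖ ^ 2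
          + ∑ i, α.1 i * (fv i + 1 / (2 * L) * ‖g i - L • xv i‖ ^ 2
              - L / 2 * ‖xv i‖ ^ 2)))
      = ⨆ β : stdSimplex ℝ (Fin (N + 1)),
        (L / 2 * ‖x‖ ^ 2 - L / 2 * ‖x - L⁻¹ • ∑ i, β.1 i • g (some i)‖ ^ 2
          + ∑ i, β.1 i * (fv (some i) + 1 / (2 * L) * ‖g (some i) - L • xv (some i)‖ ^ 2
              - L / 2 * ‖xv (some i)‖ ^ 2)) := by
  intro x
  have key := range_eq_aux' N σ hσ0 hσ1 g
    (fun i => fv i + 1 / (2 * L) * ‖g i - L • xv i‖ ^ 2 - L / 2 * ‖xv i‖ ^ 2)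
    hgs hfs.symm
    (fun v r => L / 2 * ‖x‖ ^ 2 - L / 2 * ‖x - L⁻¹ • v‖ ^ 2 + r)
  rw [iSup, iSup]
  exact congrArg sSup key

end
end

section
/- Suppose g_0, …, g_N ∈ ℝ^{N+1} are mutually orthogonal nonzero vectors and x_⋆ = −Σ_{i=0}^N s_i g_i for some s_i ≥ 0. Let C = x_⋆ + cone{g_0,…,g_N} and h = δ_C. Then for any γ > 0 and any subset J ⊆ {0,…,N}: if x ∈ span{g_i : i ∈ J}, then prox_{γh}(x) ∈ span{g_i : i ∈ J}. -/
open Finset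

noncomputable section

/-- Lemma 9, prox of the indicator respects the `g`-coordinates.
If `g_0, …, g_N` are mutually orthogonal nonzero vectors, `x⋆ = -Σ s_i g_i` with
`s_i ≥ 0`, `C = x⋆ + cone{g_0,…,g_N}` and `h = δ_C`, then for every `γ > 0` and every
subset `J ⊆ {0,…,N}`, `x ∈ span{g_i : i ∈ J}` implies
`prox_{γh}(x) ∈ span{g_i : i ∈ J}`. -/
theorem prox_indicator_span
    (N : ℕ) (g : Fin (N + 1) → E (N + 1))
    (horth : ∀ i j, i ≠ j → (inner ℝ (g i) (g j) : ℝ) = 0)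
    (hnz : ∀ i, g i ≠ 0)
    (s : Fin (N + 1) → ℝ) (hs : ∀ i, 0 ≤ s i)
    (xs : E (N + 1)) (hxs : xs = -(∑ i, s i • g i)) :
    ∀ γ : ℝ, 0 < γ → ∀ J : Set (Fin (N + 1)), ∀ x : E (N + 1),
      x ∈ Submodule.span ℝ (g '' J) →
      ∀ p : E (N + 1), IsProx (indicatorE (coneSet g xs)) γ x p →
        p ∈ Submodule.span ℝ (g '' J) := by
  intro γ hγ J x hx p hp
  classical
  have hxsC : xs ∈ coneSet g xs := ⟨0, fun k => le_refl 0, by simp⟩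
  -- p ∈ C
  have hpC : p ∈ coneSet g xs := by
    by_contra hpc
    have h1 := hp xs
    simp only [indicatorE, if_pos hxsC, if_neg hpc, zero_add] at h1
    have h2 : (⊤ : EReal) + ((‖p - x‖ ^ 2 / (2 * γ) : ℝ) : EReal) = ⊤ := by
      exact EReal.top_add_of_ne_bot (EReal.coe_ne_bot _)
    rw [h2, top_le_iff] at h1
    exact (EReal.coe_ne_top _) h1
  obtain ⟨c, hc, hpe⟩ := hpC
  -- x is orthogonal to g i for i ∉ J
  have hxg : ∀ i, i ∉ J → (inner ℝ x (g i) : ℝ) = 0 := by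
    intro i hi
    have hsub : g '' J ⊆ ((ℝ ∙ g i)ᗮ : Submodule ℝ (E (N+1))) := by
      rintro y ⟨j, hj, rfl⟩
      rw [SetLike.mem_coe, Submodule.mem_orthogonal_singleton_iff_inner_right]
      exact horth i j (fun h => hi (h ▸ hj))
    have := Submodule.span_le.mpr hsub hx
    rwa [Submodule.mem_orthogonal_singleton_iff_inner_left] at this
  set d : Fin (N + 1) → ℝ := fun i => c i - s i with hd
  set u : E (N + 1) := ∑ i, (if i ∈ J then d i else 0) • g i with hu
  set v : E (N + 1) := ∑ i, (if i ∈ J then 0 else d i) • g i with hv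
  have hpuv : p = u + v := by
    rw [hpe, hxs, hu, hv, ← Finset.sum_add_distrib, neg_add_eq_sub,
      ← Finset.sum_sub_distrib]
    refine Finset.sum_congr rfl (fun i _ => ?_)
    by_cases hi : i ∈ J <;> simp [hi, hd, sub_smul]
  have huC : u ∈ coneSet g xs := by
    refine ⟨fun i => if i ∈ J then c i else s i, fun i => by by_cases hi : i ∈ J <;> simp [hi, hc i, hs i], ?_⟩
    rw [hxs, hu, neg_add_eq_sub, ← Finset.sum_sub_distrib]
    refine Finset.sum_congr rfl (fun i _ => ?_)
    by_cases hi : i ∈ J <;> simp [hi, hd, sub_smul]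
  -- orthogonality
  have huv : (inner ℝ u v : ℝ) = 0 := by
    rw [hu, hv, sum_inner]
    refine Finset.sum_eq_zero (fun j _ => ?_)
    rw [inner_sum]
    refine Finset.sum_eq_zero (fun i _ => ?_)
    rw [real_inner_smul_left, real_inner_smul_right]
    by_cases hij : j = i
    · subst hij; by_cases hj : j ∈ J <;> simp [hj]
    · rw [horth j i hij]; ring
  have hxv : (inner ℝ x v : ℝ) = 0 := by
    rw [hv, inner_sum]
    refine Finset.sum_eq_zero (fun i _ => ?_)
    rw [real_inner_smul_right]
    by_cases hi : i ∈ J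
    · simp [hi]
    · simp [hi, hxg i hi]
  have huxv : (inner ℝ (u - x) v : ℝ) = 0 := by
    rw [inner_sub_left, huv, hxv, sub_zero]
  have hnorm : ‖p - x‖ ^ 2 = ‖u - x‖ ^ 2 + ‖v‖ ^ 2 := by
    have : p - x = (u - x) + v := by rw [hpuv]; abel
    rw [this, norm_add_sq_real, huxv]
    ring
  -- prox inequality at u
  have hle : ‖p - x‖ ^ 2 ≤ ‖u - x‖ ^ 2 := by
    have h1 := hp u
    have hpC' : p ∈ coneSet g xs := ⟨c, hc, hpe⟩
    simp only [indicatorE, if_pos hpC', if_pos huC, zero_add] at h1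
    have h2 : ‖p - x‖ ^ 2 / (2 * γ) ≤ ‖u - x‖ ^ 2 / (2 * γ) := by
      exact_mod_cast h1
    have h2γ : (0:ℝ) < 2 * γ := by linarith
    exact (div_le_div_iff_of_pos_right h2γ).mp h2
  have hv0 : v = 0 := by
    have : ‖v‖ ^ 2 ≤ 0 := by rw [hnorm] at hle; linarith
    have : ‖v‖ = 0 := by nlinarith [norm_nonneg v, sq_nonneg ‖v‖]
    exact norm_eq_zero.mp this
  rw [hpuv, hv0, add_zero, hu]
  refine Submodule.sum_mem _ (fun i _ => ?_)
  by_cases hi : i ∈ J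
  · simp only [if_pos hi]
    exact Submodule.smul_mem _ _ (Submodule.subset_span ⟨i, hi, rfl⟩)
  · simp [hi]

end
end

section
/- Let N ≥ 1, let e_0,…,e_N be the standard unit vectors of ℝ^{N+1}, let a_j ∈ ℝ, x_j ∈ ℝ^{N+1}, h_j ∈ ℝ for j ∈ [0:N−1], and h_N, h_⋆ ∈ ℝ. Define H_j(x) = h_j + ⟨a_j e_j, x − x_j⟩ for j ∈ [0:N−1], H_N(x) = h_N + δ_{{x : ⟨e_N, x⟩ ≤ 0}}(x), H_⋆(x) = h_⋆, H_{[0:i]}(x) = max_{j∈[0:i]} H_j(x), and H_I(x) = max_{j ∈ {0,…,N,⋆}} H_j(x). Fix γ_i > 0, i ∈ [0:N−1], and x ∈ span{e_0,…,e_{N−1}}. If H_i( prox_{γ_i H_{[0:i]}}(x) ) ≥ H_j( prox_{γ_i H_{[0:i]}}(x) ) for all j with i < j ≤ N and for j = ⋆, then prox_{γ_i H_{[0:i]}}(x) = prox_{γ_i H_I}(x). -/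
open Finset

noncomputable section

/-- The affine piece `H_j(x) = h_j + ⟨a_j e_j, x - x_j⟩`. -/
def Haff (N : ℕ) (a : ℕ → ℝ) (xv : ℕ → E (N + 1)) (hv : ℕ → ℝ) (j : ℕ)
    (x : E (N + 1)) : ℝ :=
  hv j + inner ℝ (a j • unitVec (N + 1) j) (x - xv j)

open Classical in
/-- The piece `H_N(x) = h_N + δ_{{x : ⟨e_N, x⟩ ≤ 0}}(x)`. -/
def Hlast (N : ℕ) (hlastv : ℝ) (x : E (N + 1)) : EReal :=
  (hlastv : EReal) + if (inner ℝ (unitVec (N + 1) N) x : ℝ) ≤ 0 then (0 : EReal) else ⊤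

/-- `H_{[0:i]}(x) = max_{j ∈ [0:i]} H_j(x)` (as an extended real). -/
def Hmax (N : ℕ) (a : ℕ → ℝ) (xv : ℕ → E (N + 1)) (hv : ℕ → ℝ) (i : ℕ)
    (x : E (N + 1)) : EReal :=
  ⨆ j : Fin (i + 1), ((Haff N a xv hv j x : ℝ) : EReal)

/-- `H_I(x) = max_{j ∈ {0,…,N,⋆}} H_j(x)` where the pieces `H_0,…,H_{N-1}` are affine,
`H_N` is affine plus a half-space indicator, and `H_⋆` is constant. -/
def HI (N : ℕ) (a : ℕ → ℝ) (xv : ℕ → E (N + 1)) (hv : ℕ → ℝ) (hlastv hstarv : ℝ)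
    (x : E (N + 1)) : EReal :=
  (⨆ j : Fin N, ((Haff N a xv hv j x : ℝ) : EReal)) ⊔ Hlast N hlastv x ⊔ (hstarv : EReal)

/-- Lemma 7.
Fix `i < N`, `γ i > 0`, and `x ∈ span{e_0,…,e_{N-1}}`.  If the prox point `p` of
`H_{[0:i]}` at `x` satisfies `H_i(p) ≥ H_j(p)` for all `i < j ≤ N` and for `j = ⋆`,
then `p` is also the prox point of `H_I` at `x`, i.e.
`prox_{γ_i H_{[0:i]}}(x) = prox_{γ_i H_I}(x)`. -/
theorem prox_restricted_eq_prox_full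
    (N : ℕ) (hN : 1 ≤ N) (a : ℕ → ℝ) (xv : ℕ → E (N + 1)) (hv : ℕ → ℝ)
    (hlastv hstarv : ℝ) (γ : ℕ → ℝ) (i : ℕ) (hi : i < N) (hγi : 0 < γ i)
    (x : E (N + 1)) (hx : x ∈ coordSpan (N + 1) N)
    (p : E (N + 1))
    (hp : IsProx (Hmax N a xv hv i) (γ i) x p)
    (hcomp : ∀ j, i < j → j < N → Haff N a xv hv j p ≤ Haff N a xv hv i p)
    (hcompN : Hlast N hlastv p ≤ ((Haff N a xv hv i p : ℝ) : EReal))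
    (hcompS : hstarv ≤ Haff N a xv hv i p) :
    IsProx (HI N a xv hv hlastv hstarv) (γ i) x p := by
  intro w
  have hip : ((Haff N a xv hv i p : ℝ) : EReal) ≤ Hmax N a xv hv i p :=
    le_iSup (fun j : Fin (i + 1) => ((Haff N a xv hv j p : ℝ) : EReal))
      ⟨i, Nat.lt_succ_self i⟩
  have key1 : HI N a xv hv hlastv hstarv p ≤ Hmax N a xv hv i p := by
    refine sup_le (sup_le ?_ (hcompN.trans hip))
      ((EReal.coe_le_coe_iff.2 hcompS).trans hip)
    refine iSup_le fun j => ?_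
    rcases lt_or_ge (j : ℕ) (i + 1) with h | h
    · exact le_iSup_of_le (⟨j, h⟩ : Fin (i + 1)) le_rfl
    · exact (EReal.coe_le_coe_iff.2 (hcomp j (Nat.lt_of_succ_le h) j.2)).trans hip
  have key2 : Hmax N a xv hv i w ≤ HI N a xv hv hlastv hstarv w := by
    refine le_sup_of_le_left (le_sup_of_le_left (iSup_le fun j => ?_))
    exact le_iSup_of_le (Fin.castLE (by omega) j) le_rfl
  calc HI N a xv hv hlastv hstarv p + ((‖p - x‖ ^ 2 / (2 * γ i) : ℝ) : EReal)
      ≤ Hmax N a xv hv i p + ((‖p - x‖ ^ 2 / (2 * γ i) : ℝ) : EReal) :=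
        add_le_add_left key1 _
    _ ≤ Hmax N a xv hv i w + ((‖w - x‖ ^ 2 / (2 * γ i) : ℝ) : EReal) := hp w
    _ ≤ HI N a xv hv hlastv hstarv w + ((‖w - x‖ ^ 2 / (2 * γ i) : ℝ) : EReal) :=
        add_le_add_left key2 _

end
end

section
/- Let N ≥ 1, e_0,…,e_N the standard unit vectors of ℝ^{N+1}, a_j ∈ ℝ, x_j ∈ ℝ^{N+1}, h_j ∈ ℝ for j ∈ [0:N−1], h_N, h_⋆ ∈ ℝ, and γ_i > 0 for i ∈ [0:N−1]. Define H_j(x) = h_j + ⟨a_j e_j, x − x_j⟩ for j ∈ [0:N−1], H_N(x) = h_N + δ_{{x : ⟨e_N,x⟩ ≤ 0}}(x), H_⋆(x) = h_⋆, and H_I(x) = max_{j∈{0,…,N,⋆}} H_j(x). Suppose x_i ∈ span{e_0,…,e_{i−1}} for i ∈ [0:N−1] (so x_0 = 0), and h_i − γ_i a_i² ≥ h_j for all i ∈ [0:N−1] and all j ∈ {i+1,…,N,⋆}. Then for each i ∈ [0:N−1]: if x ∈ span{e_0,…,e_{i−1}}, then prox_{γ_i H_I}(x) ∈ span{e_0,…,e_i}.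 (Here span{} = {0}.) -/
open Finset

noncomputable section

/- ### Auxiliary lemmas -/

lemma coord_eq_zero_of_mem {m k : ℕ} {y : E m} (hy : y ∈ coordSpan m k)
    (j : Fin m) (hj : k ≤ (j:ℕ)) : y j = 0 := by
  induction hy using Submodule.span_induction with
  | mem v hv =>
      obtain ⟨l, hl, rfl⟩ := hv
      simp only [Set.mem_setOf_eq] at hl
      unfold unitVec
      rcases Nat.lt_or_ge l m with hlm | hlm
      · rw [dif_pos hlm, EuclideanSpace.single_apply]
        have hne : (⟨l, hlm⟩ : Fin m) ≠ j := by
          intro h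
          have : l = (j:ℕ) := congrArg Fin.val h
          omega
        simp [Ne.symm hne]
      · rw [dif_neg (by omega)]; rfl
  | zero => rfl
  | add v w _ _ hv hw => show v j + w j = 0; rw [hv, hw, add_zero]
  | smul c v _ hv => show c * v j = 0; rw [hv, mul_zero]

lemma mem_coordSpan_of {m k : ℕ} {y : E m}
    (h : ∀ j : Fin m, k ≤ (j:ℕ) → y j = 0) : y ∈ coordSpan m k := by
  have hy : (∑ j : Fin m, y j • unitVec m (j:ℕ)) = y := by
    ext l
    symm
    have hterm : ∀ j : Fin m, (y j • unitVec m (j:ℕ)) l = if l = j then y j else 0 := by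
      intro j
      unfold unitVec
      rw [dif_pos j.isLt]
      show y j * (EuclideanSpace.single (⟨(j:ℕ), j.isLt⟩ : Fin m) (1:ℝ)) l = _
      rw [EuclideanSpace.single_apply]
      simp [Fin.eta, eq_comm]
    rw [WithLp.ofLp_sum, Finset.sum_apply]
    simp only [hterm]
    simp
  rw [← hy]
  apply Submodule.sum_mem
  intro j _
  by_cases hj : (j:ℕ) < k
  · exact Submodule.smul_mem _ _ (Submodule.subset_span ⟨j, hj, rfl⟩)
  · rw [h j (by omega), zero_smul]; exact Submodule.zero_mem _

lemma haff_eval (N : ℕ) (a : ℕ → ℝ) (xv : ℕ → E (N+1)) (hv : ℕ → ℝ) (j : ℕ)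
    (hj : j < N + 1) (y : E (N+1)) :
    Haff N a xv hv j y = hv j + a j * (y ⟨j, hj⟩ - xv j ⟨j, hj⟩) := by
  unfold Haff unitVec
  rw [dif_pos hj, real_inner_smul_left, EuclideanSpace.inner_single_left]
  simp [PiLp.sub_apply]

lemma hlast_eval (N : ℕ) (hlastv : ℝ) (y : E (N+1)) (hy : y ⟨N, by omega⟩ ≤ 0) :
    Hlast N hlastv y = (hlastv : EReal) := by
  unfold Hlast unitVec
  rw [dif_pos (by omega : N < N+1), EuclideanSpace.inner_single_left]
  simp [hy]

lemma norm_sq_eq {m : ℕ} (y : E m) : ‖y‖^2 = ∑ j, (y j)^2 := by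
  rw [EuclideanSpace.norm_eq, Real.sq_sqrt (by positivity)]
  simp [Real.norm_eq_abs, sq_abs]

lemma HI_le {N : ℕ} {a : ℕ → ℝ} {xv : ℕ → E (N+1)} {hv : ℕ → ℝ} {hlastv hstarv : ℝ}
    {y : E (N+1)} {r : EReal}
    (h1 : ∀ j : Fin N, ((Haff N a xv hv j y : ℝ) : EReal) ≤ r)
    (h2 : Hlast N hlastv y ≤ r) (h3 : (hstarv : EReal) ≤ r) :
    HI N a xv hv hlastv hstarv y ≤ r :=
  sup_le (sup_le (iSup_le h1) h2) h3

lemma le_HI {N : ℕ} {a : ℕ → ℝ} {xv : ℕ → E (N+1)} {hv : ℕ → ℝ} {hlastv hstarv : ℝ}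
    {y : E (N+1)} (j : Fin N) :
    ((Haff N a xv hv j y : ℝ) : EReal) ≤ HI N a xv hv hlastv hstarv y :=
  le_trans (le_iSup (fun j : Fin N => ((Haff N a xv hv j y : ℝ) : EReal)) j)
    (le_trans le_sup_left le_sup_left)

lemma hstar_le_HI {N : ℕ} {a : ℕ → ℝ} {xv : ℕ → E (N+1)} {hv : ℕ → ℝ} {hlastv hstarv : ℝ}
    {y : E (N+1)} : (hstarv : EReal) ≤ HI N a xv hv hlastv hstarv y :=
  le_sup_right

/-- Lemma 8, proximal zero-chain property of `H_I`. -/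
theorem prox_HI_zero_chain
    (N : ℕ) (hN : 1 ≤ N) (a : ℕ → ℝ) (xv : ℕ → E (N + 1)) (hv : ℕ → ℝ)
    (hlastv hstarv : ℝ) (γ : ℕ → ℝ) (hγ : ∀ i, i < N → 0 < γ i)
    (hxv : ∀ i, i < N → xv i ∈ coordSpan (N + 1) i)
    (hineq : ∀ i, i < N →
      (∀ j, i < j → j < N → hv j ≤ hv i - γ i * (a i) ^ 2) ∧
      hlastv ≤ hv i - γ i * (a i) ^ 2 ∧
      hstarv ≤ hv i - γ i * (a i) ^ 2) :
    ∀ i, i < N → ∀ x : E (N + 1), x ∈ coordSpan (N + 1) i →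
      ∀ p : E (N + 1), IsProx (HI N a xv hv hlastv hstarv) (γ i) x p →
        p ∈ coordSpan (N + 1) (i + 1) := by
  intro i hiN x hx p hp
  haveI : Nonempty (Fin N) := ⟨⟨0, hN⟩⟩
  have hγi : 0 < γ i := hγ i hiN
  set c : ℝ := hv i - γ i * (a i) ^ 2 with hc
  have hx0 : ∀ j : Fin (N+1), i ≤ (j:ℕ) → x j = 0 := coord_eq_zero_of_mem hx
  set q : E (N+1) := WithLp.toLp 2 (fun j : Fin (N+1) => if (j:ℕ) ≤ i then p j else 0) with hqdef
  set w : E (N+1) :=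
    WithLp.toLp 2 (fun j : Fin (N+1) => if (j:ℕ) < i then p j else if (j:ℕ) = i then -(γ i * a i) else 0) with hwdef
  have hqj : ∀ j : Fin (N+1), q j = if (j:ℕ) ≤ i then p j else 0 := fun j => rfl
  have hwj : ∀ j : Fin (N+1),
      w j = if (j:ℕ) < i then p j else if (j:ℕ) = i then -(γ i * a i) else 0 := fun j => rfl
  set I : Fin (N+1) := ⟨i, by omega⟩ with hIdef
  set S : ℝ := ∑ j : Fin (N+1), (if i < (j:ℕ) then (p j)^2 else 0) with hSdef
  have hS0 : 0 ≤ S := Finset.sum_nonneg (fun j _ => by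
    by_cases h : i < (j:ℕ) <;> simp [h] <;> positivity)
  -- generic evaluation of affine pieces
  have hHaff : ∀ (jn : Fin N) (y : E (N+1)),
      Haff N a xv hv (jn:ℕ) y = hv jn + a jn * y ⟨(jn:ℕ), by omega⟩ := by
    intro jn y
    rw [haff_eval N a xv hv jn (by omega) y,
      coord_eq_zero_of_mem (hxv jn jn.isLt) ⟨(jn:ℕ), by omega⟩ (le_refl _)]
    ring
  -- norm identities
  have hqnorm : ‖q - x‖^2 = ‖p - x‖^2 - S := by
    rw [norm_sq_eq, norm_sq_eq, hSdef, ← Finset.sum_sub_distrib]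
    apply Finset.sum_congr rfl
    intro j _
    simp only [PiLp.sub_apply, hqj]
    by_cases hj : (j:ℕ) ≤ i
    · rw [if_pos hj, if_neg (by omega)]; ring
    · rw [if_neg hj, if_pos (by omega), hx0 j (by omega)]; ring
  have hwnorm : ‖w - x‖^2 = ‖p - x‖^2 - S - ((p I)^2 - (γ i * a i)^2) := by
    rw [norm_sq_eq, norm_sq_eq]
    have hterm : ∀ j : Fin (N+1), ((w - x) j)^2 = ((p - x) j)^2
        - (if i < (j:ℕ) then (p j)^2 else 0)
        - (if j = I then (p I)^2 - (γ i * a i)^2 else 0) := by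
      intro j
      simp only [PiLp.sub_apply, hwj]
      rcases lt_trichotomy (j:ℕ) i with hj | hj | hj
      · have hne : j ≠ I := by intro h; rw [h] at hj; exact absurd hj (lt_irrefl i)
        rw [if_pos hj, if_neg (by omega), if_neg hne]; ring
      · have heq : j = I := Fin.ext hj
        rw [if_neg (by omega), if_pos hj, if_neg (by omega), if_pos heq,
          hx0 j (by omega), heq]
        ring
      · have hne : j ≠ I := by intro h; rw [h] at hj; exact absurd hj (lt_irrefl i)
        rw [if_neg (by omega), if_neg (by omega), if_pos hj, if_neg hne,
          hx0 j (by omega)]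
        ring
    rw [Finset.sum_congr rfl (fun j _ => hterm j)]
    rw [Finset.sum_sub_distrib, Finset.sum_sub_distrib, ← hSdef,
      Finset.sum_ite_eq' Finset.univ I (fun _ => (p I)^2 - (γ i * a i)^2)]
    simp
  -- coordinates of q and w beyond i vanish; coordinate N in particular
  have hqN : q ⟨N, by omega⟩ = 0 := by rw [hqj]; exact if_neg (by simp; omega)
  have hwN : w ⟨N, by omega⟩ = 0 := by
    rw [hwj]; rw [if_neg (by simp; omega), if_neg (by simp; omega)]
  have hlast_q : Hlast N hlastv q = (hlastv : EReal) := hlast_eval N hlastv q (le_of_eq hqN)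
  have hlast_w : Hlast N hlastv w = (hlastv : EReal) := hlast_eval N hlastv w (le_of_eq hwN)
  -- finiteness of HI p
  have hbot : HI N a xv hv hlastv hstarv p ≠ ⊥ := by
    intro h
    have h2 : (hstarv : EReal) ≤ ⊥ := h ▸ hstar_le_HI
    exact EReal.coe_ne_bot hstarv (le_bot_iff.mp h2)
  have htop : HI N a xv hv hlastv hstarv p ≠ ⊤ := by
    intro h
    set Mq : ℝ := (Finset.univ.sup' Finset.univ_nonempty
      (fun jn : Fin N => Haff N a xv hv (jn:ℕ) q)) ⊔ hlastv ⊔ hstarv with hMq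
    have hHIq : HI N a xv hv hlastv hstarv q ≤ (Mq : EReal) := by
      apply HI_le
      · intro jn
        exact EReal.coe_le_coe_iff.mpr
          (le_trans (Finset.le_sup' (fun jn : Fin N => Haff N a xv hv (jn:ℕ) q) (Finset.mem_univ jn))
            (le_trans le_sup_left le_sup_left))
      · rw [hlast_q]
        exact EReal.coe_le_coe_iff.mpr (le_trans le_sup_right le_sup_left)
      · exact EReal.coe_le_coe_iff.mpr le_sup_right
    have h1 := hp q
    rw [h, EReal.top_add_coe] at h1
    have h2 : (⊤ : EReal) ≤ ((Mq + ‖q - x‖^2/(2*γ i) : ℝ) : EReal) := by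
      refine le_trans h1 ?_
      rw [EReal.coe_add]
      exact add_le_add_left hHIq _
    exact EReal.coe_ne_top _ (top_le_iff.mp h2)
  set A : ℝ := (HI N a xv hv hlastv hstarv p).toReal with hAdef
  have hA : ((A : ℝ) : EReal) = HI N a xv hv hlastv hstarv p := EReal.coe_toReal htop hbot
  -- the i-th piece lower bound
  have hL : hv i + a i * p I ≤ A := by
    have h1 : ((Haff N a xv hv ((⟨i, hiN⟩ : Fin N):ℕ) p : ℝ) : EReal)
        ≤ HI N a xv hv hlastv hstarv p := le_HI ⟨i, hiN⟩
    rw [← hA] at h1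
    have h2 := EReal.coe_le_coe_iff.mp h1
    rwa [hHaff ⟨i, hiN⟩ p] at h2
  set D : ℝ := max A c with hDdef
  -- pieces at p are ≤ A
  have hpieceA : ∀ jn : Fin N, Haff N a xv hv (jn:ℕ) p ≤ A := by
    intro jn
    have h1 := le_HI (N := N) (a := a) (xv := xv) (hv := hv)
      (hlastv := hlastv) (hstarv := hstarv) (y := p) jn
    rw [← hA] at h1
    exact EReal.coe_le_coe_iff.mp h1
  -- bound HI q ≤ D
  have hHIqD : HI N a xv hv hlastv hstarv q ≤ (D : EReal) := by
    apply HI_le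
    · intro jn
      apply EReal.coe_le_coe_iff.mpr
      by_cases hj : (jn:ℕ) ≤ i
      · have : Haff N a xv hv (jn:ℕ) q = Haff N a xv hv (jn:ℕ) p := by
          rw [hHaff, hHaff, hqj, if_pos hj]
        rw [this]
        exact le_trans (hpieceA jn) (le_max_left _ _)
      · rw [hHaff, hqj, if_neg hj]
        have : hv jn ≤ c := ((hineq i hiN).1 jn (by omega) jn.isLt)
        calc hv (jn:ℕ) + a jn * 0 = hv jn := by ring
          _ ≤ c := this
          _ ≤ D := le_max_right _ _
    · rw [hlast_q]
      exact EReal.coe_le_coe_iff.mpr (le_trans (hineq i hiN).2.1 (le_max_right _ _))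
    · exact EReal.coe_le_coe_iff.mpr (le_trans (hineq i hiN).2.2 (le_max_right _ _))
  -- bound HI w ≤ D
  have hHIwD : HI N a xv hv hlastv hstarv w ≤ (D : EReal) := by
    apply HI_le
    · intro jn
      apply EReal.coe_le_coe_iff.mpr
      rcases lt_trichotomy (jn:ℕ) i with hj | hj | hj
      · have : Haff N a xv hv (jn:ℕ) w = Haff N a xv hv (jn:ℕ) p := by
          rw [hHaff, hHaff, hwj, if_pos hj]
        rw [this]
        exact le_trans (hpieceA jn) (le_max_left _ _)
      · rw [hHaff, hwj, if_neg (by simp only [Fin.val_mk]; omega), if_pos hj]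
        have : hv (jn:ℕ) + a (jn:ℕ) * -(γ i * a i) ≤ c := by
          rw [hj, hc]; ring_nf; rfl
        exact le_trans this (le_max_right _ _)
      · rw [hHaff, hwj, if_neg (by simp only [Fin.val_mk]; omega),
          if_neg (by simp only [Fin.val_mk]; omega)]
        have : hv jn ≤ c := ((hineq i hiN).1 jn (by omega) jn.isLt)
        calc hv (jn:ℕ) + a jn * 0 = hv jn := by ring
          _ ≤ c := this
          _ ≤ D := le_max_right _ _
    · rw [hlast_w]
      exact EReal.coe_le_coe_iff.mpr (le_trans (hineq i hiN).2.1 (le_max_right _ _))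
    · exact EReal.coe_le_coe_iff.mpr (le_trans (hineq i hiN).2.2 (le_max_right _ _))
  -- master inequalities
  set B : ℝ := ‖p - x‖^2/(2*γ i) with hB
  have master1 : A + B ≤ D + (B - S/(2*γ i)) := by
    have h1 := hp q
    rw [← hA] at h1
    have h2 : HI N a xv hv hlastv hstarv q + ((‖q - x‖^2/(2*γ i) : ℝ) : EReal)
        ≤ ((D + (B - S/(2*γ i)) : ℝ) : EReal) := by
      have he : ‖q - x‖^2/(2*γ i) = B - S/(2*γ i) := by rw [hqnorm, sub_div, hB]
      rw [he, EReal.coe_add]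
      exact add_le_add_left hHIqD _
    have h3 := le_trans h1 h2
    rw [← EReal.coe_add] at h3
    exact EReal.coe_le_coe_iff.mp h3
  have master2 : A + B ≤ D + (B - S/(2*γ i) - ((p I)^2 - (γ i * a i)^2)/(2*γ i)) := by
    have h1 := hp w
    rw [← hA] at h1
    have h2 : HI N a xv hv hlastv hstarv w + ((‖w - x‖^2/(2*γ i) : ℝ) : EReal)
        ≤ ((D + (B - S/(2*γ i) - ((p I)^2 - (γ i * a i)^2)/(2*γ i)) : ℝ) : EReal) := by
      have he : ‖w - x‖^2/(2*γ i) = B - S/(2*γ i) - ((p I)^2 - (γ i * a i)^2)/(2*γ i) := by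
        rw [hwnorm, sub_div, sub_div, hB]
      rw [he, EReal.coe_add]
      exact add_le_add_left hHIwD _
    have h3 := le_trans h1 h2
    rw [← EReal.coe_add] at h3
    exact EReal.coe_le_coe_iff.mp h3
  -- conclude S ≤ 0
  have hSle : S ≤ 0 := by
    rcases le_total c A with hca | hac
    · have hD : D = A := max_eq_left hca
      rw [hD] at master1
      have hdiv : S/(2*γ i) ≤ 0 := by linarith
      by_contra hcon
      push_neg at hcon
      have : 0 < S/(2*γ i) := div_pos hcon (by linarith)
      linarith
    · have hD : D = c := max_eq_right hac
      rw [hD] at master2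
      have hdiv : S/(2*γ i) + ((p I)^2 - (γ i * a i)^2)/(2*γ i) ≤ c - A := by linarith
      rw [← add_div] at hdiv
      have hmul : S + ((p I)^2 - (γ i * a i)^2) ≤ (c - A)*(2*γ i) :=
        (div_le_iff₀ (by linarith)).mp hdiv
      have hcA : c - A ≤ -(γ i * (a i)^2) - a i * p I := by rw [hc]; linarith
      have hprod : (c - A)*(2*γ i) ≤ (-(γ i * (a i)^2) - a i * p I)*(2*γ i) :=
        mul_le_mul_of_nonneg_right hcA (by linarith)
      nlinarith [sq_nonneg (p I + γ i * a i)]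
  have hSz : S = 0 := le_antisymm hSle hS0
  have hnn : ∀ j : Fin (N+1), 0 ≤ (if i < (j:ℕ) then (p j)^2 else 0) := by
    intro j; split
    · exact sq_nonneg _
    · exact le_refl 0
  have hSz' : ∑ j : Fin (N+1), (if i < (j:ℕ) then (p j)^2 else 0) = 0 := by
    rw [← hSdef]; exact hSz
  have hterm0 : ∀ j : Fin (N+1), (if i < (j:ℕ) then (p j)^2 else 0) = 0 := by
    have := (Finset.sum_eq_zero_iff_of_nonneg (fun j _ => hnn j)).mp hSz'
    exact fun j => this j (Finset.mem_univ j)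
  apply mem_coordSpan_of
  intro j hj
  have h1 := hterm0 j
  rw [if_pos (by omega)] at h1
  exact pow_eq_zero_iff (n := 2) (by norm_num) |>.mp h1

end
end

section
/- Let N ≥ 1, γ_i > 0 for i ∈ [0:N−1], and let a_i > 0, b_i > 0 for i ∈ [0:N−1] and ζ > 0 satisfy a_i b_i − a_{i+1} b_{i+1} − γ_i a_i² ≥ 0 for i ∈ [0:N−2] and a_{N−1} b_{N−1} − γ_{N−1} a_{N−1}² ≥ ζ. Then the choice x_i = −Σ_{k=0}^{i−1} b_k e_k for i ∈ [0:N−1], h_i = a_i b_i for i ∈ [0:N−1], h_N = ζ, h_⋆ = 0 satisfies: x_i ∈ span{e_0,…,e_{i−1}} for i ∈ [0:N−1], and h_i − γ_i a_i² ≥ h_j for all i ∈ [0:N−1] and all j ∈ {i+1,…,N,⋆}. -/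
open Finset

noncomputable section

/-- Lemma 9 of the proximal lower bound.
If `a_i b_i - a_{i+1} b_{i+1} - γ_i a_i² ≥ 0` for `i ∈ [0:N-2]` and
`a_{N-1} b_{N-1} - γ_{N-1} a_{N-1}² ≥ ζ`, then the choice
`x_i = -Σ_{k<i} b_k e_k`, `h_i = a_i b_i` (`i ∈ [0:N-1]`), `h_N = ζ`, `h_⋆ = 0`
satisfies `x_i ∈ span{e_0,…,e_{i-1}}` and
`h_i - γ_i a_i² ≥ h_j` for all `i ∈ [0:N-1]` and `j ∈ {i+1,…,N,⋆}`. -/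
theorem proximal_construction_conditions
    (N : ℕ) (hN : 1 ≤ N) (γ a b : ℕ → ℝ) (ζ : ℝ)
    (hγ : ∀ i, i < N → 0 < γ i)
    (ha : ∀ i, i < N → 0 < a i)
    (hb : ∀ i, i < N → 0 < b i)
    (hζ : 0 < ζ)
    (h1 : ∀ i, i + 1 < N → 0 ≤ a i * b i - a (i + 1) * b (i + 1) - γ i * (a i) ^ 2)
    (h2 : ζ ≤ a (N - 1) * b (N - 1) - γ (N - 1) * (a (N - 1)) ^ 2) :
    (∀ i, i < N →
      (-(∑ k ∈ Finset.range i, b k • unitVec (N + 1) k)) ∈ coordSpan (N + 1) i) ∧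
    (∀ i, i < N →
      (∀ j, i < j → j < N → a j * b j ≤ a i * b i - γ i * (a i) ^ 2) ∧
      ζ ≤ a i * b i - γ i * (a i) ^ 2 ∧
      (0 : ℝ) ≤ a i * b i - γ i * (a i) ^ 2) := by
  have step : ∀ i, i + 1 < N → a (i+1) * b (i+1) ≤ a i * b i - γ i * (a i) ^ 2 := by
    intro i hi; have := h1 i hi; linarith
  have γa : ∀ i, i < N → 0 ≤ γ i * (a i) ^ 2 := fun i hi =>
    mul_nonneg (hγ i hi).le (sq_nonneg _)
  -- decreasing
  have dec : ∀ j, j < N → ∀ i, i ≤ j → a j * b j ≤ a i * b i := by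
    intro j
    induction j with
    | zero => intro _ i hi; interval_cases i; rfl
    | succ n ih =>
      intro hj i hi
      rcases Nat.lt_or_ge i (n+1) with h | h
      · have h' : i ≤ n := Nat.lt_succ_iff.mp h
        have := step n hj
        have := γa n (Nat.lt_of_succ_lt hj)
        have := ih (Nat.lt_of_succ_lt hj) i h'
        linarith
      · have : i = n + 1 := le_antisymm hi h
        subst this; rfl
  have key1 : ∀ i, i < N → ∀ j, i < j → j < N →
      a j * b j ≤ a i * b i - γ i * (a i) ^ 2 := by
    intro i hi j hij hj
    have h1' : i + 1 < N := lt_of_le_of_lt hij hj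
    calc a j * b j ≤ a (i+1) * b (i+1) := dec j hj (i+1) hij
    _ ≤ a i * b i - γ i * (a i) ^ 2 := step i h1'
  have key2 : ∀ i, i < N → ζ ≤ a i * b i - γ i * (a i) ^ 2 := by
    intro i hi
    rcases Nat.lt_or_ge (i+1) N with h | h
    · have hN1 : N - 1 < N := Nat.sub_lt (by omega) one_pos
      have hle : a (N-1) * b (N-1) - γ (N-1) * (a (N-1)) ^ 2 ≤ a (N-1) * b (N-1) := by
        have := γa (N-1) hN1; linarith
      have hiN : i < N - 1 := by omega
      have := key1 i hi (N-1) hiN hN1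
      linarith
    · have : i = N - 1 := by omega
      subst this; exact h2
  refine ⟨?_, fun i hi => ⟨key1 i hi, key2 i hi, le_trans hζ.le (key2 i hi)⟩⟩
  intro i hi
  refine Submodule.neg_mem _ (Submodule.sum_mem _ fun k hk => Submodule.smul_mem _ _ ?_)
  exact Submodule.subset_span ⟨k, Finset.mem_range.mp hk, rfl⟩

end
end
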